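/- arXiv:1412.2949 — 14 statements merged into one kernel-verified Lean document; each statement's English description precedes it below -/
import Mathlib

section
/- If u = (u_n) is a strictly increasing sequence of positive integers such that the ratios q_n = u_n/u_{n-1} tend to infinity, then t_u(T) = {x ∈ T : u_n·x → 0 in T} is uncountable. -/
open Filter Topology

namespace Eggleston

/-- numerators of the nested intervals -/
noncomputable def M (v : ℕ → ℕ) (σ : ℕ → Bool) : ℕ → ℤ := fun n =>
  Nat.rec 0 (fun n Mn => ⌈(Mn : ℝ) * (v (n + 1) : ℝ) / (v n : ℝ)⌉ + (if σ n then 1 else 0)) n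

@[simp] lemma M_zero (v : ℕ → ℕ) (σ : ℕ → Bool) : M v σ 0 = 0 := rfl

lemma M_succ (v : ℕ → ℕ) (σ : ℕ → Bool) (n : ℕ) :
    M v σ (n + 1) = ⌈(M v σ n : ℝ) * (v (n + 1) : ℝ) / (v n : ℝ)⌉ + (if σ n then 1 else 0) := rfl

/-- interval lengths (scaled) -/
noncomputable def δ (v : ℕ → ℕ) (n : ℕ) : ℝ := 3 * (v n : ℝ) / (v (n + 1) : ℝ) + 1 / (n + 3)

noncomputable def L (v : ℕ → ℕ) (σ : ℕ → Bool) (n : ℕ) : ℝ := (M v σ n : ℝ) / (v n : ℝ)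

noncomputable def R (v : ℕ → ℕ) (σ : ℕ → Bool) (n : ℕ) : ℝ := L v σ n + δ v n / (v n : ℝ)

noncomputable def x (v : ℕ → ℕ) (σ : ℕ → Bool) : ℝ := ⨆ n, L v σ n

variable {v : ℕ → ℕ} {σ : ℕ → Bool}

lemma vpos (hv1 : ∀ n, 1 ≤ v n) (n : ℕ) : (0 : ℝ) < v n := by exact_mod_cast hv1 n

lemma δpos (hv1 : ∀ n, 1 ≤ v n) (n : ℕ) : 0 < δ v n := by
  have := vpos hv1 n; have := vpos hv1 (n + 1)
  have : (0:ℝ) < (n:ℝ) + 3 := by positivity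
  unfold δ; positivity

lemma ratio_le (hv1 : ∀ n, 1 ≤ v n) (h12 : ∀ n, (12 : ℝ) * v n ≤ v (n + 1)) (n : ℕ) :
    (v n : ℝ) / v (n + 1) ≤ 1 / 12 := by
  have h1 := vpos hv1 (n + 1)
  rw [div_le_div_iff₀ h1 (by norm_num)]
  linarith [h12 n]

lemma δlt1 (hv1 : ∀ n, 1 ≤ v n) (h12 : ∀ n, (12 : ℝ) * v n ≤ v (n + 1)) (n : ℕ) :
    δ v n < 1 := by
  have h1 := ratio_le hv1 h12 n
  have h2 : 1 / ((n : ℝ) + 3) ≤ 1 / 3 := by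
    apply one_div_le_one_div_of_le
    · norm_num
    · linarith [Nat.cast_nonneg (α := ℝ) n]
  unfold δ
  have h3 : 3 * (v n : ℝ) / (v (n+1) : ℝ) = 3 * ((v n : ℝ) / v (n+1)) := by ring
  rw [h3]
  linarith

lemma δ_mul_ge (hv1 : ∀ n, 1 ≤ v n) (n : ℕ) : 3 * (v n : ℝ) ≤ δ v n * v (n + 1) := by
  have h1 := vpos hv1 (n + 1)
  have h3 : (0:ℝ) < (n:ℝ) + 3 := by positivity
  unfold δ
  rw [add_mul, div_mul_cancel₀ _ (ne_of_gt h1)]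
  have : 0 ≤ 1 / ((n:ℝ) + 3) * v (n+1) := by positivity
  linarith

/-- Key upper bound on successor numerator. -/
lemma M_succ_le (hv1 : ∀ n, 1 ≤ v n) (n : ℕ) :
    (M v σ (n + 1) : ℝ) * v n ≤ (M v σ n : ℝ) * v (n + 1) + 2 * v n := by
  have h0 := vpos hv1 n
  have hceil : (⌈(M v σ n : ℝ) * (v (n + 1) : ℝ) / (v n : ℝ)⌉ : ℝ)
      < (M v σ n : ℝ) * (v (n + 1) : ℝ) / (v n : ℝ) + 1 := Int.ceil_lt_add_one _
  have key : (M v σ (n + 1) : ℝ) ≤ (M v σ n : ℝ) * (v (n + 1) : ℝ) / (v n : ℝ) + 2 := by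
    rw [M_succ]
    push_cast
    split <;> push_cast <;> linarith
  calc (M v σ (n + 1) : ℝ) * v n
      ≤ ((M v σ n : ℝ) * (v (n + 1) : ℝ) / (v n : ℝ) + 2) * v n :=
        mul_le_mul_of_nonneg_right key h0.le
    _ = (M v σ n : ℝ) * v (n + 1) + 2 * v n := by field_simp

lemma M_succ_ge (hv1 : ∀ n, 1 ≤ v n) (n : ℕ) :
    (M v σ n : ℝ) * v (n + 1) ≤ (M v σ (n + 1) : ℝ) * v n := by
  have h0 := vpos hv1 n
  have hceil : (M v σ n : ℝ) * (v (n + 1) : ℝ) / (v n : ℝ)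
      ≤ (⌈(M v σ n : ℝ) * (v (n + 1) : ℝ) / (v n : ℝ)⌉ : ℝ) := Int.le_ceil _
  have h2 : (M v σ n : ℝ) * (v (n + 1) : ℝ) / (v n : ℝ) ≤ (M v σ (n + 1) : ℝ) := by
    rw [M_succ]
    push_cast
    split <;> push_cast <;> linarith
  calc (M v σ n : ℝ) * v (n + 1) = (M v σ n : ℝ) * (v (n + 1) : ℝ) / (v n : ℝ) * v n := by
        field_simp
    _ ≤ (M v σ (n + 1) : ℝ) * v n := mul_le_mul_of_nonneg_right h2 h0.le

lemma L_mono (hv1 : ∀ n, 1 ≤ v n) : Monotone (L v σ) := by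
  apply monotone_nat_of_le_succ
  intro n
  have h0 := vpos hv1 n
  have h1 := vpos hv1 (n + 1)
  rw [L, L, div_le_div_iff₀ h0 h1]
  exact M_succ_ge hv1 n

lemma R_anti (hv1 : ∀ n, 1 ≤ v n) (h12 : ∀ n, (12 : ℝ) * v n ≤ v (n + 1)) :
    Antitone (R v σ) := by
  apply antitone_nat_of_succ_le
  intro n
  have h0 := vpos hv1 n
  have h1 := vpos hv1 (n + 1)
  have key : ((M v σ (n+1) : ℝ) + δ v (n+1)) * v n ≤ ((M v σ n : ℝ) + δ v n) * v (n+1) := by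
    have a1 := M_succ_le (σ := σ) hv1 n
    have a2 := (δlt1 hv1 h12 (n+1)).le
    have a3 := δ_mul_ge hv1 n
    nlinarith [mul_le_mul_of_nonneg_right a2 h0.le]
  rw [R, R, L, L, ← add_div, ← add_div, div_le_div_iff₀ h1 h0]
  exact key

lemma L_le_R (hv1 : ∀ n, 1 ≤ v n) (h12 : ∀ n, (12 : ℝ) * v n ≤ v (n + 1)) (n m : ℕ) :
    L v σ n ≤ R v σ m := by
  rcases le_total n m with h | h
  · calc L v σ n ≤ L v σ m := L_mono hv1 h
      _ ≤ R v σ m := by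
          rw [R]
          have := div_nonneg (δpos hv1 m).le (vpos hv1 m).le
          linarith
  · calc L v σ n ≤ R v σ n := by
          rw [R]
          have := div_nonneg (δpos hv1 n).le (vpos hv1 n).le
          linarith
      _ ≤ R v σ m := R_anti hv1 h12 h

lemma bddL (hv1 : ∀ n, 1 ≤ v n) (h12 : ∀ n, (12 : ℝ) * v n ≤ v (n + 1)) :
    BddAbove (Set.range (L v σ)) := by
  refine ⟨R v σ 0, ?_⟩
  rintro _ ⟨n, rfl⟩
  exact L_le_R hv1 h12 n 0

lemma L_le_x (hv1 : ∀ n, 1 ≤ v n) (h12 : ∀ n, (12 : ℝ) * v n ≤ v (n + 1)) (n : ℕ) :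
    L v σ n ≤ x v σ := le_ciSup (bddL hv1 h12) n

lemma x_le_R (hv1 : ∀ n, 1 ≤ v n) (h12 : ∀ n, (12 : ℝ) * v n ≤ v (n + 1)) (n : ℕ) :
    x v σ ≤ R v σ n :=
  ciSup_le fun m => L_le_R hv1 h12 m n

lemma x_bounds (hv1 : ∀ n, 1 ≤ v n) (h12 : ∀ n, (12 : ℝ) * v n ≤ v (n + 1)) (n : ℕ) :
    (M v σ n : ℝ) ≤ (v n : ℝ) * x v σ ∧ (v n : ℝ) * x v σ ≤ (M v σ n : ℝ) + δ v n := by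
  have h0 := vpos hv1 n
  have h1 := L_le_x (σ := σ) hv1 h12 n
  have h2 := x_le_R (σ := σ) hv1 h12 n
  rw [L] at h1
  rw [R, L] at h2
  constructor
  · rw [div_le_iff₀ h0] at h1; linarith [h1]
  · rw [← add_div, le_div_iff₀ h0] at h2; linarith [h2]

lemma x_nonneg (hv1 : ∀ n, 1 ≤ v n) (h12 : ∀ n, (12 : ℝ) * v n ≤ v (n + 1)) :
    0 ≤ x v σ := by
  have h := L_le_x (σ := σ) hv1 h12 0
  rw [L] at h
  simpa using h

lemma x_lt_one (hv1 : ∀ n, 1 ≤ v n) (h12 : ∀ n, (12 : ℝ) * v n ≤ v (n + 1)) :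
    x v σ < 1 := by
  have h2 := x_le_R (σ := σ) hv1 h12 0
  have h0 := vpos hv1 0
  have hδ := δlt1 hv1 h12 0
  have hv0 : (1:ℝ) ≤ v 0 := by exact_mod_cast hv1 0
  have hR : R v σ 0 = δ v 0 / v 0 := by
    rw [R, L]; simp
  rw [hR] at h2
  have : δ v 0 / (v 0 : ℝ) ≤ δ v 0 := by
    rw [div_le_iff₀ h0]
    nlinarith [(δpos hv1 0).le]
  linarith

/-- M only depends on earlier bits -/
lemma M_congr (τ : ℕ → Bool) (n : ℕ) (h : ∀ k < n, σ k = τ k) : M v σ n = M v τ n := by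
  induction n with
  | zero => rfl
  | succ n ih =>
    have h1 : M v σ n = M v τ n := ih (fun k hk => h k (Nat.lt_succ_of_lt hk))
    rw [M_succ, M_succ, h1, h n (Nat.lt_succ_self n)]

end Eggleston

namespace Eggleston
variable {v : ℕ → ℕ} {σ : ℕ → Bool}

lemma x_sep (hv1 : ∀ n, 1 ≤ v n) (h12 : ∀ n, (12 : ℝ) * v n ≤ v (n + 1))
    (τ : ℕ → Bool) (n : ℕ) (hlt : ∀ k < n, σ k = τ k)
    (hσ : σ n = false) (hτ : τ n = true) : x v σ < x v τ := by
  have h1 := vpos hv1 (n + 1)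
  have hM : M v τ (n + 1) = M v σ (n + 1) + 1 := by
    rw [M_succ, M_succ, M_congr (σ := τ) σ n (fun k hk => (hlt k hk).symm), hσ, hτ]
    simp
  have s1 : x v σ ≤ R v σ (n + 1) := x_le_R hv1 h12 (n + 1)
  have s2 : L v τ (n + 1) ≤ x v τ := L_le_x hv1 h12 (n + 1)
  have s3 : R v σ (n + 1) < L v τ (n + 1) := by
    rw [R, L, L, hM, ← add_div, div_lt_div_iff₀ h1 h1]
    push_cast
    have := δlt1 hv1 h12 (n + 1)
    nlinarith
  linarith

lemma x_inj (hv1 : ∀ n, 1 ≤ v n) (h12 : ∀ n, (12 : ℝ) * v n ≤ v (n + 1)) :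
    Function.Injective (fun σ : ℕ → Bool => x v σ) := by
  intro σ τ h
  by_contra hne
  have hex : ∃ n, σ n ≠ τ n := by
    by_contra hc
    push_neg at hc
    exact hne (funext hc)
  classical
  set n := Nat.find hex with hn
  have hne' : σ n ≠ τ n := Nat.find_spec hex
  have hlt : ∀ k < n, σ k = τ k := fun k hk => by
    have := Nat.find_min hex hk
    simpa using this
  cases hσ : σ n with
  | false =>
    have hτ : τ n = true := by
      cases hτc : τ n
      · exact absurd (hσ.trans hτc.symm) hne'
      · rfl
    exact absurd h (ne_of_lt (x_sep hv1 h12 τ n hlt hσ hτ))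
  | true =>
    have hτ : τ n = false := by
      cases hτc : τ n
      · rfl
      · exact absurd (hσ.trans hτc.symm) hne'
    exact absurd h (ne_of_gt (x_sep (σ := τ) hv1 h12 σ n (fun k hk => (hlt k hk).symm) hτ hσ))

end Eggleston

open Eggleston in
/-- Eggleston: if `u` is strictly increasing with ratios `u (n+1) / u n` tending
to infinity, then `t_u(𝕋) = {x : u_n • x → 0}` is uncountable. -/
theorem tu_uncountable_of_divergent_ratios (u : ℕ → ℕ) (hu : StrictMono u)
    (hpos : 1 ≤ u 0)
    (hq : Tendsto (fun n => (u (n + 1) : ℝ) / u n) atTop atTop) :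
    ¬ {x : AddCircle (1 : ℝ) |
        Tendsto (fun n => (u n : ℤ) • x) atTop (𝓝 0)}.Countable := by
  intro hS
  classical
  have hu1 : ∀ n, 1 ≤ u n := fun n => le_trans hpos (hu.monotone (Nat.zero_le _))
  have hupos : ∀ n, (0:ℝ) < u n := fun n => by exact_mod_cast hu1 n
  obtain ⟨N, hN⟩ := (hq.eventually_ge_atTop 12).exists_forall_of_atTop
  set v : ℕ → ℕ := fun n => u (N + n) with hv
  have hv1 : ∀ n, 1 ≤ v n := fun n => hu1 _
  have h12 : ∀ n, (12:ℝ) * v n ≤ v (n+1) := by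
    intro n
    have h := hN (N + n) (Nat.le_add_right _ _)
    rw [le_div_iff₀ (hupos (N+n))] at h
    exact h
  -- the lengths tend to zero
  have hg : Tendsto (fun m => (u m : ℝ) / u (m+1)) atTop (𝓝 0) := by
    have hinv : Tendsto (fun m => ((u (m+1) : ℝ) / u m)⁻¹) atTop (𝓝 0) :=
      hq.inv_tendsto_atTop
    simpa [inv_div] using hinv
  have part1 : Tendsto (fun n => (v n : ℝ) / v (n+1)) atTop (𝓝 0) := by
    have := hg.comp (tendsto_add_atTop_nat N)
    refine this.congr (fun n => ?_)
    simp only [Function.comp_apply, hv]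
    rw [Nat.add_comm n N, Nat.add_assoc]
  have part2 : Tendsto (fun n : ℕ => 1 / ((n:ℝ)+3)) atTop (𝓝 0) := by
    have h1 : Tendsto (fun n : ℕ => ((n:ℝ)+3)) atTop atTop :=
      Filter.tendsto_atTop_add_const_right atTop 3 tendsto_natCast_atTop_atTop
    simpa [one_div, Pi.inv_def] using h1.inv_tendsto_atTop
  have hδ : Tendsto (δ v) atTop (𝓝 0) := by
    have hδeq : ∀ n : ℕ, δ v n = 3 * ((v n : ℝ) / v (n+1)) + 1/((n:ℝ)+3) := fun n => by
      unfold δ; ring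
    have := ((part1.const_mul 3).add part2)
    rw [show (0:ℝ) = 3 * 0 + 0 by ring]
    exact this.congr (fun n => (hδeq n).symm)
  -- the injection
  set S := {x : AddCircle (1 : ℝ) | Tendsto (fun n => (u n : ℤ) • x) atTop (𝓝 0)} with hSdef
  let f : (ℕ → Bool) → AddCircle (1:ℝ) := fun σ => ((x v σ : ℝ) : AddCircle (1:ℝ))
  have hfinj : Function.Injective f := by
    intro σ τ h
    apply x_inj hv1 h12
    refine (AddCircle.coe_eq_coe_iff_of_mem_Ico (p := (1:ℝ)) (a := 0) ?_ ?_).mp h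
    · exact ⟨x_nonneg hv1 h12, by simpa using x_lt_one (σ := σ) hv1 h12⟩
    · exact ⟨x_nonneg hv1 h12, by simpa using x_lt_one (σ := τ) hv1 h12⟩
  have hmem : ∀ σ, f σ ∈ S := by
    intro σ
    show Tendsto (fun n => (u n : ℤ) • f σ) atTop (𝓝 0)
    have key : ∀ n, (v n : ℤ) • f σ = (((v n : ℝ) * x v σ - (M v σ n : ℝ) : ℝ) : AddCircle (1:ℝ)) := by
      intro n
      have h1 : (v n : ℤ) • f σ = (((v n : ℤ) • x v σ : ℝ) : AddCircle (1:ℝ)) := rfl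
      have h2 : ((v n : ℤ) • x v σ : ℝ) = (v n : ℝ) * x v σ := by
        rw [zsmul_eq_mul]; push_cast; ring
      have hm : (((M v σ n : ℝ)) : AddCircle (1:ℝ)) = 0 := by
        rw [AddCircle.coe_eq_zero_iff]
        exact ⟨M v σ n, by simp⟩
      have h3 : (((v n : ℝ) * x v σ - (M v σ n : ℝ) : ℝ) : AddCircle (1:ℝ))
          = (((v n : ℝ) * x v σ : ℝ) : AddCircle (1:ℝ)) - (((M v σ n : ℝ)) : AddCircle (1:ℝ)) := rfl
      rw [h1, h2, h3, hm, sub_zero]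
    have hreal : Tendsto (fun n => (v n : ℝ) * x v σ - (M v σ n : ℝ)) atTop (𝓝 0) := by
      apply squeeze_zero (fun n => ?_) (fun n => ?_) hδ
      · linarith [(x_bounds (σ := σ) hv1 h12 n).1]
      · linarith [(x_bounds (σ := σ) hv1 h12 n).2]
    have hshift : Tendsto (fun n => (v n : ℤ) • f σ) atTop (𝓝 0) := by
      simp only [key]
      have hcont : Continuous ((↑·) : ℝ → AddCircle (1:ℝ)) := continuous_quotient_mk'
      have := (hcont.tendsto 0).comp hreal
      exact this
    have huv : ∀ n, u (n + N) = v n := fun n => by simp [hv, Nat.add_comm]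
    refine (tendsto_add_atTop_iff_nat N).mp ?_
    simpa only [huv] using hshift
  -- uncountability contradiction
  have hr : (Set.range f).Countable := hS.mono (Set.range_subset_iff.mpr hmem)
  have := hr.to_subtype
  have hcb : Countable (ℕ → Bool) := Countable.of_equiv _ (Equiv.ofInjective f hfinj).symm
  have hcs : Countable (Set ℕ) :=
    Countable.of_equiv (ℕ → Bool) (Equiv.arrowCongr (Equiv.refl ℕ) (by exact Equiv.propEquivBool.symm))
  obtain ⟨g, hg⟩ := (countable_iff_exists_injective (Set ℕ)).mp hcs
  exact Function.cantor_injective g hg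
end

section
/- Let u = (u_n) be a strictly increasing sequence of positive integers with Q = sup_n u_n/u_{n-1} < ∞ (where u_0/u_{-1} means u_0). If x ∈ T satisfies ‖x‖ < 1/(2Q) and ‖u_n·x‖ < 1/(2Q) for all n, then x = 0. Here ‖·‖ denotes the distance to the nearest integer of a representative of x in R/Z. -/
open Filter Topology

/-- Proposition B: if `u` is strictly increasing with all ratios bounded by `Q`
(including `q₀ = u₀ ≤ Q`), and `x ∈ 𝕋` satisfies `‖x‖ < 1/(2Q)` and
`‖u_n • x‖ < 1/(2Q)` for all `n`, then `x = 0`. -/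
theorem ball_trivial_of_bounded_ratios (u : ℕ → ℕ) (hu : StrictMono u)
    (hpos : 1 ≤ u 0) (Q : ℕ) (hQ0 : u 0 ≤ Q)
    (hQ : ∀ n, u (n + 1) ≤ Q * u n)
    (x : AddCircle (1 : ℝ))
    (hx : ‖x‖ < 1 / (2 * Q))
    (hux : ∀ n, ‖(u n : ℤ) • x‖ < 1 / (2 * Q)) :
    x = 0 := by
  have hQ1 : 1 ≤ Q := le_trans hpos hQ0
  have hQR : (1 : ℝ) ≤ Q := by exact_mod_cast hQ1
  have hQpos : (0 : ℝ) < Q := lt_of_lt_of_le zero_lt_one hQR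
  -- get a representative t with x = t and ‖x‖ = |t|
  obtain ⟨s, rfl⟩ := QuotientAddGroup.mk_surjective x
  set t : ℝ := s - round ((1 : ℝ)⁻¹ * s) * 1 with ht
  have hr0 : ((round ((1:ℝ)⁻¹ * s) * 1 : ℝ) : AddCircle (1:ℝ)) = 0 := by
    rw [AddCircle.coe_eq_zero_iff]
    exact ⟨round ((1:ℝ)⁻¹ * s), by simp [zsmul_eq_mul]⟩
  have hxt : (s : AddCircle (1 : ℝ)) = (t : AddCircle (1 : ℝ)) := by
    rw [ht, AddCircle.coe_sub, hr0, sub_zero]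
  have hnorm : ‖(s : AddCircle (1 : ℝ))‖ = |t| := AddCircle.norm_eq (p := 1)
  rw [hxt]
  rw [hnorm] at hx
  -- key: for m with m * |t| ≤ 1/2, ‖m • t‖ = m * |t|
  have key : ∀ m : ℕ, (m : ℝ) * |t| ≤ 1 / 2 →
      ‖((m : ℤ) • (t : AddCircle (1 : ℝ)))‖ = (m : ℝ) * |t| := by
    intro m hm
    have : ((m : ℤ) • (t : AddCircle (1 : ℝ))) = (((m : ℝ) * t : ℝ) : AddCircle (1 : ℝ)) := by
      rw [← AddCircle.coe_zsmul]
      norm_num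
    have habs : |(m:ℝ) * t| = (m:ℝ) * |t| := by
      rw [abs_mul, abs_of_nonneg (by positivity : (0:ℝ) ≤ (m:ℝ))]
    have h2 : |(m:ℝ) * t| ≤ |(1:ℝ)| / 2 := by rw [habs]; simpa using hm
    rw [this, (AddCircle.norm_coe_eq_abs_iff (p := 1) (by norm_num)).mpr h2, habs]
  -- induction: u n * |t| < 1/(2Q)
  have main : ∀ n, (u n : ℝ) * |t| < 1 / (2 * Q) := by
    intro n
    induction n with
    | zero =>
      have h1 : (u 0 : ℝ) * |t| ≤ (Q : ℝ) * |t| := by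
        apply mul_le_mul_of_nonneg_right _ (abs_nonneg t)
        exact_mod_cast hQ0
      have h2 : (Q : ℝ) * |t| < (Q : ℝ) * (1 / (2 * Q)) :=
        mul_lt_mul_of_pos_left hx hQpos
      have h3 : (Q : ℝ) * (1 / (2 * Q)) = 1 / 2 := by
        field_simp; try ring
      have h4 : (u 0 : ℝ) * |t| ≤ 1 / 2 := le_of_lt (by linarith)
      have := key (u 0) h4
      rw [← this]
      rw [← hxt]
      exact hux 0
    | succ n ih =>
      have h1 : (u (n+1) : ℝ) * |t| ≤ (Q : ℝ) * ((u n : ℝ) * |t|) := by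
        rw [← mul_assoc]
        apply mul_le_mul_of_nonneg_right _ (abs_nonneg t)
        exact_mod_cast hQ n
      have h2 : (Q : ℝ) * ((u n : ℝ) * |t|) < (Q : ℝ) * (1 / (2 * Q)) :=
        mul_lt_mul_of_pos_left ih hQpos
      have h3 : (Q : ℝ) * (1 / (2 * Q)) = 1 / 2 := by field_simp; try ring
      have h4 : (u (n+1) : ℝ) * |t| ≤ 1 / 2 := le_of_lt (by linarith)
      have := key (u (n+1)) h4
      rw [← this]
      rw [← hxt]
      exact hux (n+1)
  -- u n ≥ n, so n * |t| bounded for all n ⇒ |t| = 0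
  have ht0 : |t| = 0 := by
    by_contra h
    have habs : 0 < |t| := lt_of_le_of_ne (abs_nonneg t) (Ne.symm h)
    obtain ⟨n, hn⟩ := exists_nat_gt ((1 / (2 * Q)) / |t|)
    have hun : (n : ℝ) ≤ (u n : ℝ) := by exact_mod_cast hu.le_apply
    have := main n
    have h5 : (n : ℝ) * |t| < 1 / (2 * Q) :=
      lt_of_le_of_lt (mul_le_mul_of_nonneg_right hun (abs_nonneg t)) this
    rw [div_lt_iff₀ habs] at hn
    linarith
  have : t = 0 := abs_eq_zero.mp ht0
  rw [this]
  simp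
end

section
/- Let u = (u_n) be an a-sequence and x ∈ T with canonical representation x = Σ c_n/u_n. If the support {n : c_n ≠ 0} is infinite and the sequence of ratios {q_n : c_n ≠ 0} is bounded, then x ∉ t_u(T), i.e., u_n·x does not converge to 0 in T. -/
open Filter Topology

private lemma aseq_dvd_of_le (u : ℕ → ℕ) (hdvd : ∀ n, u n ∣ u (n + 1)) :
    ∀ i j : ℕ, i ≤ j → u i ∣ u j := by
  intro i j hij
  induction j with
  | zero => simp [Nat.le_zero.mp hij]
  | succ n ih =>
    rcases Nat.lt_or_ge i (n + 1) with h | h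
    · exact (ih (Nat.lt_succ_iff.mp h)).trans (hdvd n)
    · have : i = n + 1 := le_antisymm hij h
      simp [this]

/-- the digit series -/
private noncomputable def aF (u c : ℕ → ℕ) : ℕ → ℝ := fun n => (c n : ℝ) / u n

/-- the tails of the digit series -/
private noncomputable def aS (u c : ℕ → ℕ) (m : ℕ) : ℝ := ∑' k, aF u c (k + m)

private lemma aF_def (u c : ℕ → ℕ) (n : ℕ) : aF u c n = (c n : ℝ) / u n := rfl

private lemma aS_def (u c : ℕ → ℕ) (m : ℕ) : aS u c m = ∑' k, aF u c (k + m) := rfl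

/-- If `u` is an a-sequence and `x` has canonical representation `∑ c_n / u_n`
with infinite support on which the ratios `q_n = u_n / u_{n-1}` are bounded,
then `u_n • x` does not tend to `0` in `𝕋`. -/
theorem not_mem_tu_of_bounded_support (u : ℕ → ℕ) (hu : StrictMono u)
    (hpos : 1 ≤ u 0) (hdvd : ∀ n, u n ∣ u (n + 1))
    (c : ℕ → ℕ) (hc0 : c 0 = 0)
    (hlt : ∀ n, 1 ≤ n → c n < u n / u (n - 1))
    (hcan : {n : ℕ | 1 ≤ n ∧ c n < u n / u (n - 1) - 1}.Infinite)
    (x : ℝ) (hx : x = ∑' n : ℕ, (c n : ℝ) / u n)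
    (hsupp : {n : ℕ | c n ≠ 0}.Infinite)
    (hbdd : ∃ C : ℕ, ∀ n ∈ {n : ℕ | c n ≠ 0}, u n / u (n - 1) ≤ C) :
    ¬ Tendsto (fun n => (u n : ℤ) • ((x : AddCircle (1 : ℝ))))
        atTop (𝓝 0) := by
  obtain ⟨C, hC⟩ := hbdd
  -- basic positivity facts
  have upos : ∀ n, 0 < u n := fun n => lt_of_lt_of_le hpos (hu.monotone n.zero_le)
  have uposR : ∀ n, (0 : ℝ) < u n := fun n => by exact_mod_cast upos n
  have hdl : ∀ i j : ℕ, i ≤ j → u i ∣ u j := aseq_dvd_of_le u hdvd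
  have hdm : ∀ m, 1 ≤ m → u (m - 1) ∣ u m := by
    intro m hm
    have := hdvd (m - 1)
    rwa [Nat.sub_add_cancel hm] at this
  have hqm : ∀ m, 1 ≤ m → u (m - 1) * (u m / u (m - 1)) = u m := fun m hm =>
    Nat.mul_div_cancel' (hdm m hm)
  have hq2 : ∀ m, 1 ≤ m → 2 ≤ u m / u (m - 1) := by
    intro m hm
    by_contra hcon
    push_neg at hcon
    have h1 := hqm m hm
    have h2 : u (m - 1) < u m := hu (by omega)
    have h3 : u (m - 1) * (u m / u (m - 1)) ≤ u (m - 1) * 1 :=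
      Nat.mul_le_mul_left _ (by omega)
    omega
  have hqR : ∀ m, 1 ≤ m → (u (m - 1) : ℝ) * ((u m / u (m - 1) : ℕ) : ℝ) = u m := by
    intro m hm; exact_mod_cast congrArg (Nat.cast : ℕ → ℝ) (hqm m hm)
  have hqRpos : ∀ m, 1 ≤ m → (0 : ℝ) < ((u m / u (m - 1) : ℕ) : ℝ) := by
    intro m hm
    have := hq2 m hm
    have : (2 : ℝ) ≤ ((u m / u (m - 1) : ℕ) : ℝ) := by exact_mod_cast this
    linarith
  have hf0 : ∀ n, 0 ≤ aF u c n := fun n => by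
    rw [aF_def]; exact div_nonneg (Nat.cast_nonneg _) (uposR n).le
  have hfb : ∀ n, 1 ≤ n → aF u c n ≤ 1 / u (n - 1) - 1 / u n := by
    intro n hn
    have hcq : (c n : ℝ) ≤ ((u n / u (n - 1) : ℕ) : ℝ) - 1 := by
      have h1 : c n + 1 ≤ u n / u (n - 1) := hlt n hn
      have : (c n : ℝ) + 1 ≤ ((u n / u (n - 1) : ℕ) : ℝ) := by exact_mod_cast h1
      linarith
    have h1 : (1 : ℝ) / u (n - 1) = ((u n / u (n - 1) : ℕ) : ℝ) / u n := by
      rw [div_eq_div_iff (uposR (n - 1)).ne' (uposR n).ne']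
      have := hqR n hn
      linarith
    have h2 : aF u c n ≤ (((u n / u (n - 1) : ℕ) : ℝ) - 1) / u n := by
      rw [aF_def]
      exact (div_le_div_iff_of_pos_right (uposR n)).mpr hcq
    rw [h1, ← sub_div]
    exact h2
  -- partial-sum (telescoping) bound for tails
  have hA : ∀ m, 1 ≤ m → ∀ N, ∑ k ∈ Finset.range N, aF u c (m + k)
      ≤ 1 / u (m - 1) - 1 / u (m - 1 + N) := by
    intro m hm N
    have hterm : ∀ k ∈ Finset.range N,
        aF u c (m + k) ≤ 1 / (u (m - 1 + k) : ℝ) - 1 / (u (m - 1 + (k + 1)) : ℝ) := by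
      intro k _
      have h1 : 1 ≤ m + k := by omega
      have h2 : m + k - 1 = m - 1 + k := by omega
      have h3 : m - 1 + (k + 1) = m + k := by omega
      have := hfb (m + k) h1
      rw [h2] at this
      rw [h3]
      exact this
    calc ∑ k ∈ Finset.range N, aF u c (m + k)
        ≤ ∑ k ∈ Finset.range N,
            (1 / (u (m - 1 + k) : ℝ) - 1 / (u (m - 1 + (k + 1)) : ℝ)) :=
          Finset.sum_le_sum hterm
      _ = 1 / (u (m - 1 + 0) : ℝ) - 1 / (u (m - 1 + N) : ℝ) :=
          Finset.sum_range_sub' (fun i => 1 / (u (m - 1 + i) : ℝ)) N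
      _ = 1 / u (m - 1) - 1 / u (m - 1 + N) := by norm_num
  -- summability
  have hsum : Summable (aF u c) := by
    apply summable_of_sum_range_le hf0 (c := 1 / (u 0 : ℝ))
    intro N
    cases N with
    | zero =>
      rw [Finset.sum_range_zero]
      positivity
    | succ M =>
      rw [Finset.sum_range_succ']
      have hf00 : aF u c 0 = 0 := by simp [aF_def, hc0]
      have e : ∀ i ∈ Finset.range M, aF u c (i + 1) = aF u c (1 + i) := by
        intro i _; rw [add_comm]
      rw [Finset.sum_congr rfl e, hf00, add_zero]
      have h := hA 1 le_rfl M
      have hp : (0 : ℝ) < 1 / u (1 - 1 + M) := one_div_pos.mpr (uposR _)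
      simp only [Nat.sub_self] at h hp
      linarith
  have hsum_tail : ∀ m, Summable fun k => aF u c (k + m) :=
    fun m => (summable_nat_add_iff m).2 hsum
  have hx' : x = ∑' n, aF u c n := hx
  have hxS : ∀ m, x = (∑ i ∈ Finset.range m, aF u c i) + aS u c m := by
    intro m
    rw [hx', aS_def, ← Summable.sum_add_tsum_nat_add m hsum]
  have hS0 : ∀ m, 0 ≤ aS u c m := fun m => by
    rw [aS_def]; exact tsum_nonneg fun k => hf0 _
  have hS_le : ∀ m, 1 ≤ m → aS u c m ≤ 1 / u (m - 1) := by
    intro m hm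
    rw [aS_def]
    apply Summable.tsum_le_of_sum_range_le (hsum_tail m)
    intro N
    have e : ∀ i ∈ Finset.range N, aF u c (i + m) = aF u c (m + i) := by
      intro i _; rw [add_comm]
    rw [Finset.sum_congr rfl e]
    have h := hA m hm N
    have hp : (0 : ℝ) < 1 / u (m - 1 + N) := one_div_pos.mpr (uposR _)
    linarith
  have hS_ge : ∀ m, aF u c m ≤ aS u c m := by
    intro m
    rw [aS_def]
    have := Summable.le_tsum (hsum_tail m) 0 fun j _ => hf0 _
    simpa using this
  have hS_succ : ∀ m, aS u c m = aF u c m + aS u c (m + 1) := by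
    intro m
    have h1 := Summable.sum_add_tsum_nat_add (f := aF u c) m hsum
    have h2 := Summable.sum_add_tsum_nat_add (f := aF u c) (m + 1) hsum
    rw [Finset.sum_range_succ] at h2
    rw [aS_def, aS_def]
    linarith
  -- key circle identity
  have key : ∀ m, 1 ≤ m → ((u (m - 1) : ℤ) • ((x : ℝ) : AddCircle (1 : ℝ)))
      = (((u (m - 1) : ℝ) * aS u c m : ℝ) : AddCircle (1 : ℝ)) := by
    intro m hm
    have hKr : ((∑ i ∈ Finset.range m, c i * (u (m - 1) / u i) : ℕ) : ℝ)
        = (u (m - 1) : ℝ) * ∑ i ∈ Finset.range m, aF u c i := by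
      rw [Nat.cast_sum, Finset.mul_sum]
      refine Finset.sum_congr rfl fun i hi => ?_
      have hd : u i ∣ u (m - 1) := hdl i (m - 1) (by
        have := Finset.mem_range.mp hi; omega)
      rw [Nat.cast_mul, Nat.cast_div hd (Nat.cast_ne_zero.mpr (upos i).ne'), aF_def]
      ring
    have hx2 : (u (m - 1) : ℝ) * x
        = ((∑ i ∈ Finset.range m, c i * (u (m - 1) / u i) : ℕ) : ℝ)
          + (u (m - 1) : ℝ) * aS u c m := by
      rw [hxS m, mul_add, hKr]
    have hzs : ((u (m - 1) : ℤ) • ((x : ℝ) : AddCircle (1 : ℝ)))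
        = (((u (m - 1) : ℝ) * x : ℝ) : AddCircle (1 : ℝ)) := by
      rw [← AddCircle.coe_zsmul]
      congr 1
      rw [zsmul_eq_mul]
      push_cast
      ring
    rw [hzs, hx2, AddCircle.coe_add]
    have hK0 : (((( ∑ i ∈ Finset.range m, c i * (u (m - 1) / u i) : ℕ) : ℝ))
        : AddCircle (1 : ℝ)) = 0 := by
      rw [AddCircle.coe_eq_zero_iff]
      exact ⟨(∑ i ∈ Finset.range m, c i * (u (m - 1) / u i) : ℕ),
        by rw [zsmul_eq_mul, mul_one, Int.cast_natCast]⟩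
    rw [hK0, zero_add]
  -- C is at least 2
  obtain ⟨m0, hm0s, hm0gt⟩ := hsupp.exists_gt 0
  have hC2 : 2 ≤ C := le_trans (hq2 m0 hm0gt) (hC m0 hm0s)
  have hCR : (2 : ℝ) ≤ (C : ℝ) := by exact_mod_cast hC2
  have hε : (0 : ℝ) < 1 / (2 * C) := by positivity
  -- norm lower bound on the circle
  have hnorm : ∀ T : ℝ, 1 / (2 * (C : ℝ)) ≤ T → T ≤ 1 - 1 / (2 * (C : ℝ)) →
      1 / (2 * (C : ℝ)) ≤ ‖((T : ℝ) : AddCircle (1 : ℝ))‖ := by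
    intro T h1 h2
    rw [AddCircle.norm_eq]
    simp only [inv_one, one_mul, mul_one]
    rcases le_or_gt (round T) 0 with hr | hr
    · have hrR : ((round T : ℤ) : ℝ) ≤ 0 := by exact_mod_cast hr
      rw [abs_of_nonneg (by linarith)]
      linarith
    · have hrR : (1 : ℝ) ≤ ((round T : ℤ) : ℝ) := by exact_mod_cast hr
      rw [abs_of_nonpos (by linarith)]
      linarith
  -- good indices give points far from 0
  have hgood : ∀ m, 1 ≤ m → c m ≠ 0 →
      (c m + 2 ≤ u m / u (m - 1) ∨ c (m + 1) = 0) →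
      1 / (2 * (C : ℝ)) ≤ ‖(u (m - 1) : ℤ) • ((x : ℝ) : AddCircle (1 : ℝ))‖ := by
    intro m hm hcm hcase
    rw [key m hm]
    have ha : (0 : ℝ) < (u (m - 1) : ℝ) := uposR (m - 1)
    have hb : (0 : ℝ) < (u m : ℝ) := uposR m
    have hqr0 : (0 : ℝ) < ((u m / u (m - 1) : ℕ) : ℝ) := hqRpos m hm
    have hab : (u (m - 1) : ℝ) * ((u m / u (m - 1) : ℕ) : ℝ) = (u m : ℝ) := hqR m hm
    have hqr2 : (2 : ℝ) ≤ ((u m / u (m - 1) : ℕ) : ℝ) := by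
      exact_mod_cast hq2 m hm
    have hqrC : ((u m / u (m - 1) : ℕ) : ℝ) ≤ (C : ℝ) := by
      exact_mod_cast hC m hcm
    have hc1 : (1 : ℝ) ≤ (c m : ℝ) := by
      exact_mod_cast Nat.one_le_iff_ne_zero.mpr hcm
    have hcub : (c m : ℝ) + 1 ≤ ((u m / u (m - 1) : ℕ) : ℝ) := by
      exact_mod_cast hlt m hm
    -- abbreviations
    set a : ℝ := (u (m - 1) : ℝ) with ha_def
    set b : ℝ := (u m : ℝ) with hb_def
    set qr : ℝ := ((u m / u (m - 1) : ℕ) : ℝ) with hqr_def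
    -- the first term of the tail
    have hP_eq : a * aF u c m = (c m : ℝ) / qr := by
      rw [aF_def, mul_div_assoc', div_eq_div_iff hb.ne' hqr0.ne']
      linear_combination ((c m : ℝ)) * hab
    have hTP : a * aF u c m ≤ a * aS u c m :=
      mul_le_mul_of_nonneg_left (hS_ge m) ha.le
    -- lower bound
    have h1qC : (1 : ℝ) / qr ≥ 1 / (C : ℝ) :=
      one_div_le_one_div_of_le hqr0 hqrC
    have h1C2C : (1 : ℝ) / (2 * (C : ℝ)) ≤ 1 / (C : ℝ) :=
      one_div_le_one_div_of_le (by linarith) (by linarith)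
    have hcmq : (1 : ℝ) / qr ≤ (c m : ℝ) / qr :=
      (div_le_div_iff_of_pos_right hqr0).mpr hc1
    have hlow : 1 / (2 * (C : ℝ)) ≤ a * aS u c m := by
      rw [hP_eq] at hTP
      linarith
    -- upper bound
    have hub1 : (c m : ℝ) / qr ≤ (qr - 1) / qr :=
      (div_le_div_iff_of_pos_right hqr0).mpr (by linarith)
    have hq1 : (qr - 1) / qr = 1 - 1 / qr := by
      field_simp
    have hup : a * aS u c m ≤ 1 - 1 / (2 * (C : ℝ)) := by
      have h12C : (1 : ℝ) / (2 * (C : ℝ)) ≤ 1 / (2 * qr) :=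
        one_div_le_one_div_of_le (by linarith) (by linarith)
      rcases hcase with hcs | hcs
      · -- c m + 2 ≤ q m : generous room in the first digit
        have hcu2 : (c m : ℝ) + 2 ≤ qr := by
          rw [hqr_def]; exact_mod_cast hcs
        have hSm : aS u c m ≤ aF u c m + 1 / b := by
          have h1 := hS_succ m
          have h2 := hS_le (m + 1) (by omega)
          simp only [Nat.add_sub_cancel] at h2
          rw [h1]
          linarith
        have hQ_eq : a / b = 1 / qr := by
          rw [div_eq_div_iff hb.ne' hqr0.ne', one_mul]
          exact hab
        have hTub : a * aS u c m ≤ (c m : ℝ) / qr + 1 / qr := by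
          calc a * aS u c m ≤ a * (aF u c m + 1 / b) :=
                mul_le_mul_of_nonneg_left hSm ha.le
            _ = a * aF u c m + a / b := by ring
            _ = (c m : ℝ) / qr + 1 / qr := by rw [hP_eq, hQ_eq]
        have hub2 : ((c m : ℝ) + 1) / qr ≤ (qr - 1) / qr :=
          (div_le_div_iff_of_pos_right hqr0).mpr (by linarith)
        have hsplit : ((c m : ℝ) + 1) / qr = (c m : ℝ) / qr + 1 / qr := by
          rw [add_div]
        have h1q : (1 : ℝ) / (2 * (C : ℝ)) ≤ 1 / qr := le_trans h1C2C h1qC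
        linarith
      · -- the next digit vanishes
        have hb2 : (0 : ℝ) < (u (m + 1) : ℝ) := uposR (m + 1)
        have hqq2 : (2 : ℝ) ≤ ((u (m + 1) / u m : ℕ) : ℝ) := by
          have := hq2 (m + 1) (by omega)
          simp only [Nat.add_sub_cancel] at this
          exact_mod_cast this
        have hab2 : (u m : ℝ) * ((u (m + 1) / u m : ℕ) : ℝ) = (u (m + 1) : ℝ) := by
          have := hqR (m + 1) (by omega)
          simpa only [Nat.add_sub_cancel] using this
        have hfm1 : aF u c (m + 1) = 0 := by simp [aF_def, hcs]
        have hSm1 : aS u c (m + 1) ≤ 1 / (u (m + 1) : ℝ) := by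
          have h1 := hS_succ (m + 1)
          have h2 := hS_le (m + 2) (by omega)
          have e : m + 2 - 1 = m + 1 := by omega
          rw [e] at h2
          rw [h1, hfm1, zero_add]
          exact h2
        have hQ2_eq : a / (u (m + 1) : ℝ) = 1 / (qr * ((u (m + 1) / u m : ℕ) : ℝ)) := by
          have hpos2 : (0 : ℝ) < qr * ((u (m + 1) / u m : ℕ) : ℝ) :=
            mul_pos hqr0 (by linarith)
          rw [div_eq_div_iff hb2.ne' hpos2.ne']
          calc a * (qr * ((u (m + 1) / u m : ℕ) : ℝ))
              = (a * qr) * ((u (m + 1) / u m : ℕ) : ℝ) := by ring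
            _ = b * ((u (m + 1) / u m : ℕ) : ℝ) := by rw [hab]
            _ = (u (m + 1) : ℝ) := hab2
            _ = 1 * (u (m + 1) : ℝ) := by rw [one_mul]
        have hQ2_le : 1 / (qr * ((u (m + 1) / u m : ℕ) : ℝ)) ≤ 1 / (2 * qr) := by
          apply one_div_le_one_div_of_le (by linarith)
          calc 2 * qr = qr * 2 := by ring
            _ ≤ qr * ((u (m + 1) / u m : ℕ) : ℝ) :=
              mul_le_mul_of_nonneg_left hqq2 hqr0.le
        have hTub : a * aS u c m ≤ (c m : ℝ) / qr + 1 / (2 * qr) := by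
          have h1 := hS_succ m
          have step : a * aS u c m ≤ a * aF u c m + a * (1 / (u (m + 1) : ℝ)) := by
            rw [h1, mul_add]
            have := mul_le_mul_of_nonneg_left hSm1 ha.le
            linarith
          have e2 : a * (1 / (u (m + 1) : ℝ)) = a / (u (m + 1) : ℝ) := by ring
          rw [e2, hQ2_eq] at step
          rw [hP_eq] at step
          linarith
        have hhalf : (1 : ℝ) / qr - 1 / (2 * qr) = 1 / (2 * qr) := by
          field_simp
          ring
        linarith
    exact hnorm _ hlow hup
  -- there are arbitrarily large good indices
  have hB : ∀ N : ℕ, ∃ m, N ≤ m ∧ 1 ≤ m ∧ c m ≠ 0 ∧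
      (c m + 2 ≤ u m / u (m - 1) ∨ c (m + 1) = 0) := by
    intro N
    by_contra hcon
    push_neg at hcon
    obtain ⟨n, hn_in, hn_gt⟩ := hsupp.exists_gt N
    have hstep : ∀ i, c (n + i) ≠ 0 := by
      intro i
      induction i with
      | zero => simpa using hn_in
      | succ j ih =>
        have h := hcon (n + j) (by omega) (by omega) ih
        have e : n + (j + 1) = (n + j) + 1 := by omega
        rw [e]
        exact h.2
    obtain ⟨j, hj_in, hj_gt⟩ := hcan.exists_gt n
    have hcj : c j ≠ 0 := by
      have := hstep (j - n)
      rwa [show n + (j - n) = j by omega] at this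
    have h := hcon j (by omega) hj_in.1 hcj
    have h2 := hj_in.2
    omega
  -- conclusion
  intro htend
  rw [Metric.tendsto_atTop] at htend
  obtain ⟨N, hN⟩ := htend (1 / (2 * (C : ℝ))) hε
  obtain ⟨m, hmN, hm1, hmc, hmcase⟩ := hB (N + 1)
  have h1 := hN (m - 1) (by omega)
  rw [dist_zero_right] at h1
  have h2 := hgood m hm1 hmc hmcase
  have h1' : ‖(u (m - 1) : ℤ) • ((x : ℝ) : AddCircle (1 : ℝ))‖
      < 1 / (2 * (C : ℝ)) := by simpa using h1
  linarith
end

section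
/- Let u = (u_n) be an a-sequence and x ∈ T with canonical representation x = Σ c_n/u_n such that the support I = {n : c_n ≠ 0} is infinite and {q_n : n ∈ I} diverges to infinity. If c_n/q_n → 0 in R as n → ∞ along I, then x ∈ t_u(T). -/
open Filter Topology

section Aux

variable {u : ℕ → ℕ} {c : ℕ → ℕ}

lemma aux_dvd (hdvd : ∀ n, u n ∣ u (n + 1)) : ∀ {k n : ℕ}, k ≤ n → u k ∣ u n := by
  intro k n h
  induction n with
  | zero => simp [Nat.le_zero.mp h]
  | succ n ih =>
    rcases Nat.lt_or_ge k (n+1) with h' | h'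
    · exact (ih (Nat.lt_succ_iff.mp h')).trans (hdvd n)
    · have : k = n + 1 := le_antisymm h h'
      simp [this]

lemma aux_upos (hu : StrictMono u) (hpos : 1 ≤ u 0) (n : ℕ) : 0 < u n :=
  lt_of_lt_of_le hpos (hu.monotone (Nat.zero_le n))

/-- key term bound -/
lemma aux_term_le (hu : StrictMono u) (hpos : 1 ≤ u 0) (hdvd : ∀ n, u n ∣ u (n + 1))
    (hlt : ∀ n, 1 ≤ n → c n < u n / u (n - 1)) (k : ℕ) (hk : 1 ≤ k) :
    (c k : ℝ) / u k ≤ 1 / u (k - 1) - 1 / u k := by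
  obtain ⟨m, rfl⟩ := Nat.exists_eq_add_of_le hk
  set j := 1 + m with hj
  have hj1 : j - 1 = m := by omega
  have hdv : u m ∣ u j := by simpa [hj, Nat.add_comm] using hdvd m
  set q := u j / u m with hq
  have hqu : q * u m = u j := Nat.div_mul_cancel hdv
  have hcq : c j + 1 ≤ q := by
    have := hlt j (by omega)
    rw [hj1] at this
    omega
  have hum : (0:ℝ) < u m := by exact_mod_cast aux_upos hu hpos m
  have huj : (0:ℝ) < u j := by exact_mod_cast aux_upos hu hpos j
  have hquR : (q : ℝ) * u m = u j := by exact_mod_cast hqu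
  have h1 : (1:ℝ) / u m = (q : ℝ) / u j := by
    rw [div_eq_div_iff hum.ne' huj.ne', one_mul, ← hquR]
  rw [hj1, h1, div_sub_div_same]
  have : (c j : ℝ) ≤ (q : ℝ) - 1 := by
    have : ((c j : ℝ) + 1) ≤ q := by exact_mod_cast hcq
    linarith
  gcongr

lemma aux_partial (hu : StrictMono u) (hpos : 1 ≤ u 0) (hdvd : ∀ n, u n ∣ u (n + 1))
    (hc0 : c 0 = 0) (hlt : ∀ n, 1 ≤ n → c n < u n / u (n - 1)) (n : ℕ) :
    ∑ k ∈ Finset.range (n+1), (c k : ℝ) / u k ≤ 1 / u 0 - 1 / u n := by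
  induction n with
  | zero => simp [hc0]
  | succ n ih =>
    rw [Finset.sum_range_succ]
    have h := aux_term_le hu hpos hdvd hlt (n+1) (by omega)
    have e : n + 1 - 1 = n := by omega
    rw [e] at h
    linarith

lemma aux_summable (hu : StrictMono u) (hpos : 1 ≤ u 0) (hdvd : ∀ n, u n ∣ u (n + 1))
    (hc0 : c 0 = 0) (hlt : ∀ n, 1 ≤ n → c n < u n / u (n - 1)) :
    Summable (fun k => (c k : ℝ) / u k) := by
  apply summable_of_sum_range_le (c := 1 / u 0) (fun n => by positivity)
  intro n
  have h0 : (0:ℝ) < u 0 := by exact_mod_cast aux_upos hu hpos 0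
  cases n with
  | zero => simp
  | succ n =>
    have := aux_partial hu hpos hdvd hc0 hlt n
    have h2 : (0:ℝ) ≤ 1 / u n := by positivity
    linarith

lemma aux_tail (hu : StrictMono u) (hpos : 1 ≤ u 0) (hdvd : ∀ n, u n ∣ u (n + 1))
    (hc0 : c 0 = 0) (hlt : ∀ n, 1 ≤ n → c n < u n / u (n - 1)) (p : ℕ) :
    ∑' k : ℕ, (c (k + (p+1)) : ℝ) / u (k + (p+1)) ≤ 1 / u p := by
  apply Summable.tsum_le_of_sum_range_le ((summable_nat_add_iff (p+1)).2
    (aux_summable hu hpos hdvd hc0 hlt))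
  intro N
  have key : ∑ k ∈ Finset.range N, (c (k + (p+1)) : ℝ) / u (k + (p+1))
      ≤ 1 / u p - 1 / u (p + N) := by
    induction N with
    | zero => simp
    | succ N ih =>
      rw [Finset.sum_range_succ]
      have h := aux_term_le hu hpos hdvd hlt (N + (p+1)) (by omega)
      have e : N + (p+1) - 1 = p + N := by omega
      have e2 : N + (p+1) = p + (N+1) := by omega
      rw [e, e2] at h
      rw [e2]
      linarith
  have h2 : (0:ℝ) ≤ 1 / u (p + N) := by positivity
  linarith

lemma aux_int (hu : StrictMono u) (hpos : 1 ≤ u 0) (hdvd : ∀ n, u n ∣ u (n + 1))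
    (n : ℕ) :
    (u n : ℝ) * ∑ k ∈ Finset.range (n+1), (c k : ℝ) / u k
      = ((∑ k ∈ Finset.range (n+1), c k * (u n / u k) : ℕ) : ℝ) := by
  rw [Finset.mul_sum, Nat.cast_sum]
  apply Finset.sum_congr rfl
  intro k hk
  have hk' : k ≤ n := by simpa [Nat.lt_succ_iff] using Finset.mem_range.mp hk
  have hdv : u k ∣ u n := aux_dvd hdvd hk'
  have huk : ((u k : ℝ)) ≠ 0 := by exact_mod_cast (aux_upos hu hpos k).ne'
  rw [Nat.cast_mul, Nat.cast_div hdv huk]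
  field_simp

end Aux


/-- If `u` is an a-sequence and `x` has canonical representation `∑ c_n / u_n`
with infinite `u`-divergent support (the ratios `q_n = u_n / u_{n-1}` diverge
to infinity along the support), and `c_n / q_n → 0` in `ℝ` along the support,
then `u_n • x → 0` in `𝕋`. -/

theorem mem_tu_of_divergent_support (u : ℕ → ℕ) (hu : StrictMono u)
    (hpos : 1 ≤ u 0) (hdvd : ∀ n, u n ∣ u (n + 1))
    (c : ℕ → ℕ) (hc0 : c 0 = 0)
    (hlt : ∀ n, 1 ≤ n → c n < u n / u (n - 1))
    (hcan : {n : ℕ | 1 ≤ n ∧ c n < u n / u (n - 1) - 1}.Infinite)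
    (x : ℝ) (hx : x = ∑' n : ℕ, (c n : ℝ) / u n)
    (hsupp : {n : ℕ | c n ≠ 0}.Infinite)
    (hdiv : Tendsto (fun n => (u n / u (n - 1) : ℕ))
        (atTop ⊓ 𝓟 {n : ℕ | c n ≠ 0}) atTop)
    (hratio : Tendsto (fun n => (c n : ℝ) / (u n / u (n - 1) : ℕ))
        (atTop ⊓ 𝓟 {n : ℕ | c n ≠ 0}) (𝓝 0)) :
    Tendsto (fun n => (u n : ℤ) • ((x : AddCircle (1 : ℝ))))
      atTop (𝓝 0) := by
  have hupos : ∀ k, (0:ℝ) < u k := fun k => by exact_mod_cast aux_upos hu hpos k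
  set f : ℕ → ℝ := fun k => (c k : ℝ) / u k with hfdef
  have hsum : Summable f := aux_summable hu hpos hdvd hc0 hlt
  set T : ℕ → ℝ := fun n => ∑' k : ℕ, f (k + (n+1)) with hTdef
  have hT0 : ∀ n, 0 ≤ T n := fun n => tsum_nonneg (fun k => by positivity)
  -- the next support point
  have hne : ∀ n, {k | n < k ∧ c k ≠ 0}.Nonempty := by
    intro n
    obtain ⟨k, hk, hk2⟩ := hsupp.exists_gt n
    exact ⟨k, hk2, hk⟩
  set m : ℕ → ℕ := fun n => sInf {k | n < k ∧ c k ≠ 0} with hmdef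
  have hmem : ∀ n, n < m n ∧ c (m n) ≠ 0 := fun n => Nat.sInf_mem (hne n)
  have hmin : ∀ n k, n < k → k < m n → c k = 0 := by
    intro n k h1 h2
    by_contra hc
    have : m n ≤ k := Nat.sInf_le (show k ∈ {k | n < k ∧ c k ≠ 0} from ⟨h1, hc⟩)
    omega
  -- tail bound through the next support point
  have hTle : ∀ n, T n ≤ f (m n) + 1 / u (m n) := by
    intro n
    obtain ⟨h1, h2⟩ := hmem n
    set d := m n - (n+1) with hd
    have hdn : d + (n+1) = m n := Nat.sub_add_cancel h1
    have hshift : Summable (fun k => f (k + (n+1))) := (summable_nat_add_iff (n+1)).2 hsum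
    have hsplit := Summable.sum_add_tsum_nat_add (f := fun k => f (k + (n+1))) d hshift
    have hzero : ∑ i ∈ Finset.range d, f (i + (n+1)) = 0 := by
      apply Finset.sum_eq_zero
      intro i hi
      have hi' : i < d := Finset.mem_range.mp hi
      have : c (i + (n+1)) = 0 := hmin n _ (by omega) (by omega)
      simp [hfdef, this]
    have he1 : ∑' i : ℕ, f ((i + d) + (n+1)) = ∑' i : ℕ, f (i + m n) := by
      apply tsum_congr; intro i; congr 1; omega
    have hTn : T n = ∑' i : ℕ, f (i + m n) := by
      rw [hTdef]
      simp only []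
      rw [← hsplit, hzero, zero_add, he1]
    have hsm : Summable (fun i => f (i + m n)) := (summable_nat_add_iff (m n)).2 hsum
    have hsplit2 : ∑' i : ℕ, f (i + m n) = f (m n) + ∑' i : ℕ, f ((i + 1) + m n) := by
      rw [Summable.tsum_eq_zero_add hsm]
      simp
    have he2 : ∑' i : ℕ, f ((i + 1) + m n) = ∑' i : ℕ, f (i + (m n + 1)) := by
      apply tsum_congr; intro i; congr 1; omega
    have htail := aux_tail hu hpos hdvd hc0 hlt (m n)
    rw [hTn, hsplit2, he2]
    exact add_le_add_right htail _
  -- key real bound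
  set Q : ℕ → ℕ := fun k => u k / u (k - 1) with hQdef
  have key : ∀ n, (u n : ℝ) * T n ≤ ((c (m n) : ℝ) + 1) / (Q (m n)) := by
    intro n
    obtain ⟨h1, h2⟩ := hmem n
    set k := m n with hk
    have hk1 : 1 ≤ k := by omega
    have hdv : u (k - 1) ∣ u k := by
      have := hdvd (k - 1)
      rwa [show k - 1 + 1 = k from by omega] at this
    have hquR : (Q k : ℝ) * u (k - 1) = u k := by
      exact_mod_cast congrArg (Nat.cast : ℕ → ℝ) (Nat.div_mul_cancel hdv)
    have hQpos : (0:ℝ) < Q k := by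
      have : 1 ≤ u k / u (k - 1) :=
        (Nat.one_le_div_iff (aux_upos hu hpos (k-1))).2 (hu.monotone (by omega))
      exact_mod_cast this
    have hun_le : (u n : ℝ) ≤ u (k - 1) := by
      exact_mod_cast hu.monotone (by omega : n ≤ k - 1)
    calc (u n : ℝ) * T n
        ≤ (u (k-1) : ℝ) * (f k + 1 / u k) :=
          mul_le_mul hun_le (hTle n) (hT0 n) (hupos (k-1)).le
      _ = ((c k : ℝ) + 1) / Q k := by
          have : f k + 1 / u k = ((c k : ℝ) + 1) / u k := by
            rw [hfdef]; rw [← add_div]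
          rw [this, mul_div_assoc']
          rw [div_eq_div_iff (hupos k).ne' hQpos.ne']
          linear_combination ((c k : ℝ) + 1) * hquR
  -- the bound tends to zero
  set L := atTop ⊓ 𝓟 {n : ℕ | c n ≠ 0} with hL
  have hG : Tendsto (fun j => ((c j : ℝ) + 1) / (Q j)) L (𝓝 0) := by
    have h2 : Tendsto (fun j => 1 / ((Q j : ℕ) : ℝ)) L (𝓝 0) := by
      simp only [one_div]
      exact tendsto_inv_atTop_zero.comp (tendsto_natCast_atTop_atTop.comp hdiv)
    have := hratio.add h2
    rw [add_zero] at this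
    convert this using 2 with j
    rw [add_div]
  have hmt : Tendsto m atTop L := by
    refine tendsto_inf.2 ⟨?_, ?_⟩
    · exact tendsto_atTop_mono (fun n => (hmem n).1.le) tendsto_id
    · exact tendsto_principal.2 (Eventually.of_forall fun n => (hmem n).2)
  have hr : Tendsto (fun n => (u n : ℝ) * T n) atTop (𝓝 0) := by
    refine tendsto_of_tendsto_of_tendsto_of_le_of_le tendsto_const_nhds (hG.comp hmt)
      (fun n => mul_nonneg (hupos n).le (hT0 n)) key
  -- transfer to the circle
  have hpt : ∀ n, (u n : ℤ) • ((x : ℝ) : AddCircle (1:ℝ))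
      = ((((u n : ℝ) * T n : ℝ)) : AddCircle (1:ℝ)) := by
    intro n
    set z : ℕ := ∑ k ∈ Finset.range (n+1), c k * (u n / u k) with hz
    have hxsplit : (u n : ℝ) * x = (z : ℝ) + (u n : ℝ) * T n := by
      rw [hx, ← Summable.sum_add_tsum_nat_add (n+1) hsum, mul_add,
        aux_int hu hpos hdvd n]
    have h1 : (u n : ℤ) • ((x : ℝ) : AddCircle (1:ℝ))
        = ((((u n : ℤ) • x : ℝ)) : AddCircle (1:ℝ)) :=
      (map_zsmul (QuotientAddGroup.mk' (AddSubgroup.zmultiples (1:ℝ))) (u n : ℤ) x).symm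
    rw [h1]
    have h2 : ((u n : ℤ) • x : ℝ) = (z : ℝ) + (u n : ℝ) * T n := by
      rw [zsmul_eq_mul]; push_cast; push_cast at hxsplit; linarith
    rw [h2]
    have h3 : (((z : ℝ)) : AddCircle (1:ℝ)) = 0 := by
      rw [AddCircle.coe_eq_zero_iff]
      exact ⟨z, by simp⟩
    have h4 : ((((z : ℝ) + (u n : ℝ) * T n : ℝ)) : AddCircle (1:ℝ))
        = (((z : ℝ)) : AddCircle (1:ℝ)) + ((((u n : ℝ) * T n : ℝ)) : AddCircle (1:ℝ)) := rfl
    rw [h4, h3, zero_add]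
  simp only [hpt]
  have hcont : Continuous ((↑) : ℝ → AddCircle (1:ℝ)) := continuous_quotient_mk'
  have h0 : (((0:ℝ)) : AddCircle (1:ℝ)) = 0 := rfl
  have := (hcont.tendsto 0).comp hr
  rwa [h0] at this
end

section
/- Let u = (u_n) be an a-sequence and x ∈ T with canonical representation x = Σ c_n/u_n having u-divergent support (i.e., q_n → ∞ along the support). If the sequence c_n/q_n (taken along the support) does not converge to 0 in T, then u_n·x does not converge to 0 in T. -/
open Filter Topology

/-- If `u` is an a-sequence and `x` has canonical representation `∑ c_n / u_n`
with infinite `u`-divergent support, and `c_n / q_n` (viewed in `𝕋 = ℝ/ℤ`) does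
not tend to `0` along the support, then `u_n • x` does not tend to `0` in `𝕋`. -/
theorem not_mem_tu_of_ratio_not_tendsto (u : ℕ → ℕ) (hu : StrictMono u)
    (hpos : 1 ≤ u 0) (hdvd : ∀ n, u n ∣ u (n + 1))
    (c : ℕ → ℕ) (hc0 : c 0 = 0)
    (hlt : ∀ n, 1 ≤ n → c n < u n / u (n - 1))
    (hcan : {n : ℕ | 1 ≤ n ∧ c n < u n / u (n - 1) - 1}.Infinite)
    (x : ℝ) (hx : x = ∑' n : ℕ, (c n : ℝ) / u n)
    (hsupp : {n : ℕ | c n ≠ 0}.Infinite)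
    (hdiv : Tendsto (fun n => (u n / u (n - 1) : ℕ))
        (atTop ⊓ 𝓟 {n : ℕ | c n ≠ 0}) atTop)
    (hratio : ¬ Tendsto
        (fun n => (((c n : ℝ) / (u n / u (n - 1) : ℕ) : ℝ) : AddCircle (1 : ℝ)))
        (atTop ⊓ 𝓟 {n : ℕ | c n ≠ 0}) (𝓝 0)) :
    ¬ Tendsto (fun n => (u n : ℤ) • ((x : AddCircle (1 : ℝ))))
        atTop (𝓝 0) := by
  intro h
  apply hratio
  set L := atTop ⊓ 𝓟 {n : ℕ | c n ≠ 0} with hL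
  -- basic positivity
  have upos : ∀ n, 0 < u n := fun n => lt_of_lt_of_le hpos (hu.monotone (Nat.zero_le n))
  have uposR : ∀ n, (0:ℝ) < u n := fun n => by exact_mod_cast upos n
  have udvd : ∀ k m, k ≤ m → u k ∣ u m := by
    intro k m hkm
    induction m with
    | zero => simpa [Nat.le_zero.mp hkm] using dvd_refl (u 0)
    | succ m ih =>
      rcases Nat.lt_or_ge k (m+1) with h' | h'
      · exact dvd_trans (ih (Nat.lt_succ_iff.mp h')) (hdvd m)
      · have : k = m + 1 := le_antisymm hkm h'
        simp [this]
  set q : ℕ → ℕ := fun n => u n / u (n - 1) with hq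
  have hqmul : ∀ n, u (n-1) * q n = u n := fun n =>
    Nat.mul_div_cancel' (udvd (n-1) n (Nat.sub_le n 1))
  have hqmulR : ∀ n, (u (n-1) : ℝ) * (q n : ℝ) = u n := fun n => by
    exact_mod_cast congrArg (Nat.cast : ℕ → ℝ) (hqmul n)
  have hqpos : ∀ n, 0 < q n := by
    intro n
    rcases Nat.eq_zero_or_pos (q n) with h0 | h0
    · exfalso
      have h2 := upos n
      have := hqmul n
      rw [h0, Nat.mul_zero] at this
      omega
    · exact h0
  have hqposR : ∀ n, (0:ℝ) < q n := fun n => by exact_mod_cast hqpos n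
  set f : ℕ → ℝ := fun k => (c k : ℝ) / u k with hf
  have hf0 : ∀ k, 0 ≤ f k := fun k => by positivity
  -- the basic bound f k ≤ 1/u (k-1) - 1/u k, valid for all k (k = 0 uses c 0 = 0)
  have hfb : ∀ k, f k ≤ 1 / u (k-1) - 1 / u k := by
    intro k
    rcases Nat.eq_zero_or_pos k with rfl | hk
    · simp [hf, hc0]
    · have h1 : (c k : ℝ) + 1 ≤ (q k : ℝ) := by exact_mod_cast hlt k hk
      have hk1 := uposR (k-1)
      have hk2 := uposR k
      rw [hf, div_sub_div _ _ hk1.ne' hk2.ne', div_le_div_iff₀ hk2 (mul_pos hk1 hk2)]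
      nlinarith [hqmulR k, mul_pos hk1 hk2]
  -- summability
  have hpartial : ∀ n, ∑ i ∈ Finset.range n, f i ≤ 1 / u 0 - 1 / u (n-1) := by
    intro n
    induction n with
    | zero => simp
    | succ n ih =>
      rw [Finset.sum_range_succ]
      have := hfb n
      have h2 : (1:ℝ) / u (n - 1) ≤ 1 / u 0 - ∑ i ∈ Finset.range n, f i := by linarith
      simp only [Nat.add_sub_cancel]
      linarith
  have hsum : Summable f := by
    apply summable_of_sum_range_le hf0 (c := 1 / u 0)
    intro n
    have := hpartial n
    have h1 : (0:ℝ) ≤ 1 / u (n-1) := by positivity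
    linarith
  -- tail bound
  have htail : ∀ n, ∑' j : ℕ, f (j + (n+1)) ≤ 1 / u n := by
    intro n
    apply Summable.tsum_le_of_sum_range_le (hsum.comp_injective (add_left_injective (n+1)))
    intro m
    have key : ∀ m, ∑ j ∈ Finset.range m, f (j + (n+1)) ≤ 1 / u n - 1 / u (n+m) := by
      intro m
      induction m with
      | zero => simp
      | succ m ih =>
        rw [Finset.sum_range_succ, show n + (m+1) = m + (n+1) from by omega]
        have hb := hfb (m + (n+1))
        rw [show m + (n+1) - 1 = n + m from by omega] at hb
        linarith
    calc ∑ i ∈ Finset.range m, (f ∘ fun j => j + (n+1)) i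
        = ∑ j ∈ Finset.range m, f (j + (n+1)) := rfl
      _ ≤ 1 / u n - 1 / u (n+m) := key m
      _ ≤ 1 / u n := by
          have h1 : (0:ℝ) ≤ 1 / u (n+m) := by positivity
          linarith
  have htail0 : ∀ n, 0 ≤ ∑' j : ℕ, f (j + (n+1)) := fun n =>
    tsum_nonneg fun j => hf0 _
  -- remainder
  set R : ℕ → ℝ := fun n => (u (n-1) : ℝ) * ∑' j : ℕ, f (j + (n+1)) with hR
  have hR0 : ∀ n, 0 ≤ R n := fun n => mul_nonneg (uposR (n-1)).le (htail0 n)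
  have hRb : ∀ n, R n ≤ 1 / q n := by
    intro n
    have h1 : R n ≤ (u (n-1) : ℝ) * (1 / u n) :=
      mul_le_mul_of_nonneg_left (htail n) (uposR (n-1)).le
    have h2 : (u (n-1) : ℝ) * (1 / u n) = 1 / q n := by
      rw [mul_one_div, div_eq_div_iff (uposR n).ne' (hqposR n).ne', one_mul]
      exact hqmulR n
    linarith [h1, h2.le]
  -- the key identity in the circle, for n ≥ 1
  have hkey : ∀ n, 1 ≤ n →
      ((u (n-1) : ℤ) • (x : AddCircle (1:ℝ)))
        = (((c n : ℝ) / (q n : ℝ) : ℝ) : AddCircle (1:ℝ)) + ((R n : ℝ) : AddCircle (1:ℝ)) := by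
    intro n hn
    have hdecomp : x = ∑ i ∈ Finset.range (n+1), f i + ∑' j : ℕ, f (j + (n+1)) := by
      rw [hx, ← hsum.sum_add_tsum_nat_add (n+1)]
    set A : ℕ := ∑ k ∈ Finset.range n, c k * (u (n-1) / u k) with hA
    have hsumInt : (u (n-1) : ℝ) * ∑ i ∈ Finset.range n, f i = (A : ℝ) := by
      rw [hA, Finset.mul_sum, Nat.cast_sum]
      apply Finset.sum_congr rfl
      intro k hk
      have hkn : k ≤ n - 1 := by
        have := Finset.mem_range.mp hk; omega
      have hdk : u k ∣ u (n-1) := udvd k (n-1) hkn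
      rw [Nat.cast_mul, Nat.cast_div hdk (by exact_mod_cast (upos k).ne')]
      rw [hf]
      field_simp
    have hmid : (u (n-1) : ℝ) * f n = (c n : ℝ) / (q n : ℝ) := by
      have e1 : (u (n-1) : ℝ) * ((c n : ℝ) / u n) = ((u (n-1) : ℝ) * c n) / u n := by ring
      rw [hf, e1, div_eq_div_iff (uposR n).ne' (hqposR n).ne']
      linear_combination (c n : ℝ) * hqmulR n
    have hxreal : (u (n-1) : ℝ) * x = (A : ℝ) + ((c n : ℝ) / (q n : ℝ) + R n) := by
      rw [hdecomp, Finset.sum_range_succ, mul_add, mul_add, hsumInt, hmid, hR]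
      ring
    have hz : (((A : ℝ)) : AddCircle (1:ℝ)) = 0 := by
      rw [AddCircle.coe_eq_zero_iff]
      exact ⟨A, by simp⟩
    calc (u (n-1) : ℤ) • (x : AddCircle (1:ℝ))
        = (((u (n-1) : ℤ) • x : ℝ) : AddCircle (1:ℝ)) := (AddCircle.coe_zsmul 1).symm
      _ = (((u (n-1) : ℝ) * x : ℝ) : AddCircle (1:ℝ)) := by
          norm_num [zsmul_eq_mul]
      _ = (((A : ℝ) : ℝ) : AddCircle (1:ℝ)) + (((c n : ℝ) / (q n : ℝ) + R n : ℝ) : AddCircle (1:ℝ)) := by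
          rw [hxreal]; rfl
      _ = (((c n : ℝ) / (q n : ℝ) : ℝ) : AddCircle (1:ℝ)) + ((R n : ℝ) : AddCircle (1:ℝ)) := by
          rw [hz, zero_add]; rfl
  -- u (n-1) • x → 0 along L
  have hsub : Tendsto (fun n : ℕ => n - 1) L atTop :=
    (tendsto_sub_atTop_nat 1).mono_left inf_le_left
  have h1 : Tendsto (fun n => (u (n-1) : ℤ) • (x : AddCircle (1:ℝ))) L (𝓝 0) :=
    h.comp hsub
  -- R n → 0 along L, hence its image in the circle → 0
  have hqdiv : Tendsto (fun n => ((q n : ℕ) : ℝ)) L atTop :=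
    tendsto_natCast_atTop_atTop.comp hdiv
  have hRlim : Tendsto R L (𝓝 0) := by
    apply squeeze_zero hR0 hRb
    have hi : Tendsto (fun n => ((q n : ℕ) : ℝ)⁻¹) L (𝓝 0) := hqdiv.inv_tendsto_atTop
    simpa [one_div] using hi
  have hcont : Continuous (fun r : ℝ => (r : AddCircle (1:ℝ))) := continuous_quotient_mk'
  have hRlim' : Tendsto (fun n => ((R n : ℝ) : AddCircle (1:ℝ))) L (𝓝 0) := by
    have := (hcont.tendsto 0).comp hRlim
    have h2 : Tendsto (fun n => ((R n : ℝ) : AddCircle (1:ℝ))) L (𝓝 ((0:ℝ) : AddCircle (1:ℝ))) := this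
    simpa using h2
  -- conclude
  have hev : ∀ᶠ n in L, (((c n : ℝ) / (q n : ℝ) : ℝ) : AddCircle (1:ℝ))
      = (u (n-1) : ℤ) • (x : AddCircle (1:ℝ)) - ((R n : ℝ) : AddCircle (1:ℝ)) := by
    have : ∀ᶠ n in atTop, 1 ≤ n := eventually_atTop.mpr ⟨1, fun n hn => hn⟩
    filter_upwards [this.filter_mono inf_le_left] with n hn
    rw [hkey n hn]
    abel
  have : Tendsto (fun n => (((c n : ℝ) / (q n : ℝ) : ℝ) : AddCircle (1:ℝ))) L (𝓝 0) := by
    have hlim := h1.sub hRlim'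
    rw [sub_zero] at hlim
    exact Tendsto.congr' (hev.mono fun n hn => hn.symm) hlim
  simpa [hq] using this
end

section
/- Let u = (u_n) be an a-sequence. Then the torsion subgroup of t_u(T) = {x ∈ T : u_n·x → 0} equals the set of x ∈ T whose canonical representation x = Σ c_n/u_n has finite support, i.e., the torsion elements of t_u(T) are exactly those of the form k/u_m for some m ∈ N and integer k. -/
open Filter Topology

lemma zsmul_zero_rep (n : ℕ) (hn : 0 < n) (y : AddCircle (1:ℝ))
    (h : (n:ℤ) • y = 0) : ∃ j : ℕ, j < n ∧ y = (((j : ℝ) / n : ℝ) : AddCircle (1:ℝ)) := by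
  obtain ⟨r, rfl⟩ := QuotientAddGroup.mk_surjective y
  rw [← AddCircle.coe_zsmul, AddCircle.coe_eq_zero_iff] at h
  obtain ⟨m, hm⟩ := h
  simp only [zsmul_eq_mul, smul_eq_mul, mul_one] at hm
  have hn' : (n:ℝ) ≠ 0 := by positivity
  have hr : r = (m : ℝ) / n := by field_simp [mul_comm] at hm ⊢; push_cast at hm; linarith [hm]
  refine ⟨(m % n).toNat, ?_, ?_⟩
  · have := Int.emod_lt_of_pos m (b := n) (by exact_mod_cast hn)
    omega
  · have hmod : ((m % n).toNat : ℤ) = m % n := Int.toNat_of_nonneg (Int.emod_nonneg m (by exact_mod_cast hn.ne'))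
    have : ((r : AddCircle (1:ℝ)) - ((((m % n).toNat : ℝ) / n : ℝ) : AddCircle (1:ℝ))) = 0 := by
      rw [hr, ← AddCircle.coe_sub, AddCircle.coe_eq_zero_iff]
      refine ⟨m / n, ?_⟩
      have hz : (m : ℤ) - ((m % n).toNat : ℤ) = (n : ℤ) * (m / n) := by
        have := Int.mul_ediv_add_emod m (n:ℤ)
        omega
      have : ((m:ℝ) - ((m % n).toNat : ℝ)) = ((n : ℝ)) * ((m / n : ℤ) : ℝ) := by
        exact_mod_cast congrArg (fun z : ℤ => (z : ℝ)) hz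
      rw [div_sub_div_same, this]
      field_simp
      simp
    rw [sub_eq_zero] at this
    exact this

lemma u_dvd_of_le (u : ℕ → ℕ) (hdvd : ∀ n, u n ∣ u (n + 1)) {m n : ℕ} (h : m ≤ n) :
    u m ∣ u n := by
  induction n with
  | zero => simp_all
  | succ k ih =>
    rcases Nat.lt_or_ge m (k+1) with h'|h'
    · exact (ih (Nat.lt_succ_iff.mp h')).trans (hdvd k)
    · have : m = k + 1 := le_antisymm h h'
      simp [this]

/-- For an a-sequence `u`, the torsion elements of `t_u(𝕋)` are exactly the
elements of the form `k / u_m`. -/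
theorem torsion_of_tu_eq (u : ℕ → ℕ) (hu : StrictMono u)
    (hpos : 1 ≤ u 0) (hdvd : ∀ n, u n ∣ u (n + 1))
    (x : AddCircle (1 : ℝ)) :
    (Tendsto (fun n => (u n : ℤ) • x) atTop (𝓝 0) ∧ IsOfFinAddOrder x) ↔
      ∃ m k : ℕ, x = (((k : ℝ) / u m : ℝ) : AddCircle (1 : ℝ)) := by
  have hupos : ∀ n, 0 < u n := fun n => lt_of_lt_of_le hpos (hu.monotone (Nat.zero_le n))
  constructor
  · rintro ⟨ht, hf⟩
    set n := addOrderOf x with hn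
    have hnpos : 0 < n := hf.addOrderOf_pos
    -- each u j • x lies in the finite n-torsion set S
    have hmem : ∀ j, ∃ i : ℕ, i < n ∧ (u j : ℤ) • x = (((i : ℝ) / n : ℝ) : AddCircle (1:ℝ)) := by
      intro j
      apply zsmul_zero_rep n hnpos
      rw [smul_comm]
      have : (n : ℤ) • x = 0 := by
        have := addOrderOf_nsmul_eq_zero x
        rw [natCast_zsmul]; exact this
      simp [this]
    set S : Set (AddCircle (1:ℝ)) :=
      (fun i : Fin n => (((i : ℝ) / n : ℝ) : AddCircle (1:ℝ))) '' Set.univ with hS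
    have hSfin : S.Finite := Set.toFinite _
    have hclosed : IsClosed (S \ {0}) := (hSfin.subset Set.diff_subset).isClosed
    have hU : (S \ {0})ᶜ ∈ 𝓝 (0 : AddCircle (1:ℝ)) :=
      hclosed.isOpen_compl.mem_nhds (by simp)
    have hev := ht.eventually_mem hU
    obtain ⟨j, hj⟩ := hev.exists
    have hjS : (u j : ℤ) • x ∈ S := by
      obtain ⟨i, hi, hix⟩ := hmem j
      exact ⟨⟨i, hi⟩, Set.mem_univ _, hix.symm⟩
    have hzero : (u j : ℤ) • x = 0 := by
      by_contra h
      exact hj ⟨hjS, h⟩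
    obtain ⟨k, _, hk⟩ := zsmul_zero_rep (u j) (hupos j) x hzero
    exact ⟨j, k, hk⟩
  · rintro ⟨m, k, rfl⟩
    constructor
    · apply Tendsto.congr' (f₁ := fun _ => (0 : AddCircle (1:ℝ)))
      · filter_upwards [eventually_ge_atTop m] with j hj
        obtain ⟨c, hc⟩ := u_dvd_of_le u hdvd hj
        have hne : (u m : ℝ) ≠ 0 := by exact_mod_cast (hupos m).ne'
        have : (u j : ℤ) • ((((k : ℝ) / u m : ℝ)) : AddCircle (1:ℝ))
            = (((u j * k : ℕ) / u m : ℝ) : AddCircle (1:ℝ)) := by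
          rw [← AddCircle.coe_zsmul]
          congr 1
          simp only [zsmul_eq_mul]
          push_cast
          ring
        rw [eq_comm, this, AddCircle.coe_eq_zero_iff]
        refine ⟨(c * k : ℕ), ?_⟩
        have : ((u j * k : ℕ) : ℝ) / u m = ((c * k : ℕ) : ℝ) := by
          rw [hc]; push_cast; rw [mul_assoc, mul_div_cancel_left₀ _ hne]
        simp only [zsmul_eq_mul, smul_eq_mul, mul_one]
        push_cast [hc]
        field_simp
      · exact tendsto_const_nhds
    · rw [isOfFinAddOrder_iff_nsmul_eq_zero]
      refine ⟨u m, hupos m, ?_⟩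
      rw [← AddCircle.coe_nsmul, AddCircle.coe_eq_zero_iff]
      refine ⟨(k : ℤ), ?_⟩
      have hne : (u m : ℝ) ≠ 0 := by exact_mod_cast (hupos m).ne'
      simp only [smul_eq_mul, mul_one, nsmul_eq_mul]
      field_simp
      simp
end

section
/- Let u be an a-sequence and let x = a/b (mod 1) be a torsion element of T with gcd(a,b) = 1 and 0 ≤ a < b. If u_n·x → 0 in T, then b divides u_m for some m, hence x = k/u_m for some integer k. -/
open Filter Topology

/-- For an a-sequence `u`, if `x = a/b` (mod 1) with `gcd(a,b) = 1`, `0 ≤ a < b`,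
and `u_n • x → 0` in `𝕋`, then `b ∣ u_m` for some `m`; hence `x = k / u_m` for
some integer `k`. -/
theorem torsion_denominator_divides (u : ℕ → ℕ) (hu : StrictMono u)
    (hpos : 1 ≤ u 0) (hdvd : ∀ n, u n ∣ u (n + 1))
    (a b : ℕ) (hab : Nat.Coprime a b) (ha : a < b)
    (h : Tendsto (fun n => (u n : ℤ) • (((a : ℝ) / b : ℝ) : AddCircle (1 : ℝ)))
        atTop (𝓝 0)) :
    ∃ m : ℕ, b ∣ u m ∧ ∃ k : ℕ, (a : ℝ) / b = (k : ℝ) / u m := by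
  have hb : 0 < b := lt_of_le_of_lt (Nat.zero_le a) ha
  set x : AddCircle (1 : ℝ) := (((a : ℝ) / b : ℝ) : AddCircle (1 : ℝ)) with hx
  have hord : addOrderOf x = b := by
    have := AddCircle.addOrderOf_div_of_gcd_eq_one (p := (1 : ℝ)) hb hab
    simpa [hx] using this
  have hfin : IsOfFinAddOrder x := by
    rw [← addOrderOf_pos_iff, hord]; exact hb
  have hSfin : (AddSubgroup.zmultiples x : Set (AddCircle (1 : ℝ))).Finite :=
    hfin.finite_zmultiples
  have hCfin : ((AddSubgroup.zmultiples x : Set (AddCircle (1 : ℝ))) \ {0}).Finite :=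
    hSfin.diff
  have hCclosed : IsClosed ((AddSubgroup.zmultiples x : Set (AddCircle (1 : ℝ))) \ {0}) :=
    hCfin.isClosed
  have hopen : IsOpen ((AddSubgroup.zmultiples x : Set (AddCircle (1 : ℝ))) \ {0})ᶜ :=
    hCclosed.isOpen_compl
  have h0mem : (0 : AddCircle (1 : ℝ)) ∈
      ((AddSubgroup.zmultiples x : Set (AddCircle (1 : ℝ))) \ {0})ᶜ := by
    simp
  have hev := h.eventually (hopen.mem_nhds h0mem)
  obtain ⟨m, hm⟩ := hev.exists
  have hmemS : (u m : ℤ) • x ∈ (AddSubgroup.zmultiples x : Set (AddCircle (1 : ℝ))) :=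
    AddSubgroup.zsmul_mem_zmultiples x _
  have hzero : (u m : ℤ) • x = 0 := by
    by_contra hne
    exact hm ⟨hmemS, hne⟩
  have hdvd' : b ∣ u m := by
    rw [← hord]
    exact addOrderOf_dvd_of_nsmul_eq_zero (by rwa [natCast_zsmul] at hzero)
  refine ⟨m, hdvd', ⟨a * (u m / b), ?_⟩⟩
  obtain ⟨c, hc⟩ := hdvd'
  have hum : 0 < u m := lt_of_lt_of_le Nat.zero_lt_one (le_trans hpos (hu.monotone (Nat.zero_le m)))
  have hcpos : 0 < c := by
    rcases Nat.eq_zero_or_pos c with h0 | h0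
    · exfalso; rw [h0, Nat.mul_zero] at hc; omega
    · exact h0
  rw [hc, Nat.mul_div_cancel_left c hb]
  push_cast
  rw [mul_comm (b : ℝ) c, ← mul_div_mul_left ((a:ℝ)) ((b:ℝ)) (c := (c:ℝ)) (by positivity)]
  ring
end

section
/- For any sequence of integers u = (u_n) and any prime p, the p-torsion part of t_u(T) = {x ∈ T : u_n·x → 0} is the cyclic (or Prüfer) group Z(p^{n_p(u)}) where n_p(u) = liminf_n v_p(u_n) and v_p is the p-adic valuation; i.e., the torsion subgroup of t_u(T) is ⊕_p Z(p^{n_p(u)}). -/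
open Filter Topology

private lemma zsmul_coe_div_eq_zero_iff (m : ℤ) (a q : ℕ) (hq : 0 < q) :
    m • (((a : ℝ) / (q : ℕ) : ℝ) : AddCircle (1 : ℝ)) = 0 ↔ (q : ℤ) ∣ m * a := by
  have hq' : ((q : ℕ) : ℝ) ≠ 0 := Nat.cast_ne_zero.mpr hq.ne'
  rw [← QuotientAddGroup.mk_zsmul, AddCircle.coe_eq_zero_iff]
  constructor
  · rintro ⟨n, hn⟩
    refine ⟨n, ?_⟩
    simp only [zsmul_eq_mul, mul_one] at hn
    have h2 : (m : ℝ) * a = q * n := by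
      field_simp at hn
      linarith
    exact_mod_cast h2
  · rintro ⟨n, hn⟩
    refine ⟨n, ?_⟩
    have h2 : (m : ℝ) * a = q * n := by exact_mod_cast hn
    simp only [zsmul_eq_mul, mul_one]
    field_simp
    linarith

/-- The `p`-torsion part of `t_u(𝕋)` is `Z(p^{n_p(u)})` where
`n_p(u) = liminf_n v_p(u_n)`: an element `x` of `p`-power order belongs to
`t_u(𝕋)` iff `x = a / p^k` for some `k` with `k ≤ n_p(u)` (all `k` are allowed,
i.e. the Prüfer group, when `n_p(u) = ∞`). Consequently the torsion subgroup of
`t_u(𝕋)` is `⊕_p Z(p^{n_p(u)})`. -/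
theorem p_torsion_of_tu (u : ℕ → ℕ) (hpos : ∀ n, 0 < u n)
    (p : ℕ) (hp : p.Prime) (x : AddCircle (1 : ℝ)) :
    (Tendsto (fun n => (u n : ℤ) • x) atTop (𝓝 0) ∧
        ∃ k : ℕ, (p ^ k : ℤ) • x = 0) ↔
      ∃ k a : ℕ,
        (k : ℕ∞) ≤ Filter.liminf (fun n => (padicValNat p (u n) : ℕ∞)) atTop ∧
        x = (((a : ℝ) / (p ^ k : ℕ) : ℝ) : AddCircle (1 : ℝ)) := by
  haveI : Fact (0 < (1 : ℝ)) := ⟨one_pos⟩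
  haveI : Fact p.Prime := ⟨hp⟩
  have hppos : 0 < p := hp.pos
  constructor
  · rintro ⟨htend, K, hK⟩
    have hpK : (0 : ℕ) < p ^ K := pow_pos hppos K
    have hpKR : (0 : ℝ) < ((p ^ K : ℕ) : ℝ) := by exact_mod_cast hpK
    -- every term u n • x is eventually 0
    have hnK : ((p ^ K : ℕ) : ℤ) • x = 0 := by
      have : ((p ^ K : ℕ) : ℤ) = (p ^ K : ℤ) := by push_cast; ring
      rw [this]; exact hK
    have hfinx : IsOfFinAddOrder x :=
      isOfFinAddOrder_iff_nsmul_eq_zero.mpr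
        ⟨p ^ K, hpK, by rw [← natCast_zsmul]; exact hnK⟩
    have hev : ∀ᶠ n in atTop, (u n : ℤ) • x = 0 := by
      have hnorm : Tendsto (fun n => ‖(u n : ℤ) • x‖) atTop (𝓝 0) := by
        simpa using htend.norm
      filter_upwards [hnorm.eventually_lt_const
        (show (0 : ℝ) < (((p ^ K : ℕ) : ℝ))⁻¹ from inv_pos.mpr hpKR)] with n hn
      by_contra h0
      set y := (u n : ℤ) • x with hy
      have hyK : (p ^ K) • y = 0 := by
        rw [← natCast_zsmul, hy, smul_comm, hnK, smul_zero]
      have hfin : IsOfFinAddOrder y :=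
        isOfFinAddOrder_iff_nsmul_eq_zero.mpr ⟨p ^ K, hpK, hyK⟩
      have hdvd : addOrderOf y ∣ p ^ K := addOrderOf_dvd_of_nsmul_eq_zero hyK
      have hle : addOrderOf y ≤ p ^ K := Nat.le_of_dvd hpK hdvd
      have hbig := AddCircle.le_add_order_smul_norm_of_isOfFinAddOrder hfin h0
      rw [nsmul_eq_mul] at hbig
      have hleR : ((addOrderOf y : ℕ) : ℝ) ≤ ((p ^ K : ℕ) : ℝ) := by exact_mod_cast hle
      have hnn : (0 : ℝ) ≤ ‖y‖ := norm_nonneg y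
      have h1 : (1 : ℝ) ≤ ((p ^ K : ℕ) : ℝ) * ‖y‖ :=
        le_trans hbig (by nlinarith)
      nlinarith [mul_lt_mul_of_pos_left hn hpKR, mul_inv_cancel₀ hpKR.ne']
    -- find a representative m0 / p^K for x
    obtain ⟨r, rfl⟩ := QuotientAddGroup.mk_surjective x
    have hK' := hK
    rw [show (p ^ K : ℤ) • (↑r : AddCircle (1 : ℝ)) = ↑((p ^ K : ℤ) • r) from
      (QuotientAddGroup.mk_zsmul _ r _).symm, AddCircle.coe_eq_zero_iff] at hK'
    obtain ⟨n, hn⟩ := hK'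
    simp only [zsmul_eq_mul, mul_one] at hn
    set q : ℤ := n / ((p ^ K : ℕ) : ℤ) with hqdef
    set n' : ℤ := n % ((p ^ K : ℕ) : ℤ) with hn'def
    have hpKZ : (0 : ℤ) < ((p ^ K : ℕ) : ℤ) := by exact_mod_cast hpK
    have hsplit : ((p ^ K : ℕ) : ℤ) * q + n' = n := Int.mul_ediv_add_emod n _
    have hn'0 : 0 ≤ n' := Int.emod_nonneg n hpKZ.ne'
    have hn'lt : n' < ((p ^ K : ℕ) : ℤ) := Int.emod_lt_of_pos n hpKZ
    set m0 : ℕ := n'.toNat with hm0def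
    have hm0 : (m0 : ℤ) = n' := Int.toNat_of_nonneg hn'0
    have hm0lt : m0 < p ^ K := by
      have : (m0 : ℤ) < ((p ^ K : ℕ) : ℤ) := hm0 ▸ hn'lt
      exact_mod_cast this
    have hx : (↑r : AddCircle (1 : ℝ)) = ↑((m0 : ℝ) / ((p ^ K : ℕ) : ℝ)) := by
      have hrq : r = (m0 : ℝ) / ((p ^ K : ℕ) : ℝ) + (q : ℝ) := by
        have hsplitR : ((p ^ K : ℕ) : ℝ) * (q : ℝ) + (m0 : ℝ) = (n : ℝ) := by
          exact_mod_cast (hm0 ▸ hsplit : ((p ^ K : ℕ) : ℤ) * q + (m0 : ℤ) = n)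
        have hne : ((p ^ K : ℕ) : ℝ) ≠ 0 := hpKR.ne'
        field_simp
        push_cast at hn hsplitR ⊢
        nlinarith [hn, hsplitR]
      have hsub : (↑r : AddCircle (1 : ℝ)) - ↑((m0 : ℝ) / ((p ^ K : ℕ) : ℝ)) = 0 := by
        rw [show (↑r : AddCircle (1 : ℝ)) - ↑((m0 : ℝ) / ((p ^ K : ℕ) : ℝ))
            = ↑(r - (m0 : ℝ) / ((p ^ K : ℕ) : ℝ)) from (QuotientAddGroup.mk_sub _ _ _).symm,
          show r - (m0 : ℝ) / ((p ^ K : ℕ) : ℝ) = (q : ℝ) by linarith]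
        exact (AddCircle.coe_eq_zero_iff (1 : ℝ)).mpr ⟨q, by simp⟩
      exact sub_eq_zero.mp hsub
    by_cases hm00 : m0 = 0
    · refine ⟨0, 0, zero_le, ?_⟩
      rw [hx, hm00]
      norm_num
    · set v : ℕ := padicValNat p m0 with hvdef
      have hpv : p ^ v ∣ m0 := pow_padicValNat_dvd
      have hvK : v < K := by
        by_contra hvK
        push_neg at hvK
        have : p ^ K ∣ m0 := dvd_trans (pow_dvd_pow p hvK) hpv
        exact absurd (Nat.le_of_dvd (Nat.pos_of_ne_zero hm00) this) (not_le.mpr hm0lt)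
      set a : ℕ := m0 / p ^ v with hadef
      set k : ℕ := K - v with hkdef
      have hka : m0 = p ^ v * a := (Nat.mul_div_cancel' hpv).symm
      have hpa : ¬ p ∣ a := by
        have := Nat.not_dvd_ordCompl hp hm00
        rwa [Nat.factorization_def m0 hp] at this
      have hKvk : K = v + k := by omega
      have hxa : (↑r : AddCircle (1 : ℝ)) = ↑((a : ℝ) / ((p ^ k : ℕ) : ℝ)) := by
        rw [hx]
        congr 1
        have h1 : ((p ^ v : ℕ) : ℝ) ≠ 0 := by positivity
        rw [show (m0 : ℝ) = ((p ^ v : ℕ) : ℝ) * (a : ℝ) by exact_mod_cast hka,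
          show ((p ^ K : ℕ) : ℝ) = ((p ^ v : ℕ) : ℝ) * ((p ^ k : ℕ) : ℝ) by
            rw [hKvk]; push_cast; ring]
        rw [mul_div_mul_left _ _ h1]
      refine ⟨k, a, ?_, hxa⟩
      refine le_liminf_of_le (by isBoundedDefault) ?_
      filter_upwards [hev] with n hn
      rw [hxa, zsmul_coe_div_eq_zero_iff _ _ _ (pow_pos hppos k)] at hn
      have hn2 : p ^ k ∣ u n * a := by exact_mod_cast hn
      have hcop : (p ^ k).Coprime a :=
        Nat.Coprime.pow_left _ ((Nat.Prime.coprime_iff_not_dvd hp).mpr hpa)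
      have hn3 : p ^ k ∣ u n := hcop.dvd_of_dvd_mul_right hn2
      have hn4 : k ≤ padicValNat p (u n) := by
        rcases (padicValNat_dvd_iff k (u n)).mp hn3 with h | h
        · exact absurd h (hpos n).ne'
        · exact h
      exact_mod_cast Nat.cast_le.mpr hn4
  · rintro ⟨k, a, hk, rfl⟩
    have hev : ∀ᶠ n in atTop, p ^ k ∣ u n := by
      rcases Nat.eq_zero_or_pos k with rfl | hkpos
      · exact Eventually.of_forall fun n => by simp
      · have h1 : ((k - 1 : ℕ) : ℕ∞) < liminf (fun n => (padicValNat p (u n) : ℕ∞)) atTop :=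
          lt_of_lt_of_le (by exact_mod_cast Nat.sub_lt hkpos one_pos) hk
        filter_upwards [eventually_lt_of_lt_liminf h1] with n hn
        have h2 : k - 1 < padicValNat p (u n) := by exact_mod_cast hn
        exact dvd_trans (pow_dvd_pow p (by omega)) pow_padicValNat_dvd
    constructor
    · apply Tendsto.congr' _ tendsto_const_nhds
      filter_upwards [hev] with n hn
      symm
      rw [zsmul_coe_div_eq_zero_iff _ _ _ (pow_pos hppos k)]
      exact Dvd.dvd.mul_right (by exact_mod_cast hn) _
    · refine ⟨k, ?_⟩
      have : ((p ^ k : ℕ) : ℤ) • (((a : ℝ) / ((p ^ k : ℕ) : ℝ) : ℝ) : AddCircle (1 : ℝ)) = 0 := by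
        rw [zsmul_coe_div_eq_zero_iff _ _ _ (pow_pos hppos k)]
        exact Dvd.intro _ rfl
      rw [show (p ^ k : ℤ) = ((p ^ k : ℕ) : ℤ) by push_cast; ring]
      exact this
end

section
/- Let u be an a-sequence. The torsion subgroup t(t_u(T)) is dense in t_u(T) with respect to the metric ρ_u(x,y) = sup{d(x,y), sup_n d(u_n·x, u_n·y)}, where d is the quotient metric on T. -/
open Filter Topology

lemma norm_coe_le_abs (t : ℝ) : ‖(t : AddCircle (1 : ℝ))‖ ≤ |t| := by
  rw [show ‖(t : AddCircle (1 : ℝ))‖ = |t - round t| from UnitAddCircle.norm_eq]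
  simpa using round_le t 0

lemma dvd_of_le_chain (u : ℕ → ℕ) (hdvd : ∀ n, u n ∣ u (n + 1)) :
    ∀ m n, m ≤ n → u m ∣ u n := by
  intro m n h
  induction n, h using Nat.le_induction with
  | base => exact dvd_rfl
  | succ n hmn ih => exact ih.trans (hdvd n)

/-- Proposition D: for an a-sequence `u`, the torsion subgroup `t(t_u(𝕋))` is
dense in `t_u(𝕋)` with respect to the metric
`ρ_u(x,y) = sup{d(x,y), sup_n d(u_n x, u_n y)}`. -/
theorem torsion_dense_in_tu (u : ℕ → ℕ) (hu : StrictMono u)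
    (hpos : 1 ≤ u 0) (hdvd : ∀ n, u n ∣ u (n + 1))
    (x : AddCircle (1 : ℝ))
    (hx : Tendsto (fun n => (u n : ℤ) • x) atTop (𝓝 0))
    (ε : ℝ) (hε : 0 < ε) :
    ∃ y : AddCircle (1 : ℝ),
      Tendsto (fun n => (u n : ℤ) • y) atTop (𝓝 0) ∧
      IsOfFinAddOrder y ∧
      max (dist x y) (⨆ n : ℕ, dist ((u n : ℤ) • x) ((u n : ℤ) • y)) < ε := by
  have hε2 : 0 < ε / 2 := half_pos hε
  obtain ⟨N, hN⟩ := (Metric.tendsto_atTop.mp hx) (ε / 2) hε2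
  obtain ⟨r, rfl⟩ := QuotientAddGroup.mk_surjective x
  set p : ℕ := u N with hp_def
  have hp1 : 1 ≤ p := hpos.trans (hu.monotone (Nat.zero_le N))
  have hp0 : (0 : ℝ) < (p : ℝ) := by exact_mod_cast hp1
  set a : ℤ := round ((p : ℝ) * r) with ha_def
  set y : AddCircle (1 : ℝ) := ((a / p : ℝ) : AddCircle (1 : ℝ)) with hy_def
  -- key: coercion of zsmul
  have hsm : ∀ (n : ℤ) (t : ℝ), (n : ℤ) • ((t : ℝ) : AddCircle (1 : ℝ)) = ((n * t : ℝ) : AddCircle (1 : ℝ)) := by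
    intro n t
    rw [← AddCircle.coe_zsmul, zsmul_eq_mul]
  have hd : |(p : ℝ) * r - a| < ε / 2 := by
    have h := hN N le_rfl
    rw [dist_eq_norm, sub_zero, hsm] at h
    rw [show (((u N : ℤ) : ℝ) * r) = (p : ℝ) * r by push_cast; ring] at h
    rwa [show ‖(((p : ℝ) * r : ℝ) : AddCircle (1 : ℝ))‖ = |(p : ℝ) * r - round ((p : ℝ) * r)| from
      UnitAddCircle.norm_eq] at h
  -- y is killed by u n for n ≥ N
  have hyz : ∀ n, N ≤ n → (u n : ℤ) • y = 0 := by
    intro n hn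
    obtain ⟨k, hk⟩ := dvd_of_le_chain u hdvd N n hn
    rw [hy_def, hsm]
    rw [AddCircle.coe_eq_zero_iff]
    refine ⟨(k : ℤ) * a, ?_⟩
    have h1 : (((u n : ℤ)) : ℝ) = (p : ℝ) * k := by push_cast [hk]; ring
    rw [zsmul_eq_mul, h1]
    push_cast
    field_simp
  have hbound : ∀ n, dist ((u n : ℤ) • ((r : ℝ) : AddCircle (1 : ℝ))) ((u n : ℤ) • y) < ε / 2 := by
    intro n
    rcases le_or_gt n N with hn | hn
    · have hun : (u n : ℝ) ≤ (p : ℝ) := by exact_mod_cast hu.monotone hn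
      have hun0 : (0 : ℝ) < (u n : ℝ) := by
        exact_mod_cast (hpos.trans (hu.monotone (Nat.zero_le n)))
      rw [hy_def, hsm, hsm, dist_eq_norm, ← AddCircle.coe_sub]
      calc ‖(((u n : ℝ) * r - (u n : ℝ) * (a / p) : ℝ) : AddCircle (1 : ℝ))‖
          ≤ |(u n : ℝ) * r - (u n : ℝ) * (a / p)| := norm_coe_le_abs _
        _ = ((u n : ℝ) / p) * |(p : ℝ) * r - a| := by
            rw [show (u n : ℝ) * r - (u n : ℝ) * (a / p) = ((u n : ℝ) / p) * ((p : ℝ) * r - a) by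
              field_simp]
            rw [abs_mul, abs_of_pos (div_pos hun0 hp0)]
        _ ≤ 1 * |(p : ℝ) * r - a| := by
            apply mul_le_mul_of_nonneg_right _ (abs_nonneg _)
            exact (div_le_one hp0).mpr hun
        _ = |(p : ℝ) * r - a| := one_mul _
        _ < ε / 2 := hd
    · rw [hyz n hn.le]
      exact hN n hn.le
  refine ⟨y, ?_, ?_, ?_⟩
  · refine tendsto_const_nhds.congr' ?_
    filter_upwards [eventually_ge_atTop N] with n hn
    exact (hyz n hn).symm
  · rw [isOfFinAddOrder_iff_nsmul_eq_zero]
    refine ⟨p, lt_of_lt_of_le one_pos hp1, ?_⟩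
    have : (p : ℕ) • y = ((p : ℤ) : ℤ) • y := by simp
    rw [this, hy_def, hsm, AddCircle.coe_eq_zero_iff]
    refine ⟨a, ?_⟩
    push_cast
    field_simp
    simp
  · have hdist : dist ((r : ℝ) : AddCircle (1 : ℝ)) y < ε / 2 := by
      rw [hy_def, dist_eq_norm, ← AddCircle.coe_sub]
      calc ‖((r - a / p : ℝ) : AddCircle (1 : ℝ))‖ ≤ |r - a / p| := norm_coe_le_abs _
        _ = |(p : ℝ) * r - a| / p := by
            rw [show r - (a : ℝ) / p = ((p : ℝ) * r - a) / p by field_simp]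
            rw [abs_div, abs_of_pos hp0]
        _ ≤ |(p : ℝ) * r - a| := by
            apply div_le_self (abs_nonneg _)
            exact_mod_cast hp1
        _ < ε / 2 := hd
    apply max_lt (hdist.trans (half_lt_self hε))
    calc (⨆ n : ℕ, dist ((u n : ℤ) • ((r : ℝ) : AddCircle (1 : ℝ))) ((u n : ℤ) • y))
        ≤ ε / 2 := ciSup_le fun n => (hbound n).le
      _ < ε := half_lt_self hε
end

section
/- Let X be a compact metrizable abelian group with metric δ and v = (v_n) a sequence of continuous characters X → T. Then ρ_v(x,y) = sup{δ(x,y), sup_n d(v_n(x), v_n(y))} defines a metric on X whose topology τ_v is a group topology finer than the original topology, and the metric ρ_v is complete. -/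
open Filter Topology

/-- `ρ_v(x,y) = sup{δ(x,y), sup_n d(v_n x, v_n y)}`. -/
noncomputable def rhoV {X : Type*} [MetricSpace X]
    (v : ℕ → X → AddCircle (1 : ℝ)) (x y : X) : ℝ :=
  max (dist x y) (⨆ n : ℕ, dist (v n x) (v n y))

/-- For a compact metrizable abelian group `X` (with translation-invariant
compatible metric) and a sequence of continuous characters `v_n : X → 𝕋`, the
function `ρ_v` is a metric on `X`, its topology is a group topology finer than
the original one, and `ρ_v` is complete. -/
theorem rhoV_metric_group_complete {X : Type*} [AddCommGroup X] [MetricSpace X]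
    [CompactSpace X] [IsTopologicalAddGroup X]
    (hinv : ∀ a x y : X, dist (a + x) (a + y) = dist x y)
    (v : ℕ → X → AddCircle (1 : ℝ))
    (hcont : ∀ n, Continuous (v n))
    (hadd : ∀ n, ∀ x y : X, v n (x + y) = v n x + v n y) :
    -- `ρ_v` is a metric
    (∀ x : X, rhoV v x x = 0) ∧
    (∀ x y : X, rhoV v x y = rhoV v y x) ∧
    (∀ x y z : X, rhoV v x z ≤ rhoV v x y + rhoV v y z) ∧
    (∀ x y : X, rhoV v x y = 0 → x = y) ∧
    -- the topology `τ_v` of `ρ_v` is finer than the original topology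
    (∀ s : Set X, IsOpen s → ∀ x ∈ s, ∃ ε > 0, ∀ y, rhoV v x y < ε → y ∈ s) ∧
    -- `τ_v` is a group topology (invariant metric, addition continuous at 0)
    (∀ a x y : X, rhoV v (a + x) (a + y) = rhoV v x y) ∧
    (∀ x y : X, rhoV v (-x) (-y) = rhoV v x y) ∧
    (∀ ε > (0 : ℝ), ∃ δ > (0 : ℝ), ∀ x y : X,
        rhoV v x 0 < δ → rhoV v y 0 < δ → rhoV v (x + y) 0 < ε) ∧
    -- `ρ_v` is complete
    (∀ s : ℕ → X,
        (∀ ε > (0 : ℝ), ∃ N, ∀ m ≥ N, ∀ n ≥ N, rhoV v (s m) (s n) < ε) →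
        ∃ x : X, Tendsto (fun n => rhoV v (s n) x) atTop (𝓝 0)) := by
  -- a uniform bound on distances in the circle
  obtain ⟨C, hC⟩ : ∃ C : ℝ, ∀ a b : AddCircle (1 : ℝ), dist a b ≤ C := by
    obtain ⟨C, hC⟩ := Metric.isBounded_iff.mp
      (isCompact_univ : IsCompact (Set.univ : Set (AddCircle (1 : ℝ)))).isBounded
    exact ⟨C, fun a b => hC (Set.mem_univ a) (Set.mem_univ b)⟩
  have hBdd : ∀ x y : X, BddAbove (Set.range fun n => dist (v n x) (v n y)) := by
    intro x y
    exact ⟨C, by rintro r ⟨n, rfl⟩; exact hC _ _⟩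
  have hle1 : ∀ x y : X, dist x y ≤ rhoV v x y := fun x y => le_max_left _ _
  have hle2 : ∀ (n : ℕ) (x y : X), dist (v n x) (v n y) ≤ rhoV v x y := fun n x y =>
    (le_ciSup (hBdd x y) n).trans (le_max_right _ _)
  have hnonneg : ∀ x y : X, 0 ≤ rhoV v x y := fun x y => dist_nonneg.trans (hle1 x y)
  have hself : ∀ x : X, rhoV v x x = 0 := by
    intro x
    simp [rhoV, dist_self, ciSup_const]
  have hsymm : ∀ x y : X, rhoV v x y = rhoV v y x := by
    intro x y
    simp [rhoV, dist_comm]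
  have htri : ∀ x y z : X, rhoV v x z ≤ rhoV v x y + rhoV v y z := by
    intro x y z
    refine max_le ((dist_triangle x y z).trans (add_le_add (hle1 x y) (hle1 y z))) ?_
    refine ciSup_le fun n => ?_
    exact (dist_triangle (v n x) (v n y) (v n z)).trans
      (add_le_add (hle2 n x y) (hle2 n y z))
  have hzero0 : ∀ n, v n 0 = 0 := by
    intro n
    have := hadd n 0 0
    rw [add_zero] at this
    exact left_eq_add.mp this
  have hneg : ∀ n (x : X), v n (-x) = - v n x := by
    intro n x
    have := hadd n x (-x)
    rw [add_neg_cancel, hzero0] at this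
    exact eq_neg_of_add_eq_zero_right this.symm
  have hinv' : ∀ a x y : X, rhoV v (a + x) (a + y) = rhoV v x y := by
    intro a x y
    unfold rhoV
    rw [hinv a x y]
    congr 1
    refine iSup_congr fun n => ?_
    rw [hadd n a x, hadd n a y, dist_add_left]
  constructor
  · exact hself
  refine ⟨hsymm, htri, ?_, ?_, hinv', ?_, ?_, ?_⟩
  · intro x y h
    have : dist x y ≤ 0 := h ▸ hle1 x y
    exact dist_le_zero.mp this
  · intro s hs x hx
    obtain ⟨ε, hε, hball⟩ := Metric.isOpen_iff.mp hs x hx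
    exact ⟨ε, hε, fun y hy => hball (by rw [Metric.mem_ball, dist_comm]; exact lt_of_le_of_lt (hle1 x y) hy)⟩
  · intro x y
    have hdneg : dist (-x) (-y) = dist x y := by
      have h := hinv (x + y) (-x) (-y)
      rw [add_neg_cancel_right] at h
      rw [show x + y + -x = y by abel] at h
      exact h.symm.trans (dist_comm y x)
    unfold rhoV
    rw [hdneg]
    congr 1
    refine iSup_congr fun n => ?_
    rw [hneg, hneg, dist_neg_neg]
  · intro ε hε
    refine ⟨ε / 2, by linarith, fun x y hx hy => ?_⟩
    have h1 : rhoV v (x + y) y = rhoV v x 0 := by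
      have := hinv' y x 0
      rwa [add_zero, add_comm] at this
    calc rhoV v (x + y) 0 ≤ rhoV v (x + y) y + rhoV v y 0 := htri _ _ _
      _ = rhoV v x 0 + rhoV v y 0 := by rw [h1]
      _ < ε := by linarith
  · intro s hcauchy
    have hcs : CauchySeq s := by
      rw [Metric.cauchySeq_iff]
      intro ε hε
      obtain ⟨N, hN⟩ := hcauchy ε hε
      exact ⟨N, fun m hm n hn => lt_of_le_of_lt (hle1 _ _) (hN m hm n hn)⟩
    obtain ⟨x, hx⟩ := cauchySeq_tendsto_of_complete hcs
    refine ⟨x, ?_⟩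
    rw [Metric.tendsto_atTop]
    intro ε hε
    obtain ⟨N, hN⟩ := hcauchy (ε / 2) (by linarith)
    refine ⟨N, fun n hn => ?_⟩
    have key : rhoV v (s n) x ≤ ε / 2 := by
      refine max_le ?_ (ciSup_le fun k => ?_)
      · -- dist (s n) x = lim_m dist (s n) (s m)
        have h1 : Tendsto (fun m => dist (s n) (s m)) atTop (𝓝 (dist (s n) x)) :=
          (continuous_dist.comp (continuous_const.prodMk continuous_id)).continuousAt.tendsto.comp hx
        refine le_of_tendsto h1 ?_
        filter_upwards [eventually_ge_atTop N] with m hm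
        exact le_of_lt (lt_of_le_of_lt (hle1 _ _) (hN n hn m hm))
      · have h2 : Tendsto (fun m => dist (v k (s n)) (v k (s m))) atTop
            (𝓝 (dist (v k (s n)) (v k x))) := by
          have : Tendsto (fun m => v k (s m)) atTop (𝓝 (v k x)) :=
            ((hcont k).continuousAt.tendsto).comp hx
          exact (tendsto_const_nhds.dist this)
        refine le_of_tendsto h2 ?_
        filter_upwards [eventually_ge_atTop N] with m hm
        exact le_of_lt (lt_of_le_of_lt (hle2 k _ _) (hN n hn m hm))
    rw [Real.dist_eq, sub_zero, abs_of_nonneg (hnonneg _ _)]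
    linarith
end

section
/- Let X be a compact metrizable abelian group and v = (v_n) a sequence of characters of X. The characterized subgroup s_v(X) = {x ∈ X : v_n(x) → 0 in T} with the restriction of the topology τ_v (induced by ρ_v(x,y) = sup{δ(x,y), sup_n d(v_n(x),v_n(y))}) is a Polish group; in particular every characterized subgroup of X is Polishable. -/
open Filter Topology

/-- Gabriyelyan: the characterized subgroup `s_v(X) = {x : v_n(x) → 0}`,
endowed with (the restriction of) the topology of `ρ_v`, is a Polish group:
it is separable and `ρ_v`-complete within `s_v(X)`. In particular every
characterized subgroup of a compact metrizable abelian group is Polishable. -/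
theorem characterized_subgroup_polishable {X : Type*} [AddCommGroup X]
    [MetricSpace X] [CompactSpace X] [IsTopologicalAddGroup X]
    (hinv : ∀ a x y : X, dist (a + x) (a + y) = dist x y)
    (v : ℕ → X → AddCircle (1 : ℝ))
    (hcont : ∀ n, Continuous (v n))
    (hadd : ∀ n, ∀ x y : X, v n (x + y) = v n x + v n y) :
    -- separability of `(s_v(X), ρ_v)`
    (∃ D : Set X, D.Countable ∧
      (∀ d ∈ D, Tendsto (fun n => v n d) atTop (𝓝 0)) ∧
      ∀ x : X, Tendsto (fun n => v n x) atTop (𝓝 0) →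
        ∀ ε > (0 : ℝ), ∃ d ∈ D, rhoV v x d < ε) ∧
    -- completeness of `(s_v(X), ρ_v)`
    (∀ s : ℕ → X, (∀ n, Tendsto (fun m => v m (s n)) atTop (𝓝 0)) →
      (∀ ε > (0 : ℝ), ∃ N, ∀ m ≥ N, ∀ n ≥ N, rhoV v (s m) (s n) < ε) →
      ∃ x : X, Tendsto (fun n => v n x) atTop (𝓝 0) ∧
        Tendsto (fun n => rhoV v (s n) x) atTop (𝓝 0)) := by
  haveI : Fact ((0:ℝ) < 1) := ⟨one_pos⟩
  -- a uniform bound for distances in the circle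
  obtain ⟨C, hC⟩ : ∃ C : ℝ, ∀ a b : AddCircle (1:ℝ), dist a b ≤ C := by
    have hb := (isCompact_univ : IsCompact (Set.univ : Set (AddCircle (1:ℝ)))).isBounded
    rcases Metric.isBounded_iff.1 hb with ⟨C, hC⟩
    exact ⟨C, fun a b => hC (Set.mem_univ a) (Set.mem_univ b)⟩
  have hbdd : ∀ x y : X, BddAbove (Set.range fun n => dist (v n x) (v n y)) := by
    intro x y
    refine ⟨C, ?_⟩
    rintro t ⟨n, rfl⟩
    exact hC _ _
  have hle : ∀ x y : X, ∀ n, dist (v n x) (v n y) ≤ rhoV v x y := fun x y n =>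
    le_trans (le_ciSup (hbdd x y) n) (le_max_right _ _)
  have hdistle : ∀ x y : X, dist x y ≤ rhoV v x y := fun x y => le_max_left _ _
  constructor
  · -- separability
    have hsepA : ∀ A : Set X, ∃ D, D ⊆ A ∧ D.Countable ∧ A ⊆ closure D := fun A =>
      ((isCompact_univ.isSeparable).mono (Set.subset_univ A)).exists_countable_dense_subset
    choose DD hDsub hDcount hDdense using fun p : ℕ × ℕ =>
      hsepA ({x | ∀ n ≥ p.1, dist (v n x) 0 ≤ 1/((p.2 : ℝ)+1)} ∩
        {x | Tendsto (fun n => v n x) atTop (𝓝 0)})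
    refine ⟨⋃ p : ℕ × ℕ, DD p, Set.countable_iUnion (fun p => hDcount p), ?_, ?_⟩
    · rintro d hd
      rcases Set.mem_iUnion.1 hd with ⟨p, hp⟩
      exact ((hDsub p) hp).2
    · intro x hx ε hε
      obtain ⟨k, hk⟩ := exists_nat_one_div_lt (show (0:ℝ) < ε/4 by linarith)
      obtain ⟨N, hN⟩ := (Metric.tendsto_atTop.1 hx) (1/((k : ℝ)+1)) (by positivity)
      have hxA : x ∈ ({y | ∀ n ≥ N, dist (v n y) 0 ≤ 1/((k : ℝ)+1)} ∩
          {y | Tendsto (fun n => v n y) atTop (𝓝 0)}) :=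
        ⟨fun n hn => (hN n hn).le, hx⟩
      set F : X → (Fin N → AddCircle (1:ℝ)) := fun y i => v i y with hF
      have hFc : Continuous F := continuous_pi fun i => hcont i
      obtain ⟨η, hη0, hηc⟩ :=
        Metric.continuousAt_iff.1 (hFc.continuousAt (x := x)) (ε/2) (by linarith)
      have hxcl := hDdense (N, k) hxA
      obtain ⟨d, hd, hdist⟩ :=
        Metric.mem_closure_iff.1 hxcl (min η (ε/2)) (lt_min hη0 (by linarith))
      have hdA := hDsub (N, k) hd
      refine ⟨d, Set.mem_iUnion.2 ⟨(N, k), hd⟩, ?_⟩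
      have h1 : dist x d < ε/2 := lt_of_lt_of_le hdist (min_le_right _ _)
      have h2 : ∀ n, dist (v n x) (v n d) ≤ ε/2 := by
        intro n
        by_cases hn : n < N
        · have hc : dist (F d) (F x) < ε/2 := by
            apply hηc
            rw [dist_comm]
            exact lt_of_lt_of_le hdist (min_le_left _ _)
          have hcoord : dist (v n d) (v n x) ≤ dist (F d) (F x) :=
            dist_le_pi_dist (F d) (F x) ⟨n, hn⟩
          rw [dist_comm]
          exact le_of_lt (lt_of_le_of_lt hcoord hc)
        · push_neg at hn
          calc dist (v n x) (v n d)
              ≤ dist (v n x) 0 + dist 0 (v n d) := dist_triangle _ _ _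
            _ ≤ 1/((k : ℝ)+1) + 1/((k : ℝ)+1) := by
                refine add_le_add (hxA.1 n hn) ?_
                rw [dist_comm]
                exact hdA.1 n hn
            _ ≤ ε/2 := by linarith
      have hsup : (⨆ n, dist (v n x) (v n d)) ≤ ε/2 := ciSup_le h2
      exact max_lt (by linarith) (lt_of_le_of_lt hsup (by linarith))
  · -- completeness
    intro s hs hCau
    have hcauchy : CauchySeq s := by
      rw [Metric.cauchySeq_iff]
      intro ε hε
      obtain ⟨N, hN⟩ := hCau ε hε
      exact ⟨N, fun m hm n hn => lt_of_le_of_lt (hdistle _ _) (hN m hm n hn)⟩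
    obtain ⟨x, hx⟩ := cauchySeq_tendsto_of_complete hcauchy
    have key : ∀ ε > (0:ℝ), ∃ N, ∀ m ≥ N, rhoV v (s m) x ≤ ε := by
      intro ε hε
      obtain ⟨N, hN⟩ := hCau ε hε
      refine ⟨N, fun m hm => ?_⟩
      have h1 : dist (s m) x ≤ ε := by
        have hT : Tendsto (fun n => dist (s m) (s n)) atTop (𝓝 (dist (s m) x)) :=
          tendsto_const_nhds.dist hx
        refine le_of_tendsto hT (eventually_atTop.2 ⟨N, fun n hn => ?_⟩)
        exact (lt_of_le_of_lt (hdistle _ _) (hN m hm n hn)).le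
      have h2 : ∀ j, dist (v j (s m)) (v j x) ≤ ε := by
        intro j
        have hvx : Tendsto (fun n => v j (s n)) atTop (𝓝 (v j x)) :=
          ((hcont j).tendsto x).comp hx
        have hT : Tendsto (fun n => dist (v j (s m)) (v j (s n))) atTop
            (𝓝 (dist (v j (s m)) (v j x))) := tendsto_const_nhds.dist hvx
        refine le_of_tendsto hT (eventually_atTop.2 ⟨N, fun n hn => ?_⟩)
        exact (lt_of_le_of_lt (hle (s m) (s n) j) (hN m hm n hn)).le
      exact max_le h1 (ciSup_le h2)
    refine ⟨x, ?_, ?_⟩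
    · rw [Metric.tendsto_atTop]
      intro ε hε
      obtain ⟨N, hN⟩ := key (ε/3) (by linarith)
      have h1 := hN N le_rfl
      obtain ⟨K, hK⟩ := Metric.tendsto_atTop.1 (hs N) (ε/3) (by linarith)
      refine ⟨K, fun n hn => ?_⟩
      calc dist (v n x) 0
          ≤ dist (v n x) (v n (s N)) + dist (v n (s N)) 0 := dist_triangle _ _ _
        _ < ε/3 + ε/3 := by
            refine add_lt_add_of_le_of_lt ?_ (hK n hn)
            rw [dist_comm]
            exact le_trans (hle (s N) x n) h1
        _ < ε := by linarith
    · rw [Metric.tendsto_atTop]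
      intro ε hε
      obtain ⟨N, hN⟩ := key (ε/2) (by linarith)
      refine ⟨N, fun n hn => ?_⟩
      have h0 : (0:ℝ) ≤ rhoV v (s n) x := le_trans dist_nonneg (hdistle _ _)
      rw [Real.dist_eq, sub_zero, abs_of_nonneg h0]
      exact lt_of_le_of_lt (hN n hn) (by linarith)
end

section
/- Let X be a compact metrizable abelian group with topology τ and metric δ, and v a sequence of characters. The family {W_n : n ∈ N}, where W_n is the τ-closure of the ρ_v-ball of radius 1/n around 0, satisfies W_{2n} + W_{2n} ⊆ W_n for all n, hence generates a metrizable group topology τ_v* with τ ⊆ τ_v* ⊆ τ_v. -/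
open Filter Topology

/-- `W_n`: the `τ`-closure of the `ρ_v`-ball of radius `1/n` around `0`. -/
noncomputable def Wv {X : Type*} [MetricSpace X] [Zero X]
    (v : ℕ → X → AddCircle (1 : ℝ)) (n : ℕ) : Set X :=
  closure {x : X | rhoV v x 0 < 1 / n}

lemma addCircle_bounded : ∃ C : ℝ, ∀ a b : AddCircle (1 : ℝ), dist a b ≤ C := by
  obtain ⟨C, hC⟩ := (isCompact_univ (X := AddCircle (1 : ℝ))).isBounded.subset_closedBall 0
  exact ⟨C + C, fun a b => (dist_triangle a 0 b).trans (by
    have ha := hC (Set.mem_univ a); have hb := hC (Set.mem_univ b)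
    simp only [Metric.mem_closedBall] at ha hb
    have : dist 0 b = dist b 0 := dist_comm _ _
    linarith)⟩

lemma bddAbove_rhoV {X : Type*} [MetricSpace X]
    (v : ℕ → X → AddCircle (1 : ℝ)) (x y : X) :
    BddAbove (Set.range fun n : ℕ => dist (v n x) (v n y)) := by
  obtain ⟨C, hC⟩ := addCircle_bounded
  exact ⟨C, by rintro r ⟨n, rfl⟩; exact hC _ _⟩

lemma rhoV_subadd {X : Type*} [AddCommGroup X] [MetricSpace X]
    (hinv : ∀ a x y : X, dist (a + x) (a + y) = dist x y)
    (v : ℕ → X → AddCircle (1 : ℝ))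
    (hadd : ∀ n, ∀ x y : X, v n (x + y) = v n x + v n y)
    (x y : X) : rhoV v (x + y) 0 ≤ rhoV v x 0 + rhoV v y 0 := by
  have hv0 : ∀ n, v n 0 = 0 := by
    intro n
    have := hadd n 0 0
    rw [add_zero] at this
    exact (left_eq_add.mp this)
  unfold rhoV
  apply max_le
  · calc dist (x + y) 0 ≤ dist (x + y) y + dist y 0 := dist_triangle _ _ _
      _ = dist x 0 + dist y 0 := by
          congr 1
          have : dist (y + x) (y + 0) = dist x 0 := hinv y x 0
          rw [add_comm x y]
          simpa using this
      _ ≤ rhoV v x 0 + rhoV v y 0 := add_le_add (le_max_left _ _) (le_max_left _ _)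
  · apply ciSup_le
    intro n
    have h1 : dist (v n (x + y)) (v n 0) ≤ dist (v n x) (v n 0) + dist (v n y) (v n 0) := by
      rw [hadd, hv0]
      calc dist (v n x + v n y) 0 ≤ dist (v n x + v n y) (v n y) + dist (v n y) 0 :=
            dist_triangle _ _ _
        _ = dist (v n x) 0 + dist (v n y) 0 := by
            have h := dist_add_right (v n x) (0 : AddCircle (1 : ℝ)) (v n y)
            rw [zero_add] at h
            rw [h]
    refine h1.trans (add_le_add ?_ ?_)
    · exact (le_ciSup (bddAbove_rhoV v x 0) n).trans (le_max_right _ _)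
    · exact (le_ciSup (bddAbove_rhoV v y 0) n).trans (le_max_right _ _)

/-- The family `{W_n}` satisfies `W_{2n} + W_{2n} ⊆ W_n`, so it generates a
(metrizable) group topology `τ_v*` with `τ ⊆ τ_v* ⊆ τ_v`: every `τ`-open set
is `τ_v*`-open, and every basic `τ_v*`-neighborhood of `0` contains a
`ρ_v`-ball. -/
theorem test_topology_basic {X : Type*} [AddCommGroup X]
    [MetricSpace X] [CompactSpace X] [IsTopologicalAddGroup X]
    (hinv : ∀ a x y : X, dist (a + x) (a + y) = dist x y)
    (v : ℕ → X → AddCircle (1 : ℝ))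
    (hcont : ∀ n, Continuous (v n))
    (hadd : ∀ n, ∀ x y : X, v n (x + y) = v n x + v n y) :
    -- `W_{2n} + W_{2n} ⊆ W_n`
    (∀ n : ℕ, 0 < n → ∀ x y : X,
        x ∈ Wv v (2 * n) → y ∈ Wv v (2 * n) → x + y ∈ Wv v n) ∧
    -- `τ ⊆ τ_v*`
    (∀ s : Set X, IsOpen s → ∀ x ∈ s,
        ∃ n : ℕ, 0 < n ∧ (fun y => x + y) '' Wv v n ⊆ s) ∧
    -- `τ_v* ⊆ τ_v`
    (∀ n : ℕ, 0 < n → ∃ m : ℕ, 0 < m ∧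
        {x : X | rhoV v x 0 < 1 / m} ⊆ Wv v n) := by
  refine ⟨?_, ?_, ?_⟩
  · intro n hn x y hx hy
    set A : Set X := {x : X | rhoV v x 0 < 1 / (2 * n : ℕ)} with hA
    have key : (fun p : X × X => p.1 + p.2) '' (A ×ˢ A) ⊆ {x : X | rhoV v x 0 < 1 / n} := by
      rintro _ ⟨⟨a, b⟩, ⟨ha, hb⟩, rfl⟩
      simp only [Set.mem_setOf_eq] at *
      have := rhoV_subadd hinv v hadd a b
      have hsum : (1 : ℝ) / (2 * n : ℕ) + 1 / (2 * n : ℕ) = 1 / n := by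
        have hn' : (n : ℝ) ≠ 0 := Nat.cast_ne_zero.mpr hn.ne'
        push_cast
        rw [← add_div, show ((1:ℝ) + 1) = 2 * 1 from by norm_num,
          mul_div_mul_left _ _ (two_ne_zero)]
      calc rhoV v (a + b) 0 ≤ rhoV v a 0 + rhoV v b 0 := this
        _ < 1 / (2 * n : ℕ) + 1 / (2 * n : ℕ) := add_lt_add ha hb
        _ = 1 / n := hsum
    have hmem : (x, y) ∈ closure (A ×ˢ A) := by
      rw [closure_prod_eq]; exact ⟨hx, hy⟩
    have : x + y ∈ (fun p : X × X => p.1 + p.2) '' closure (A ×ˢ A) :=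
      ⟨(x, y), hmem, rfl⟩
    have h2 : x + y ∈ closure ((fun p : X × X => p.1 + p.2) '' (A ×ˢ A)) :=
      image_closure_subset_closure_image continuous_add this
    exact closure_mono key h2
  · intro s hs x hx
    obtain ⟨ε, hε, hball⟩ := Metric.isOpen_iff.mp hs x hx
    obtain ⟨n, hnε⟩ := exists_nat_one_div_lt hε
    refine ⟨n + 1, Nat.succ_pos n, ?_⟩
    rintro _ ⟨y, hy, rfl⟩
    apply hball
    have h1 : Wv v (n + 1) ⊆ Metric.closedBall (0 : X) (1 / (n + 1 : ℕ)) := by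
      refine (closure_mono ?_).trans Metric.closure_ball_subset_closedBall
      intro z hz
      simp only [Set.mem_setOf_eq] at hz
      rw [Metric.mem_ball]
      exact lt_of_le_of_lt (le_max_left _ _) hz
    have hy' := h1 hy
    rw [Metric.mem_closedBall] at hy'
    rw [Metric.mem_ball]
    have : dist (x + y) x = dist y 0 := by
      have := hinv x y 0
      simpa using this
    rw [this]
    calc dist y 0 ≤ 1 / (n + 1 : ℕ) := hy'
      _ < ε := by push_cast at hnε ⊢; linarith
  · intro n hn
    exact ⟨n, hn, subset_closure⟩
end

section
/- Let u be an a-sequence with bounded ratio sequence, q = limsup_n q_n, and suppose the set S* = {m : q_m = q} has bounded gaps between consecutive elements. Then the ball {x ∈ T : ρ_u(x,0) < 1/q} has cardinality continuum, where ρ_u(x,0) = sup{‖x‖, sup_n ‖u_n x‖}. -/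
open Filter Topology

private lemma geom16_summable {f : ℕ → ℝ} (h0 : ∀ k, 0 ≤ f k)
    (hh : ∀ k, 16 * f (k + 1) ≤ f k) : Summable f := by
  have hle : ∀ k, f k ≤ f 0 * (1 / 16 : ℝ) ^ k := by
    intro k
    induction k with
    | zero => simp
    | succ n ih =>
      have h := hh n
      rw [pow_succ]
      nlinarith
  exact Summable.of_nonneg_of_le h0 hle
    ((summable_geometric_of_lt_one (by norm_num) (by norm_num)).mul_left _)

private lemma geom16_tsum_le {f : ℕ → ℝ} (h0 : ∀ k, 0 ≤ f k)
    (hh : ∀ k, 16 * f (k + 1) ≤ f k) : (∑' k, f k) ≤ 2 * f 0 := by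
  have hle : ∀ k, f k ≤ f 0 * (1 / 16 : ℝ) ^ k := by
    intro k
    induction k with
    | zero => simp
    | succ n ih =>
      have h := hh n
      rw [pow_succ]
      nlinarith
  have hs : Summable (fun k : ℕ => f 0 * (1 / 16 : ℝ) ^ k) :=
    (summable_geometric_of_lt_one (by norm_num) (by norm_num)).mul_left _
  have h1 := Summable.tsum_le_tsum hle (geom16_summable h0 hh) hs
  rw [tsum_mul_left, tsum_geometric_of_lt_one (by norm_num) (by norm_num)] at h1
  have h2 : ((1 : ℝ) - 1 / 16)⁻¹ = 16 / 15 := by norm_num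
  rw [h2] at h1
  nlinarith [h0 0]

/-- index selection -/
private def Pf (M : ℕ → ℕ) (ε : ℕ → Bool) (k : ℕ) : ℕ :=
  M (5 * k + if ε k then 1 else 0)

private noncomputable def Aseq (u M : ℕ → ℕ) (ε : ℕ → Bool) (k : ℕ) : ℝ :=
  1 / (u (Pf M ε k + 1) : ℝ)

private noncomputable def Xr (u M : ℕ → ℕ) (ε : ℕ → Bool) : ℝ :=
  ∑' k, (-1 : ℝ) ^ k * Aseq u M ε k

set_option maxHeartbeats 4000000 in
/-- Proposition C(b): for an a-sequence `u` with bounded ratios, with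
`q = limsup q_n` (so `q_n ≤ q` eventually and `q_n = q` on a set `S*` which
here is assumed to have bounded gaps), the ball
`{x ∈ 𝕋 : ρ_u(x,0) < 1/q}` has cardinality `𝔠`,
where `ρ_u(x,0) = sup{‖x‖, sup_n ‖u_n x‖}`. -/
theorem ball_continuum_of_bounded_gaps (u : ℕ → ℕ) (hu : StrictMono u)
    (hpos : 1 ≤ u 0) (hdvd : ∀ n, u n ∣ u (n + 1))
    (q : ℕ) (hq2 : 2 ≤ q)
    (hev : ∀ᶠ n in atTop, u (n + 1) / u n ≤ q)
    (hgaps : ∃ d : ℕ, ∀ m : ℕ, ∃ k : ℕ, m ≤ k ∧ k ≤ m + d ∧ u (k + 1) / u k = q) :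
    Cardinal.mk {x : AddCircle (1 : ℝ) |
        max ‖x‖ (⨆ n : ℕ, ‖(u n : ℤ) • x‖) < 1 / q} = Cardinal.continuum := by
  classical
  obtain ⟨d, hd⟩ := hgaps
  obtain ⟨N₀, hN₀⟩ := eventually_atTop.mp hev
  set N := N₀ + 2 with hNdef
  have hN : ∀ n, N ≤ n → u (n + 1) / u n ≤ q := fun n hn => hN₀ n (by omega)
  have hu1 : ∀ n, 1 ≤ u n := fun n => hpos.trans (hu.monotone (Nat.zero_le n))
  have hupos : ∀ n, (0 : ℝ) < (u n : ℝ) := fun n => by exact_mod_cast hu1 n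
  have hq0 : (0 : ℝ) < (q : ℝ) := by positivity
  have hq1 : (1 : ℝ) ≤ (q : ℝ) := by exact_mod_cast (by omega : 1 ≤ q)
  have hq2' : (2 : ℝ) ≤ (q : ℝ) := by exact_mod_cast hq2
  -- exact ratio facts
  have hratio : ∀ n, ∃ c, u (n + 1) = c * u n ∧ 2 ≤ c ∧ u (n + 1) / u n = c := by
    intro n
    obtain ⟨c, hc⟩ := hdvd n
    have h1 : u n < u (n + 1) := hu (Nat.lt_succ_self n)
    have hun : 0 < u n := hu1 n
    have hcd : u (n + 1) / u n = c := by rw [hc, Nat.mul_div_cancel_left _ hun]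
    have hc2 : 2 ≤ c := by
      by_contra h
      push_neg at h
      have h2 : u n * c ≤ u n * 1 := Nat.mul_le_mul_left _ (by omega)
      rw [mul_one] at h2
      rw [hc] at h1
      exact absurd (lt_of_lt_of_le h1 h2) (lt_irrefl _)
    exact ⟨c, by rw [hc, mul_comm], hc2, hcd⟩
  have hdouble : ∀ n, 2 * u n ≤ u (n + 1) := by
    intro n
    obtain ⟨c, hc, hc2, _⟩ := hratio n
    calc 2 * u n ≤ c * u n := Nat.mul_le_mul_right _ hc2
    _ = u (n + 1) := hc.symm
  have hgrow : ∀ a t, 2 ^ t * u a ≤ u (a + t) := by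
    intro a t
    induction t with
    | zero => simp
    | succ s ih =>
      have h2 := hdouble (a + s)
      calc 2 ^ (s + 1) * u a = 2 * (2 ^ s * u a) := by ring
      _ ≤ 2 * u (a + s) := Nat.mul_le_mul_left _ ih
      _ ≤ u (a + s + 1) := h2
  have humono : ∀ {a b : ℕ}, a ≤ b → u a ≤ u b := fun {a b} h => hu.monotone h
  have hdvd' : ∀ {a b : ℕ}, a ≤ b → u a ∣ u b := by
    intro a b h
    induction h with
    | refl => exact dvd_rfl
    | step _ ih => exact ih.trans (hdvd _)
  have hmulq : ∀ n, N ≤ n → u (n + 1) ≤ q * u n := by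
    intro n hn
    obtain ⟨c, hc, _, hcd⟩ := hratio n
    have h := hN n hn
    rw [hcd] at h
    rw [hc]
    exact Nat.mul_le_mul_right _ h
  have hupper : ∀ a t, N ≤ a → u (a + t) ≤ q ^ t * u a := by
    intro a t ha
    induction t with
    | zero => simp
    | succ s ih =>
      have h1 : u (a + s + 1) ≤ q * u (a + s) := hmulq _ (by omega)
      calc u (a + (s + 1)) = u (a + s + 1) := by rw [Nat.add_succ]
      _ ≤ q * u (a + s) := h1
      _ ≤ q * (q ^ s * u a) := Nat.mul_le_mul_left _ ih
      _ = q ^ (s + 1) * u a := by ring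
  -- the S* skeleton
  choose F hF1 hF2 hF3 using hd
  have hFq : ∀ m, u (F m + 1) = q * u (F m) := by
    intro m
    obtain ⟨c, hc, _, hcd⟩ := hratio (F m)
    have hcq : c = q := by rw [← hcd, hF3]
    rw [hc, hcq]
  let M : ℕ → ℕ := fun k => Nat.rec (F N) (fun _ ih => F (ih + 1)) k
  have hM0 : N ≤ M 0 := hF1 N
  have hMsucc : ∀ k, M (k + 1) = F (M k + 1) := fun k => rfl
  have hMlt : ∀ k, M k + 1 ≤ M (k + 1) := fun k => by rw [hMsucc]; exact hF1 _
  have hMgap : ∀ k, M (k + 1) ≤ M k + 1 + d := fun k => by rw [hMsucc]; exact hF2 _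
  have hMq : ∀ k, u (M k + 1) = q * u (M k) := by
    intro k
    cases k with
    | zero => exact hFq N
    | succ s => rw [hMsucc]; exact hFq _
  have hMmono : ∀ k t, M k + t ≤ M (k + t) := by
    intro k t
    induction t with
    | zero => simp
    | succ s ih =>
      have h1 := hMlt (k + s)
      have h2 : k + (s + 1) = (k + s) + 1 := by omega
      rw [h2]
      omega
  have hMmono' : ∀ i j, i ≤ j → M i + (j - i) ≤ M j := by
    intro i j hij
    have h := hMmono i (j - i)
    have he : i + (j - i) = j := by omega
    rwa [he] at h
  have hMgap' : ∀ i t, M (i + t) ≤ M i + t * (d + 1) := by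
    intro i t
    induction t with
    | zero => simp
    | succ s ih =>
      have h := hMgap (i + s)
      have he : i + (s + 1) = (i + s) + 1 := by omega
      rw [he]
      calc M ((i + s) + 1) ≤ M (i + s) + 1 + d := h
      _ ≤ (M i + s * (d + 1)) + 1 + d := by omega
      _ = M i + (s + 1) * (d + 1) := by ring
  have hMN : ∀ k, N ≤ M k := by
    intro k
    have := hMmono' 0 k (Nat.zero_le k)
    omega
  obtain ⟨D, hD⟩ : ∃ D : ℕ, D = 6 * (d + 1) + 1 := ⟨_, rfl⟩
  -- Pf facts
  have hPN : ∀ (ε : ℕ → Bool) k, N ≤ Pf M ε k := fun ε k => hMN _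
  have hPq : ∀ (ε : ℕ → Bool) k, u (Pf M ε k + 1) = q * u (Pf M ε k) := fun ε k => hMq _
  have hPge : ∀ (ε : ℕ → Bool) k, k ≤ Pf M ε k := by
    intro ε k
    have h1 := hMmono' 0 (5 * k + if ε k then 1 else 0) (Nat.zero_le _)
    simp only [Pf]
    omega
  have hP4 : ∀ (ε : ℕ → Bool) k, Pf M ε k + 4 ≤ Pf M ε (k + 1) := by
    intro ε k
    simp only [Pf]
    set e := (if ε k then 1 else 0) with he
    set e' := (if ε (k + 1) then 1 else 0) with he'
    have h1 : e ≤ 1 := by rw [he]; split <;> omega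
    have h3 := hMmono' (5 * k + e) (5 * (k + 1) + e') (by omega)
    omega
  have hPgap : ∀ (ε : ℕ → Bool) j, Pf M ε (j + 1) + 1 ≤ Pf M ε j + D := by
    intro ε j
    simp only [Pf]
    set e := (if ε j then 1 else 0) with he
    set e' := (if ε (j + 1) then 1 else 0) with he'
    have h1 : e ≤ 1 := by rw [he]; split <;> omega
    have h1' : e' ≤ 1 := by rw [he']; split <;> omega
    have h2 : 5 * (j + 1) + e' = (5 * j + e) + ((5 * (j + 1) + e') - (5 * j + e)) := by omega
    have h3 := hMgap' (5 * j + e) ((5 * (j + 1) + e') - (5 * j + e))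
    rw [← h2] at h3
    have h4 : (5 * (j + 1) + e') - (5 * j + e) ≤ 6 := by omega
    have h5 : ((5 * (j + 1) + e') - (5 * j + e)) * (d + 1) ≤ 6 * (d + 1) :=
      Nat.mul_le_mul_right _ h4
    omega
  have hu16 : ∀ (ε : ℕ → Bool) k, 16 * u (Pf M ε k + 1) ≤ u (Pf M ε (k + 1) + 1) := by
    intro ε k
    have h4 := hP4 ε k
    have h := hgrow (Pf M ε k + 1) (Pf M ε (k + 1) + 1 - (Pf M ε k + 1))
    have he : Pf M ε k + 1 + (Pf M ε (k + 1) + 1 - (Pf M ε k + 1)) = Pf M ε (k + 1) + 1 := by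
      omega
    rw [he] at h
    have h16 : 16 ≤ 2 ^ (Pf M ε (k + 1) + 1 - (Pf M ε k + 1)) := by
      calc (16 : ℕ) = 2 ^ 4 := by norm_num
      _ ≤ _ := Nat.pow_le_pow_right (by norm_num) (by omega)
    calc 16 * u (Pf M ε k + 1) ≤ 2 ^ (Pf M ε (k + 1) + 1 - (Pf M ε k + 1)) * u (Pf M ε k + 1) :=
      Nat.mul_le_mul_right _ h16
    _ ≤ _ := h
  -- A facts
  have hApos : ∀ (ε : ℕ → Bool) k, 0 < Aseq u M ε k := by
    intro ε k
    rw [Aseq]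
    exact div_pos one_pos (hupos _)
  have hA0 : ∀ (ε : ℕ → Bool) k, 0 ≤ Aseq u M ε k := fun ε k => (hApos ε k).le
  have hA16 : ∀ (ε : ℕ → Bool) k, 16 * Aseq u M ε (k + 1) ≤ Aseq u M ε k := by
    intro ε k
    have h := hu16 ε k
    rw [Aseq, Aseq, mul_one_div, div_le_div_iff₀ (hupos _) (hupos _), one_mul]
    exact_mod_cast h
  have hAle : ∀ (ε : ℕ → Bool) k, Aseq u M ε (k + 1) ≤ Aseq u M ε k := by
    intro ε k
    have h := hA16 ε k
    have h2 := hApos ε (k + 1)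
    linarith
  -- the master bound
  have master : ∀ (ε : ℕ → Bool) (c : ℝ), 0 ≤ c → ∀ j,
      |(∑' i, c * ((-1 : ℝ) ^ (i + j) * Aseq u M ε (i + j))) -
        (-1 : ℝ) ^ j * (c * Aseq u M ε j - c * Aseq u M ε (j + 1))| ≤
      (1 / 8) * (c * Aseq u M ε (j + 1)) := by
    intro ε c hc j
    have hgeom : ∀ j' : ℕ, Summable (fun i => c * Aseq u M ε (i + j')) ∧
        (∑' i, c * Aseq u M ε (i + j')) ≤ 2 * (c * Aseq u M ε j') := by
      intro j'
      have h0 : ∀ i, 0 ≤ c * Aseq u M ε (i + j') := fun i => mul_nonneg hc (hA0 ε _)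
      have h16 : ∀ i, 16 * (c * Aseq u M ε (i + 1 + j')) ≤ c * Aseq u M ε (i + j') := by
        intro i
        have h := hA16 ε (i + j')
        have he : i + 1 + j' = (i + j') + 1 := by omega
        rw [he]
        calc 16 * (c * Aseq u M ε ((i + j') + 1))
            = c * (16 * Aseq u M ε ((i + j') + 1)) := by ring
          _ ≤ c * Aseq u M ε (i + j') := mul_le_mul_of_nonneg_left h hc
      constructor
      · exact geom16_summable h0 h16
      · have h5 := geom16_tsum_le h0 h16
        have he0 : (0 : ℕ) + j' = j' := by omega
        rwa [he0] at h5
    have habs : ∀ (j' : ℕ) (i : ℕ), ‖c * ((-1 : ℝ) ^ (i + j') * Aseq u M ε (i + j'))‖ =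
        c * Aseq u M ε (i + j') := by
      intro j' i
      rw [Real.norm_eq_abs, abs_mul, abs_mul, abs_pow, abs_neg, abs_one, one_pow, one_mul,
        abs_of_nonneg hc, abs_of_nonneg (hA0 ε _)]
    have hgsum : Summable (fun i => c * ((-1 : ℝ) ^ (i + j) * Aseq u M ε (i + j))) := by
      apply Summable.of_norm
      have he : (fun i => ‖c * ((-1 : ℝ) ^ (i + j) * Aseq u M ε (i + j))‖) =
          (fun i => c * Aseq u M ε (i + j)) := funext (habs j)
      rw [he]
      exact (hgeom j).1
    have hsplit := Summable.sum_add_tsum_nat_add (f := fun i => c * ((-1 : ℝ) ^ (i + j) * Aseq u M ε (i + j)))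
      2 hgsum
    have hsum2 : (∑ i ∈ Finset.range 2, c * ((-1 : ℝ) ^ (i + j) * Aseq u M ε (i + j))) =
        (-1 : ℝ) ^ j * (c * Aseq u M ε j - c * Aseq u M ε (j + 1)) := by
      rw [Finset.sum_range_succ, Finset.sum_range_one]
      have e0 : 0 + j = j := by omega
      have e1 : 1 + j = j + 1 := by omega
      rw [e0, e1, pow_succ]
      ring
    have hT2 : |∑' i, c * ((-1 : ℝ) ^ ((i + 2) + j) * Aseq u M ε ((i + 2) + j))| ≤
        (1 / 8) * (c * Aseq u M ε (j + 1)) := by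
      have hnormsum : Summable (fun i => ‖c * ((-1 : ℝ) ^ ((i + 2) + j) * Aseq u M ε ((i + 2) + j))‖) := by
        have he : (fun i => ‖c * ((-1 : ℝ) ^ ((i + 2) + j) * Aseq u M ε ((i + 2) + j))‖) =
            (fun i => c * Aseq u M ε (i + (j + 2))) := by
          funext i
          have he2 : (i + 2) + j = i + (j + 2) := by omega
          rw [he2, ← habs (j + 2) i]
        rw [he]
        exact (hgeom (j + 2)).1
      have h1 := norm_tsum_le_tsum_norm hnormsum
      rw [Real.norm_eq_abs] at h1
      have he : (fun i => ‖c * ((-1 : ℝ) ^ ((i + 2) + j) * Aseq u M ε ((i + 2) + j))‖) =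
          (fun i => c * Aseq u M ε (i + (j + 2))) := by
        funext i
        have he2 : (i + 2) + j = i + (j + 2) := by omega
        rw [he2, ← habs (j + 2) i]
      rw [he] at h1
      have h2 := (hgeom (j + 2)).2
      have h3 : 16 * Aseq u M ε (j + 2) ≤ Aseq u M ε (j + 1) := hA16 ε (j + 1)
      have h4 : 0 ≤ Aseq u M ε (j + 2) := hA0 ε _
      calc |∑' i, c * ((-1 : ℝ) ^ ((i + 2) + j) * Aseq u M ε ((i + 2) + j))| ≤
          ∑' i, c * Aseq u M ε (i + (j + 2)) := h1
      _ ≤ 2 * (c * Aseq u M ε (j + 2)) := h2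
      _ ≤ (1 / 8) * (c * Aseq u M ε (j + 1)) := by nlinarith
    have hkey : (∑' i, c * ((-1 : ℝ) ^ (i + j) * Aseq u M ε (i + j))) -
        (-1 : ℝ) ^ j * (c * Aseq u M ε j - c * Aseq u M ε (j + 1)) =
        ∑' i, c * ((-1 : ℝ) ^ ((i + 2) + j) * Aseq u M ε ((i + 2) + j)) := by
      rw [← hsplit, hsum2]
      ring
    rw [hkey]
    exact hT2
  -- corollary: plain tail bound
  have tail_le : ∀ (ε : ℕ → Bool) (c : ℝ), 0 ≤ c → ∀ j,
      |∑' i, c * ((-1 : ℝ) ^ (i + j) * Aseq u M ε (i + j))| ≤ c * Aseq u M ε j := by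
    intro ε c hc j
    have h := master ε c hc j
    have h2 : |(-1 : ℝ) ^ j * (c * Aseq u M ε j - c * Aseq u M ε (j + 1))| =
        c * Aseq u M ε j - c * Aseq u M ε (j + 1) := by
      rw [abs_mul, abs_pow, abs_neg, abs_one, one_pow, one_mul, abs_of_nonneg]
      have := hAle ε j
      nlinarith
    have h3 := abs_sub_abs_le_abs_sub (∑' i, c * ((-1 : ℝ) ^ (i + j) * Aseq u M ε (i + j)))
      ((-1 : ℝ) ^ j * (c * Aseq u M ε j - c * Aseq u M ε (j + 1)))
    have h4 : 0 ≤ c * Aseq u M ε (j + 1) := mul_nonneg hc (hA0 ε _)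
    rw [h2] at h3
    linarith
  -- summability of the signed series
  have hsum : ∀ ε : ℕ → Bool, Summable (fun k => (-1 : ℝ) ^ k * Aseq u M ε k) := by
    intro ε
    apply Summable.of_norm
    have he : (fun k => ‖(-1 : ℝ) ^ k * Aseq u M ε k‖) = fun k => Aseq u M ε k := by
      funext k
      rw [Real.norm_eq_abs, abs_mul, abs_pow, abs_neg, abs_one, one_pow, one_mul,
        abs_of_nonneg (hA0 ε k)]
    rw [he]
    exact geom16_summable (hA0 ε) (hA16 ε)
  -- rewrite Xr in shifted form
  have hXr0 : ∀ ε : ℕ → Bool, Xr u M ε = ∑' i, (1 : ℝ) * ((-1 : ℝ) ^ (i + 0) * Aseq u M ε (i + 0)) := by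
    intro ε
    rw [Xr]
    exact tsum_congr fun i => by rw [Nat.add_zero, one_mul]
  have hXub : ∀ ε : ℕ → Bool, |Xr u M ε| ≤ Aseq u M ε 0 := by
    intro ε
    have h := tail_le ε 1 zero_le_one 0
    rw [← hXr0 ε, one_mul] at h
    exact h
  have hXpos : ∀ ε : ℕ → Bool, 0 < Xr u M ε := by
    intro ε
    have h := master ε 1 zero_le_one 0
    rw [← hXr0 ε] at h
    simp only [pow_zero, one_mul] at h
    have h1 := hA16 ε 0
    have h2 := hApos ε 0
    have h3 := hApos ε 1
    have h4 := (abs_le.mp h).1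
    nlinarith
  -- size of the first term
  have hu4 : ∀ ε : ℕ → Bool, 4 * q ≤ u (Pf M ε 0 + 1) := by
    intro ε
    have h1 : 4 ≤ u (Pf M ε 0) := by
      have h2 : 2 ≤ Pf M ε 0 := le_trans (by omega : 2 ≤ N) (hPN ε 0)
      have h3 := hgrow 0 (Pf M ε 0)
      rw [Nat.zero_add] at h3
      have h4 : 4 ≤ 2 ^ Pf M ε 0 := by
        calc (4 : ℕ) = 2 ^ 2 := by norm_num
        _ ≤ _ := Nat.pow_le_pow_right (by norm_num) h2
      calc (4 : ℕ) = 4 * 1 := by norm_num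
      _ ≤ 2 ^ Pf M ε 0 * u 0 := Nat.mul_le_mul h4 hpos
      _ ≤ u (Pf M ε 0) := h3
    rw [hPq ε 0]
    calc 4 * q = q * 4 := by ring
    _ ≤ q * u (Pf M ε 0) := Nat.mul_le_mul_left _ h1
  have hA0le : ∀ ε : ℕ → Bool, Aseq u M ε 0 ≤ 1 / (4 * (q : ℝ)) := by
    intro ε
    rw [Aseq]
    apply one_div_le_one_div_of_le (by positivity)
    exact_mod_cast hu4 ε
  -- the bound constant
  obtain ⟨Bq, hBqdef⟩ : ∃ B : ℝ, B = 1 / (q : ℝ) - (1 / 2) * (1 / (q : ℝ) ^ D) := ⟨_, rfl⟩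
  have hqD1 : (q : ℝ) ≤ (q : ℝ) ^ D := by
    calc (q : ℝ) = (q : ℝ) ^ 1 := (pow_one _).symm
    _ ≤ (q : ℝ) ^ D := pow_le_pow_right₀ hq1 (by omega)
  have hqDpos : (0 : ℝ) < (q : ℝ) ^ D := by positivity
  have hBqlt : Bq < 1 / (q : ℝ) := by
    rw [hBqdef]
    have := one_div_pos.mpr hqDpos
    linarith
  have hBqhalf : 1 / (2 * (q : ℝ)) ≤ Bq := by
    rw [hBqdef]
    have h1 : 1 / (q : ℝ) ^ D ≤ 1 / (q : ℝ) := one_div_le_one_div_of_le hq0 hqD1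
    have h2 : 1 / (2 * (q : ℝ)) = 1 / (q : ℝ) - (1 / 2) * (1 / (q : ℝ)) := by
      field_simp
      norm_num
    rw [h2]
    linarith
  have hBqlt2 : Bq < 1 / 2 :=
    lt_of_lt_of_le hBqlt (one_div_le_one_div_of_le two_pos hq2')
  -- norm of small reals in the circle
  have hnormle : ∀ T : ℝ, |T| < 1 / 2 → ‖((T : ℝ) : AddCircle (1 : ℝ))‖ = |T| := by
    intro T hT
    rw [AddCircle.norm_eq]
    have h0 : round ((1 : ℝ)⁻¹ * T) = 0 := by
      rw [round_eq_zero_iff]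
      constructor
      · rw [inv_one, one_mul]; linarith [(abs_lt.mp hT).1]
      · rw [inv_one, one_mul]; exact (abs_lt.mp hT).2
    rw [h0]
    simp
  -- the key estimate
  have key : ∀ (ε : ℕ → Bool) (m : ℕ),
      ‖(u m : ℤ) • ((Xr u M ε : ℝ) : AddCircle (1 : ℝ))‖ ≤ Bq := by
    intro ε m
    have hex : ∃ k, m ≤ Pf M ε k := ⟨m, hPge ε m⟩
    set j := Nat.find hex with hjdef
    have hjle : m ≤ Pf M ε j := Nat.find_spec hex
    have hjlt : ∀ i, i < j → Pf M ε i < m := by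
      intro i hi
      have := Nat.find_min hex hi
      omega
    have hwsum2 : Summable (fun k => (u m : ℝ) * ((-1 : ℝ) ^ k * Aseq u M ε k)) :=
      (hsum ε).mul_left _
    have hmulx : (u m : ℝ) * Xr u M ε = ∑' k, (u m : ℝ) * ((-1 : ℝ) ^ k * Aseq u M ε k) := by
      rw [Xr, tsum_mul_left]
    have hsplit : (∑ i ∈ Finset.range j, (u m : ℝ) * ((-1 : ℝ) ^ i * Aseq u M ε i)) +
        (∑' i, (u m : ℝ) * ((-1 : ℝ) ^ (i + j) * Aseq u M ε (i + j))) =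
        ∑' k, (u m : ℝ) * ((-1 : ℝ) ^ k * Aseq u M ε k) :=
      Summable.sum_add_tsum_nat_add j hwsum2
    have hint : ∀ i, i < j → ∃ z : ℤ, (z : ℝ) = (u m : ℝ) * ((-1 : ℝ) ^ i * Aseq u M ε i) := by
      intro i hi
      obtain ⟨c, hc⟩ := hdvd' (show Pf M ε i + 1 ≤ m by have := hjlt i hi; omega)
      refine ⟨(-1) ^ i * (c : ℤ), ?_⟩
      rw [Aseq]
      have hne : (u (Pf M ε i + 1) : ℝ) ≠ 0 := ne_of_gt (hupos _)
      push_cast [hc]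
      field_simp
    choose zf hzf using hint
    have hZ : ∃ z : ℤ, (z : ℝ) =
        ∑ i ∈ Finset.range j, (u m : ℝ) * ((-1 : ℝ) ^ i * Aseq u M ε i) := by
      refine ⟨∑ i ∈ Finset.range j, (if h : i < j then zf i h else 0), ?_⟩
      rw [Int.cast_sum]
      apply Finset.sum_congr rfl
      intro i hi
      have hi' := Finset.mem_range.mp hi
      rw [dif_pos hi', hzf i hi']
    obtain ⟨z, hz⟩ := hZ
    set T := ∑' i, (u m : ℝ) * ((-1 : ℝ) ^ (i + j) * Aseq u M ε (i + j)) with hTdef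
    have hxT : (u m : ℝ) * Xr u M ε = (z : ℝ) + T := by
      rw [hmulx, ← hsplit, ← hz]
    have hzzero : (((z : ℝ)) : AddCircle (1 : ℝ)) = 0 := by
      have h1 : ((z : ℝ)) = z • (1 : ℝ) := by simp
      rw [h1, AddCircle.coe_zsmul, AddCircle.coe_period, smul_zero]
    have hcirc : (u m : ℤ) • ((Xr u M ε : ℝ) : AddCircle (1 : ℝ)) =
        ((T : ℝ) : AddCircle (1 : ℝ)) := by
      rw [← AddCircle.coe_zsmul]
      have h2 : (u m : ℤ) • Xr u M ε = (z : ℝ) + T := by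
        rw [zsmul_eq_mul]
        push_cast
        exact hxT
      rw [h2, AddCircle.coe_add, hzzero, zero_add]
    have humnn : (0 : ℝ) ≤ (u m : ℝ) := by positivity
    have hTb : |T| ≤ (u m : ℝ) * Aseq u M ε j - (1 / 2) * ((u m : ℝ) * Aseq u M ε (j + 1)) := by
      have h := master ε (u m : ℝ) humnn j
      rw [← hTdef] at h
      have h2 : |(-1 : ℝ) ^ j * ((u m : ℝ) * Aseq u M ε j - (u m : ℝ) * Aseq u M ε (j + 1))| =
          (u m : ℝ) * Aseq u M ε j - (u m : ℝ) * Aseq u M ε (j + 1) := by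
        rw [abs_mul, abs_pow, abs_neg, abs_one, one_pow, one_mul, abs_of_nonneg]
        have h3 := hAle ε j
        nlinarith
      have h5 := abs_sub_abs_le_abs_sub T
        ((-1 : ℝ) ^ j * ((u m : ℝ) * Aseq u M ε j - (u m : ℝ) * Aseq u M ε (j + 1)))
      rw [h2] at h5
      have h6 : 0 ≤ (u m : ℝ) * Aseq u M ε (j + 1) := mul_nonneg humnn (hA0 ε _)
      linarith
    have hTBq : |T| ≤ Bq := by
      rcases eq_or_lt_of_le hjle with heq | hlt
      · -- m = Pf M ε j : the critical case
        have hcast : (u (Pf M ε j + 1) : ℝ) = (q : ℝ) * (u (Pf M ε j) : ℝ) := by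
          exact_mod_cast congrArg (fun t : ℕ => (t : ℝ)) (hPq ε j)
        have h1 : (u m : ℝ) * Aseq u M ε j = 1 / (q : ℝ) := by
          rw [heq, Aseq, hcast]
          have h3 := hupos (Pf M ε j)
          field_simp
        have h4 : 1 / (q : ℝ) ^ D ≤ (u m : ℝ) * Aseq u M ε (j + 1) := by
          have hnat : u (Pf M ε (j + 1) + 1) ≤ q ^ D * u (Pf M ε j) := by
            have h5 := humono (hPgap ε j)
            have h6 := hupper (Pf M ε j) D (hPN ε j)
            exact le_trans h5 h6
          rw [heq, Aseq, mul_one_div, div_le_div_iff₀ hqDpos (hupos _), one_mul]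
          have h7 : ((q ^ D * u (Pf M ε j) : ℕ) : ℝ) = (u (Pf M ε j) : ℝ) * (q : ℝ) ^ D := by
            push_cast
            ring
          rw [← h7]
          exact_mod_cast hnat
        rw [h1] at hTb
        rw [hBqdef]
        linarith
      · -- m < Pf M ε j
        have h1 : (u m : ℝ) * Aseq u M ε j ≤ 1 / (2 * (q : ℝ)) := by
          have hnat : 2 * q * u m ≤ u (Pf M ε j + 1) := by
            have h3 : 2 * u m ≤ u (m + 1) := hdouble m
            have h4 : u (m + 1) ≤ u (Pf M ε j) := humono hlt
            calc 2 * q * u m = q * (2 * u m) := by ring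
            _ ≤ q * u (m + 1) := Nat.mul_le_mul_left _ h3
            _ ≤ q * u (Pf M ε j) := Nat.mul_le_mul_left _ h4
            _ = u (Pf M ε j + 1) := (hPq ε j).symm
          rw [Aseq, mul_one_div, div_le_div_iff₀ (hupos _) (by positivity), one_mul]
          calc (u m : ℝ) * (2 * (q : ℝ)) = ((2 * q * u m : ℕ) : ℝ) := by push_cast; ring
          _ ≤ (u (Pf M ε j + 1) : ℝ) := by exact_mod_cast hnat
        have h6 : 0 ≤ (u m : ℝ) * Aseq u M ε (j + 1) := mul_nonneg humnn (hA0 ε _)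
        linarith [hTb, hBqhalf]
    rw [hcirc, hnormle T (lt_of_le_of_lt hTBq hBqlt2)]
    exact hTBq
  -- membership in the ball
  have hXB : ∀ ε : ℕ → Bool, |Xr u M ε| ≤ Bq := by
    intro ε
    have h1 := hXub ε
    have h2 := hA0le ε
    have h3 : 1 / (4 * (q : ℝ)) ≤ 1 / (2 * (q : ℝ)) := by
      apply one_div_le_one_div_of_le (by positivity)
      linarith
    linarith [hBqhalf]
  have hXmem : ∀ ε : ℕ → Bool, ((Xr u M ε : ℝ) : AddCircle (1 : ℝ)) ∈
      {x : AddCircle (1 : ℝ) | max ‖x‖ (⨆ n : ℕ, ‖(u n : ℤ) • x‖) < 1 / q} := by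
    intro ε
    have hXnorm : ‖((Xr u M ε : ℝ) : AddCircle (1 : ℝ))‖ ≤ Bq := by
      rw [hnormle _ (lt_of_le_of_lt (hXB ε) hBqlt2)]
      exact hXB ε
    have hsup : (⨆ n : ℕ, ‖(u n : ℤ) • ((Xr u M ε : ℝ) : AddCircle (1 : ℝ))‖) ≤ Bq :=
      ciSup_le fun n => key ε n
    exact max_lt (lt_of_le_of_lt hXnorm hBqlt) (lt_of_le_of_lt hsup hBqlt)
  -- Xr lies in [0,1)
  have hXmemIco : ∀ ε : ℕ → Bool, Xr u M ε ∈ Set.Ico (0 : ℝ) (0 + 1) := by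
    intro ε
    constructor
    · exact (hXpos ε).le
    · rw [zero_add]
      have h := (abs_le.mp (hXB ε)).2
      have : Bq < 1 / 2 := hBqlt2
      linarith
  haveI : Fact ((0 : ℝ) < 1) := ⟨one_pos⟩
  -- separation of distinct sequences
  have hsep : ∀ (α β : ℕ → Bool) (k : ℕ), (∀ i, i < k → α i = β i) → α k = false →
      β k = true → Xr u M α ≠ Xr u M β := by
    intro α β k hpre hak hbk heqXr
    have hPa : Pf M α k = M (5 * k) := by simp [Pf, hak]
    have hPb : Pf M β k = M (5 * k + 1) := by simp [Pf, hbk]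
    have hba : 2 * u (M (5 * k) + 1) ≤ u (M (5 * k + 1) + 1) := by
      have h1 : M (5 * k) + 1 ≤ M (5 * k + 1) := hMlt (5 * k)
      have h2 : M (5 * k) + 1 + 1 ≤ M (5 * k + 1) + 1 := by omega
      calc 2 * u (M (5 * k) + 1) ≤ u (M (5 * k) + 1 + 1) := hdouble _
      _ ≤ u (M (5 * k + 1) + 1) := humono h2
    have hba' : Aseq u M β k ≤ Aseq u M α k / 2 := by
      rw [Aseq, Aseq, hPa, hPb, div_div]
      apply one_div_le_one_div_of_le (mul_pos (hupos _) two_pos)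
      calc (u (M (5 * k) + 1) : ℝ) * 2 = ((2 * u (M (5 * k) + 1) : ℕ) : ℝ) := by push_cast; ring
      _ ≤ _ := by exact_mod_cast hba
    have hS : (∑ i ∈ Finset.range k, (-1 : ℝ) ^ i * Aseq u M α i) =
        ∑ i ∈ Finset.range k, (-1 : ℝ) ^ i * Aseq u M β i := by
      apply Finset.sum_congr rfl
      intro i hi
      have hi' := Finset.mem_range.mp hi
      rw [Aseq, Aseq, Pf, Pf, hpre i hi']
    have hsa : (∑ i ∈ Finset.range k, (-1 : ℝ) ^ i * Aseq u M α i) +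
        (∑' i, (-1 : ℝ) ^ (i + k) * Aseq u M α (i + k)) =
        ∑' i, (-1 : ℝ) ^ i * Aseq u M α i :=
      Summable.sum_add_tsum_nat_add k (hsum α)
    have hsb : (∑ i ∈ Finset.range k, (-1 : ℝ) ^ i * Aseq u M β i) +
        (∑' i, (-1 : ℝ) ^ (i + k) * Aseq u M β (i + k)) =
        ∑' i, (-1 : ℝ) ^ i * Aseq u M β i :=
      Summable.sum_add_tsum_nat_add k (hsum β)
    have hta := master α 1 zero_le_one k
    have htb := master β 1 zero_le_one k
    simp only [one_mul] at hta htb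
    obtain ⟨Ta, hTa⟩ : ∃ t : ℝ, t = ∑' i, (-1 : ℝ) ^ (i + k) * Aseq u M α (i + k) := ⟨_, rfl⟩
    obtain ⟨Tb, hTb⟩ : ∃ t : ℝ, t = ∑' i, (-1 : ℝ) ^ (i + k) * Aseq u M β (i + k) := ⟨_, rfl⟩
    rw [← hTa] at hsa hta
    rw [← hTb] at hsb htb
    have hTT : Ta = Tb := by
      have h1 : (∑ i ∈ Finset.range k, (-1 : ℝ) ^ i * Aseq u M α i) + Ta =
          (∑ i ∈ Finset.range k, (-1 : ℝ) ^ i * Aseq u M β i) + Tb := by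
        rw [hsa, hsb]
        exact heqXr
      linarith [hS, h1]
    obtain ⟨X, hX⟩ : ∃ t : ℝ, t = (-1 : ℝ) ^ k * (Aseq u M α k - Aseq u M α (k + 1)) := ⟨_, rfl⟩
    obtain ⟨Y, hY⟩ : ∃ t : ℝ, t = (-1 : ℝ) ^ k * (Aseq u M β k - Aseq u M β (k + 1)) := ⟨_, rfl⟩
    rw [← hX] at hta
    rw [← hY] at htb
    have h3 : |X - Y| ≤ (1 / 8) * Aseq u M α (k + 1) + (1 / 8) * Aseq u M β (k + 1) := by
      have e : X - Y = -(Ta - X) + (Tb - Y) := by rw [hTT]; ring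
      calc |X - Y| = |-(Ta - X) + (Tb - Y)| := by rw [e]
      _ ≤ |-(Ta - X)| + |Tb - Y| := abs_add_le _ _
      _ = |Ta - X| + |Tb - Y| := by rw [abs_neg]
      _ ≤ _ := add_le_add hta htb
    have h5 : |X - Y| = |(Aseq u M α k - Aseq u M α (k + 1)) -
        (Aseq u M β k - Aseq u M β (k + 1))| := by
      rw [hX, hY, ← mul_sub, abs_mul, abs_pow, abs_neg, abs_one, one_pow, one_mul]
    rw [h5] at h3
    have h6 := hA16 α k
    have h7 := hA16 β k
    have h8 := hApos α k
    have h9 := hApos β k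
    have h10 := hApos α (k + 1)
    have h11 := hApos β (k + 1)
    have h12 : (Aseq u M α k - Aseq u M α (k + 1)) -
        (Aseq u M β k - Aseq u M β (k + 1)) ≤ |(Aseq u M α k - Aseq u M α (k + 1)) -
        (Aseq u M β k - Aseq u M β (k + 1))| := le_abs_self _
    linarith only [h3, h12, h6, h7, h8, h9, h10, h11, hba']
  -- injectivity
  have hinj : ∀ ε ε' : ℕ → Bool, ε ≠ ε' →
      ((Xr u M ε : ℝ) : AddCircle (1 : ℝ)) ≠ ((Xr u M ε' : ℝ) : AddCircle (1 : ℝ)) := by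
    intro ε ε' hne h
    have hexd : ∃ k, ε k ≠ ε' k := Function.ne_iff.mp hne
    set k := Nat.find hexd with hkdef
    have hk : ε k ≠ ε' k := Nat.find_spec hexd
    have hpre : ∀ i, i < k → ε i = ε' i := by
      intro i hi
      have h1 := Nat.find_min hexd hi
      exact not_not.mp h1
    have hreq : Xr u M ε = Xr u M ε' :=
      (AddCircle.coe_eq_coe_iff_of_mem_Ico (hXmemIco ε) (hXmemIco ε')).mp h
    cases hεk : ε k with
    | false =>
      have hε'k : ε' k = true := by
        cases h2 : ε' k with
        | false => exact absurd (hεk.trans h2.symm) hk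
        | true => rfl
      exact hsep ε ε' k hpre hεk hε'k hreq
    | true =>
      have hε'k : ε' k = false := by
        cases h2 : ε' k with
        | false => rfl
        | true => exact absurd (hεk.trans h2.symm) hk
      exact hsep ε' ε k (fun i hi => (hpre i hi).symm) hε'k hεk hreq.symm
  -- conclusion
  apply le_antisymm
  · calc Cardinal.mk {x : AddCircle (1 : ℝ) | max ‖x‖ (⨆ n : ℕ, ‖(u n : ℤ) • x‖) < 1 / q}
        ≤ Cardinal.mk (AddCircle (1 : ℝ)) := Cardinal.mk_set_le _
    _ ≤ Cardinal.mk ℝ := Cardinal.mk_le_of_surjective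
        (f := ((↑) : ℝ → AddCircle (1 : ℝ))) (fun x => Quotient.exists_rep x)
    _ = Cardinal.continuum := Cardinal.mk_real
  · have hGinj : Function.Injective (fun ε : ℕ → Bool =>
        (⟨((Xr u M ε : ℝ) : AddCircle (1 : ℝ)), hXmem ε⟩ :
          {x : AddCircle (1 : ℝ) | max ‖x‖ (⨆ n : ℕ, ‖(u n : ℤ) • x‖) < 1 / q})) := by
      intro a b hab
      by_contra hne
      exact hinj a b hne (congrArg Subtype.val hab)
    have hcb : Cardinal.continuum = Cardinal.mk (ℕ → Bool) := by
      rw [Cardinal.mk_arrow, Cardinal.lift_id, Cardinal.lift_id, Cardinal.mk_bool,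
        Cardinal.mk_nat, Cardinal.two_power_aleph0]
    rw [hcb]
    exact Cardinal.mk_le_of_injective hGinj
end

section
/- Let u be an a-sequence with bounded ratio sequence, q = limsup q_n, and suppose the gaps of S* = {m_k : q_{m_k} = q} are unbounded. Then there exist continuum many x ∈ T with ρ_u(x,0) = 1/q. -/
open Filter Topology Finset
set_option maxHeartbeats 1000000

section Alt
variable {b : ℕ → ℝ}

lemma alt_le_head (hb : Antitone b) (hs : Summable fun k => (-1:ℝ)^k * b k) :
    ∑' k, (-1:ℝ)^k * b k ≤ b 0 := by
  have h := Antitone.tendsto_le_alternating_series hs.hasSum.tendsto_sum_nat hb 0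
  simpa using h

lemma head_sub_le_alt (hb : Antitone b) (hs : Summable fun k => (-1:ℝ)^k * b k) :
    b 0 - b 1 ≤ ∑' k, (-1:ℝ)^k * b k := by
  have h := Antitone.alternating_series_le_tendsto hs.hasSum.tendsto_sum_nat hb 1
  have h2 : ∑ i ∈ range (2*1), (-1:ℝ)^i * b i = b 0 - b 1 := by
    simp [Finset.sum_range_succ]; ring
  linarith

end Alt

section U
variable {u : ℕ → ℕ} (hu : StrictMono u) (hpos : 1 ≤ u 0) (hdvd : ∀ n, u n ∣ u (n + 1))
include hu hpos hdvd

lemma u_pos (n : ℕ) : 0 < u n := lt_of_lt_of_le hpos (hu.monotone (Nat.zero_le n))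

lemma u_dvd_le : ∀ a b : ℕ, a ≤ b → u a ∣ u b := by
  intro a b hab
  induction b with
  | zero => simpa [Nat.le_zero.mp hab]
  | succ b ih =>
    rcases Nat.lt_or_ge a (b+1) with h | h
    · exact (ih (Nat.lt_succ_iff.mp h)).trans (hdvd b)
    · have : a = b + 1 := le_antisymm hab h
      simp [this]

lemma u_double (n : ℕ) : 2 * u n ≤ u (n + 1) := by
  obtain ⟨c, hc⟩ := hdvd n
  have h1 : u n < u (n + 1) := hu (Nat.lt_succ_self n)
  have hc2 : 2 ≤ c := by
    rcases Nat.lt_or_ge c 2 with h | h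
    · interval_cases c <;> omega
    · exact h
  calc 2 * u n ≤ c * u n := Nat.mul_le_mul_right _ hc2
    _ = u n * c := Nat.mul_comm _ _
    _ = u (n+1) := hc.symm

lemma u_growth : ∀ a b : ℕ, a ≤ b → u a * 2 ^ (b - a) ≤ u b := by
  intro a b hab
  induction b with
  | zero => simp [Nat.le_zero.mp hab]
  | succ b ih =>
    rcases Nat.lt_or_ge a (b+1) with h | h
    · have hab' : a ≤ b := Nat.lt_succ_iff.mp h
      have h1 := ih hab'
      have h2 := u_double hu hpos hdvd b
      have : b + 1 - a = (b - a) + 1 := by omega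
      rw [this, pow_succ]
      calc u a * (2 ^ (b-a) * 2) = (u a * 2 ^ (b-a)) * 2 := by ring
        _ ≤ u b * 2 := by omega
        _ ≤ u (b+1) := by omega
    · have : a = b + 1 := le_antisymm hab h
      simp [this]

end U

lemma norm_coe_addCircle {y : ℝ} (h0 : 0 ≤ y) (h1 : y ≤ 1/2) :
    ‖(y : AddCircle (1:ℝ))‖ = y := by
  rw [AddCircle.norm_eq]
  norm_num
  rcases eq_or_lt_of_le h1 with h | h
  · subst h; norm_num [round_eq]
  · have : round y = 0 := by
      rw [round_eq]
      have : ⌊y + 1/2⌋ = 0 := by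
        apply Int.floor_eq_zero_iff.mpr
        constructor <;> simp <;> linarith
      simpa using this
    rw [this]
    simpa using abs_of_nonneg h0

section Half
variable {c : ℕ → ℝ} (h0 : ∀ i, 0 ≤ c i) (hh : ∀ i, 2 * c (i+1) ≤ c i)
include h0 hh

lemma antitone_of_half : Antitone c := by
  apply antitone_nat_of_succ_le
  intro n
  have := h0 (n+1); have := hh n; linarith

lemma geo_of_half : ∀ i, c i ≤ c 0 * (1/2)^i := by
  intro i
  induction i with
  | zero => simp
  | succ i ih =>
    have := hh i
    have h2 : c (i+1) ≤ c i / 2 := by linarith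
    calc c (i+1) ≤ c i / 2 := h2
      _ ≤ (c 0 * (1/2)^i) / 2 := by linarith
      _ = c 0 * (1/2)^(i+1) := by ring

lemma summable_of_half : Summable c := by
  apply Summable.of_nonneg_of_le h0 (geo_of_half h0 hh)
  exact (summable_geometric_of_lt_one (by norm_num) (by norm_num)).mul_left _

lemma summable_alt_of_half : Summable (fun i => (-1:ℝ)^i * c i) := by
  apply Summable.of_norm
  have : (fun i => ‖(-1:ℝ)^i * c i‖) = c := by
    funext i
    rw [norm_mul, norm_pow, norm_neg, norm_one, one_pow, one_mul, Real.norm_eq_abs,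
      abs_of_nonneg (h0 i)]
  rw [this]
  exact summable_of_half h0 hh

lemma alt_le_head_of_half : ∑' i, (-1:ℝ)^i * c i ≤ c 0 :=
  alt_le_head (antitone_of_half h0 hh) (summable_alt_of_half h0 hh)

lemma head_sub_le_alt_of_half : c 0 - c 1 ≤ ∑' i, (-1:ℝ)^i * c i :=
  head_sub_le_alt (antitone_of_half h0 hh) (summable_alt_of_half h0 hh)

end Half

noncomputable def xval (u : ℕ → ℕ) (s : ℕ → ℕ) : ℝ :=
  ∑' k, (-1:ℝ)^k * ((u (s k + 1) : ℝ))⁻¹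

section Main
variable {u : ℕ → ℕ} {q : ℕ} {s : ℕ → ℕ}
variable (hu : StrictMono u) (hpos : 1 ≤ u 0) (hdvd : ∀ n, u n ∣ u (n + 1))
  (hq2 : 2 ≤ q) (hsM : ∀ k, u (s k + 1) = u (s k) * q)
  (hgap : ∀ k, s k + k + 3 ≤ s (k+1))
include hu hpos hdvd hq2 hsM hgap

lemma s_mono : StrictMono s := strictMono_nat_of_lt_succ (fun n => by have := hgap n; omega)

lemma s_ge (k : ℕ) : k ≤ s k := by
  induction k with
  | zero => omega
  | succ k ih => have := hgap k; omega

lemma u_cast_pos (n : ℕ) : (0:ℝ) < u n := by exact_mod_cast u_pos hu hpos hdvd n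

lemma inv_half (k : ℕ) :
    2 * ((u (s (k+1) + 1) : ℝ))⁻¹ ≤ ((u (s k + 1) : ℝ))⁻¹ := by
  have hnat : 2 * u (s k + 1) ≤ u (s (k+1) + 1) := by
    have h1 : s k + 1 ≤ s (k+1) := by have := hgap k; omega
    have h2 : u (s k + 1) ≤ u (s (k+1)) := hu.monotone h1
    have h3 := u_double hu hpos hdvd (s (k+1))
    omega
  have hp1 := u_cast_pos hu hpos hdvd hq2 hsM hgap (s k + 1)
  have hp2 := u_cast_pos hu hpos hdvd hq2 hsM hgap (s (k+1) + 1)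
  rw [← div_eq_mul_inv, ← one_div, div_le_div_iff₀ hp2 hp1]
  have : (2:ℝ) * u (s k + 1) ≤ u (s (k+1) + 1) := by exact_mod_cast hnat
  nlinarith

lemma c_half (n J : ℕ) :
    ∀ i, 2 * ((u n : ℝ) * ((u (s (J+(i+1)) + 1) : ℝ))⁻¹) ≤ (u n : ℝ) * ((u (s (J+i) + 1) : ℝ))⁻¹ := by
  intro i
  have hinv := inv_half hu hpos hdvd hq2 hsM hgap (J+i)
  have hn : (0:ℝ) ≤ u n := (u_cast_pos hu hpos hdvd hq2 hsM hgap n).le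
  have hJi : J + (i+1) = (J+i) + 1 := by omega
  rw [hJi]
  calc 2 * ((u n : ℝ) * ((u (s ((J+i)+1) + 1) : ℝ))⁻¹)
      = (u n : ℝ) * (2 * ((u (s ((J+i)+1) + 1) : ℝ))⁻¹) := by ring
    _ ≤ (u n : ℝ) * ((u (s (J+i) + 1) : ℝ))⁻¹ := mul_le_mul_of_nonneg_left hinv hn

lemma c_nonneg (n J : ℕ) : ∀ i, 0 ≤ (u n : ℝ) * ((u (s (J+i) + 1) : ℝ))⁻¹ := by
  intro i
  have h1 := u_cast_pos hu hpos hdvd hq2 hsM hgap n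
  have h2 := u_cast_pos hu hpos hdvd hq2 hsM hgap (s (J+i) + 1)
  positivity

lemma c_pos (n J : ℕ) : ∀ i, 0 < (u n : ℝ) * ((u (s (J+i) + 1) : ℝ))⁻¹ := by
  intro i
  have h1 := u_cast_pos hu hpos hdvd hq2 hsM hgap n
  have h2 := u_cast_pos hu hpos hdvd hq2 hsM hgap (s (J+i) + 1)
  positivity

lemma b_summable_alt : Summable (fun k => (-1:ℝ)^k * ((u (s k + 1) : ℝ))⁻¹) := by
  apply summable_alt_of_half
  · intro i; exact (inv_pos.mpr (u_cast_pos hu hpos hdvd hq2 hsM hgap _)).le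
  · intro i; exact inv_half hu hpos hdvd hq2 hsM hgap i

lemma one_div_q_le_half : (1:ℝ)/q ≤ 1/2 := by
  apply div_le_div_of_nonneg_left (by norm_num) (by norm_num)
  exact_mod_cast hq2

/-- The key computation. -/
lemma key_norm (n J : ℕ) (hJ : ∀ k, k < J → s k + 1 ≤ n) (hnJ : n ≤ s J) :
    ‖(u n : ℤ) • ((xval u s : ℝ) : AddCircle (1:ℝ))‖
      = ∑' i, (-1:ℝ)^i * ((u n : ℝ) * ((u (s (J+i) + 1) : ℝ))⁻¹) := by
  classical
  set c : ℕ → ℝ := fun i => (u n : ℝ) * ((u (s (J+i) + 1) : ℝ))⁻¹ with hc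
  have hch : ∀ i, 2 * c (i+1) ≤ c i := c_half hu hpos hdvd hq2 hsM hgap n J
  have hcn : ∀ i, 0 ≤ c i := c_nonneg hu hpos hdvd hq2 hsM hgap n J
  set R : ℝ := ∑' i, (-1:ℝ)^i * c i with hR
  have hR_le : R ≤ c 0 := alt_le_head_of_half hcn hch
  have hR_ge : c 0 - c 1 ≤ R := head_sub_le_alt_of_half hcn hch
  have hc1_lt_c0 : c 1 < c 0 := by
    have h := hch 0
    have h1 : 0 < c 1 := c_pos hu hpos hdvd hq2 hsM hgap n J 1
    linarith
  have hRpos : 0 < R := by linarith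
  have hc0_le : c 0 ≤ 1 / q := by
    have h1 : u n ≤ u (s J) := hu.monotone hnJ
    have h2 : u (s J + 1) = u (s J) * q := hsM J
    have hq0 : (0:ℝ) < q := by positivity
    have hsJ := u_cast_pos hu hpos hdvd hq2 hsM hgap (s J)
    show (u n : ℝ) * ((u (s (J+0) + 1) : ℝ))⁻¹ ≤ 1/q
    simp only [Nat.add_zero]
    rw [h2]
    push_cast
    rw [mul_inv, ← mul_assoc]
    have hle1 : (u n : ℝ) * ((u (s J) : ℝ))⁻¹ ≤ 1 := by
      rw [← div_eq_mul_inv, div_le_one hsJ]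
      exact_mod_cast h1
    calc (u n : ℝ) * ((u (s J):ℝ))⁻¹ * ((q:ℝ))⁻¹ ≤ 1 * ((q:ℝ))⁻¹ :=
          mul_le_mul_of_nonneg_right hle1 (by positivity)
      _ = 1 / q := by rw [one_mul, one_div]
  have hRhalf : R ≤ 1/2 := le_trans hR_le (le_trans hc0_le (one_div_q_le_half hu hpos hdvd hq2 hsM hgap))
  -- now compute u n * xval
  have hbsum : Summable (fun k => (-1:ℝ)^k * ((u (s k + 1) : ℝ))⁻¹) :=
    b_summable_alt hu hpos hdvd hq2 hsM hgap
  have hgsum : Summable (fun k => (-1:ℝ)^k * ((u n : ℝ) * ((u (s k + 1) : ℝ))⁻¹)) := by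
    have := hbsum.mul_left (u n : ℝ)
    apply this.congr
    intro k; ring
  -- the integer part
  set z : ℤ := ∑ i ∈ range J, (-1:ℤ)^i * (u n / u (s i + 1) : ℕ) with hz
  have hsplit : (u n : ℝ) * xval u s = (z : ℝ) + (-1:ℝ)^J * R := by
    have h1 : (u n : ℝ) * xval u s = ∑' k, (-1:ℝ)^k * ((u n : ℝ) * ((u (s k + 1) : ℝ))⁻¹) := by
      rw [xval, ← tsum_mul_left]
      apply tsum_congr; intro k; ring
    rw [h1, ← hgsum.sum_add_tsum_nat_add J]
    congr 1
    · -- finite part equals z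
      rw [hz, Int.cast_sum]
      apply Finset.sum_congr rfl
      intro i hi
      have hiJ : i < J := mem_range.mp hi
      have hdl : u (s i + 1) ∣ u n := u_dvd_le hu hpos hdvd (s i + 1) n (hJ i hiJ)
      obtain ⟨d, hd⟩ := hdl
      have hup := u_pos hu hpos hdvd (s i + 1)
      have hdiv : u n / u (s i + 1) = d := by rw [hd]; exact Nat.mul_div_cancel_left d hup
      have hne : ((u (s i + 1) : ℝ)) ≠ 0 := by
        have : (0:ℝ) < u (s i + 1) := by exact_mod_cast hup
        linarith
      have heq : (u n : ℝ) * ((u (s i + 1) : ℝ))⁻¹ = ((u n / u (s i + 1) : ℕ) : ℝ) := by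
        rw [hdiv, hd]
        push_cast
        field_simp
      rw [Int.cast_mul, Int.cast_pow, Int.cast_neg, Int.cast_one, Int.cast_natCast, heq]
    · -- tail equals (-1)^J * R
      rw [hR, ← tsum_mul_left]
      apply tsum_congr; intro i
      rw [hc]
      have h5 : i + J = J + i := by omega
      rw [h5]
      have : (-1:ℝ)^(J+i) = (-1)^J * (-1)^i := pow_add _ _ _
      rw [this]; ring
  -- move to AddCircle
  have hcast : ((u n : ℤ) • ((xval u s : ℝ) : AddCircle (1:ℝ)))
      = (((-1:ℝ)^J * R : ℝ) : AddCircle (1:ℝ)) := by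
    have h1 : (u n : ℤ) • ((xval u s : ℝ) : AddCircle (1:ℝ))
        = (((u n : ℤ) • xval u s : ℝ) : AddCircle (1:ℝ)) := by
      simp [AddCircle]
    rw [h1]
    have h2 : ((u n : ℤ) • xval u s : ℝ) = (z:ℝ) + (-1:ℝ)^J * R := by
      rw [zsmul_eq_mul]; push_cast; rw [← hsplit]
    rw [h2]
    have h3 : (((z:ℝ) + (-1:ℝ)^J * R : ℝ) : AddCircle (1:ℝ))
        = ((z:ℝ) : AddCircle (1:ℝ)) + (((-1:ℝ)^J * R : ℝ) : AddCircle (1:ℝ)) := by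
      rfl
    rw [h3]
    have h4 : (((z:ℝ)) : AddCircle (1:ℝ)) = 0 := by
      simp [AddCircle.coe_eq_zero_iff]
    rw [h4, zero_add]
  rw [hcast]
  rcases neg_one_pow_eq_or ℝ J with h | h
  · rw [h, one_mul]
    exact norm_coe_addCircle hRpos.le hRhalf
  · rw [h]
    have : ((-1 * R : ℝ) : AddCircle (1:ℝ)) = -((R:ℝ) : AddCircle (1:ℝ)) := by
      rw [neg_one_mul]
      simp [AddCircle]
    rw [this, norm_neg]
    exact norm_coe_addCircle hRpos.le hRhalf

lemma unorm_smul_le (n : ℕ) :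
    ‖(u n : ℤ) • ((xval u s : ℝ) : AddCircle (1:ℝ))‖ ≤ 1/q := by
  classical
  have hex : ∃ k, n ≤ s k := ⟨n, s_ge hu hpos hdvd hq2 hsM hgap n⟩
  set J := Nat.find hex with hJdef
  have hnJ : n ≤ s J := Nat.find_spec hex
  have hJ : ∀ k, k < J → s k + 1 ≤ n := by
    intro k hk
    have := Nat.find_min hex hk
    omega
  rw [key_norm hu hpos hdvd hq2 hsM hgap n J hJ hnJ]
  have hch := c_half hu hpos hdvd hq2 hsM hgap n J
  have hcn := c_nonneg hu hpos hdvd hq2 hsM hgap n J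
  have h1 := alt_le_head_of_half hcn hch
  refine h1.trans ?_
  -- c 0 ≤ 1/q
  have h2 : u n ≤ u (s J) := hu.monotone hnJ
  have h3 : u (s J + 1) = u (s J) * q := hsM J
  have hq0 : (0:ℝ) < q := by positivity
  have hsJ := u_cast_pos hu hpos hdvd hq2 hsM hgap (s J)
  show (u n : ℝ) * ((u (s (J+0) + 1) : ℝ))⁻¹ ≤ 1/q
  simp only [Nat.add_zero]
  rw [h3]
  push_cast
  rw [mul_inv, ← mul_assoc]
  have hle1 : (u n : ℝ) * ((u (s J) : ℝ))⁻¹ ≤ 1 := by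
    rw [← div_eq_mul_inv, div_le_one hsJ]
    exact_mod_cast h2
  calc (u n : ℝ) * ((u (s J):ℝ))⁻¹ * ((q:ℝ))⁻¹ ≤ 1 * ((q:ℝ))⁻¹ :=
        mul_le_mul_of_nonneg_right hle1 (by positivity)
    _ = 1 / q := by rw [one_mul, one_div]

lemma norm_smul_sJ (J : ℕ) :
    1/q - (1/2)^(J+3) ≤ ‖(u (s J) : ℤ) • ((xval u s : ℝ) : AddCircle (1:ℝ))‖ := by
  have hsm := s_mono hu hpos hdvd hq2 hsM hgap
  have hJ : ∀ k, k < J → s k + 1 ≤ s J := fun k hk => hsm hk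
  rw [key_norm hu hpos hdvd hq2 hsM hgap (s J) J hJ le_rfl]
  have hch := c_half hu hpos hdvd hq2 hsM hgap (s J) J
  have hcn := c_nonneg hu hpos hdvd hq2 hsM hgap (s J) J
  have h1 := head_sub_le_alt_of_half hcn hch
  refine le_trans ?_ h1
  -- c 0 = 1/q and c 1 ≤ (1/2)^(J+3)
  have hc0 : (u (s J) : ℝ) * ((u (s (J+0) + 1) : ℝ))⁻¹ = 1/q := by
    simp only [Nat.add_zero]
    rw [hsM J]
    have hsJ := u_cast_pos hu hpos hdvd hq2 hsM hgap (s J)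
    have hq0 : (0:ℝ) < q := by positivity
    push_cast
    rw [mul_inv, ← mul_assoc, mul_inv_cancel₀ (ne_of_gt hsJ), one_mul, one_div]
  have hc1 : (u (s J) : ℝ) * ((u (s (J+1) + 1) : ℝ))⁻¹ ≤ (1/2)^(J+3) := by
    have hgrow : u (s J) * 2 ^ (s (J+1) - s J) ≤ u (s (J+1)) :=
      u_growth hu hpos hdvd (s J) (s (J+1)) (le_of_lt (hsm (Nat.lt_succ_self J)))
    have hge : J + 3 ≤ s (J+1) - s J := by have := hgap J; omega
    have h2 : u (s J) * 2 ^ (J+3) ≤ u (s (J+1) + 1) := by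
      have e1 : 2 ^ (J+3) ≤ 2 ^ (s (J+1) - s J) := Nat.pow_le_pow_right (by norm_num) hge
      have e2 : u (s (J+1)) ≤ u (s (J+1) + 1) := hu.monotone (Nat.le_succ _)
      have e3 : u (s J) * 2 ^ (J+3) ≤ u (s J) * 2 ^ (s (J+1) - s J) :=
        Nat.mul_le_mul_left _ e1
      omega
    have hA := u_cast_pos hu hpos hdvd hq2 hsM hgap (s J)
    have hB := u_cast_pos hu hpos hdvd hq2 hsM hgap (s (J+1) + 1)
    have h2r : (u (s J) : ℝ) * 2 ^ (J+3) ≤ (u (s (J+1) + 1) : ℝ) := by exact_mod_cast h2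
    rw [← div_eq_mul_inv, div_le_iff₀ hB]
    calc (u (s J) : ℝ) = ((u (s J) : ℝ) * 2^(J+3)) * (1/2)^(J+3) := by
          rw [mul_assoc, ← mul_pow]
          norm_num
      _ ≤ ((u (s (J+1) + 1) : ℝ)) * (1/2)^(J+3) := by
          apply mul_le_mul_of_nonneg_right h2r (by positivity)
      _ = (1/2)^(J+3) * (u (s (J+1) + 1)) := by ring
  have := hc0
  linarith [hc1, hc0.ge, hc0.le]

lemma sup_norm_eq : (⨆ n : ℕ, ‖(u n : ℤ) • ((xval u s : ℝ) : AddCircle (1:ℝ))‖) = 1/q := by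
  have hub : ∀ n : ℕ, ‖(u n : ℤ) • ((xval u s : ℝ) : AddCircle (1:ℝ))‖ ≤ 1/q :=
    unorm_smul_le hu hpos hdvd hq2 hsM hgap
  have hbdd : BddAbove (Set.range fun n : ℕ => ‖(u n : ℤ) • ((xval u s : ℝ) : AddCircle (1:ℝ))‖) := by
    refine ⟨1/q, ?_⟩
    rintro y ⟨n, rfl⟩
    exact hub n
  apply le_antisymm
  · exact ciSup_le hub
  · have hlow : ∀ J : ℕ, 1/(q:ℝ) - (1/2)^(J+3) ≤ ⨆ n : ℕ, ‖(u n : ℤ) • ((xval u s : ℝ) : AddCircle (1:ℝ))‖ := by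
      intro J
      exact le_trans (norm_smul_sJ hu hpos hdvd hq2 hsM hgap J) (le_ciSup hbdd (s J))
    have htend : Tendsto (fun J : ℕ => 1/(q:ℝ) - (1/2)^(J+3)) atTop (𝓝 (1/q)) := by
      have h1 : Tendsto (fun J : ℕ => ((1:ℝ)/2)^(J+3)) atTop (𝓝 0) := by
        have := tendsto_pow_atTop_nhds_zero_of_lt_one (by norm_num : (0:ℝ) ≤ 1/2) (by norm_num : (1:ℝ)/2 < 1)
        have h2 := this.comp (tendsto_add_atTop_nat 3)
        simpa [Function.comp_def] using h2
      have h2 : Tendsto (fun J : ℕ => 1/(q:ℝ) - (1/2)^(J+3)) atTop (𝓝 (1/(q:ℝ) - 0)) :=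
        tendsto_const_nhds.sub h1
      simpa using h2
    exact le_of_tendsto htend (Eventually.of_forall hlow)

lemma xval_pos : 0 < xval u s := by
  rw [xval]
  have hbn : ∀ k, 0 ≤ ((u (s k + 1) : ℝ))⁻¹ :=
    fun k => (inv_pos.mpr (u_cast_pos hu hpos hdvd hq2 hsM hgap _)).le
  have hbh : ∀ k, 2 * ((u (s (k+1) + 1) : ℝ))⁻¹ ≤ ((u (s k + 1) : ℝ))⁻¹ :=
    inv_half hu hpos hdvd hq2 hsM hgap
  have h1 := head_sub_le_alt_of_half hbn hbh
  have h2 : ((u (s 1 + 1) : ℝ))⁻¹ < ((u (s 0 + 1) : ℝ))⁻¹ := by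
    have := hbh 0
    have := inv_pos.mpr (u_cast_pos hu hpos hdvd hq2 hsM hgap (s 1 + 1))
    linarith
  linarith

lemma xval_le : xval u s ≤ 1/q := by
  rw [xval]
  have hbn : ∀ k, 0 ≤ ((u (s k + 1) : ℝ))⁻¹ :=
    fun k => (inv_pos.mpr (u_cast_pos hu hpos hdvd hq2 hsM hgap _)).le
  have hbh : ∀ k, 2 * ((u (s (k+1) + 1) : ℝ))⁻¹ ≤ ((u (s k + 1) : ℝ))⁻¹ :=
    inv_half hu hpos hdvd hq2 hsM hgap
  have h1 := alt_le_head_of_half hbn hbh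
  refine h1.trans ?_
  have h2 : (q:ℝ) ≤ (u (s 0 + 1) : ℝ) := by
    have : q ≤ u (s 0 + 1) := by
      have := hsM 0
      have h3 := u_pos hu hpos hdvd (s 0)
      nlinarith
    exact_mod_cast this
  have hq0 : (0:ℝ) < q := by positivity
  rw [one_div]
  exact inv_anti₀ hq0 h2

lemma xval_mem : max ‖((xval u s : ℝ) : AddCircle (1:ℝ))‖
    (⨆ n : ℕ, ‖(u n : ℤ) • ((xval u s : ℝ) : AddCircle (1:ℝ))‖) = 1/q := by
  rw [sup_norm_eq hu hpos hdvd hq2 hsM hgap]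
  apply max_eq_right
  rw [norm_coe_addCircle (xval_pos hu hpos hdvd hq2 hsM hgap).le
    ((xval_le hu hpos hdvd hq2 hsM hgap).trans (one_div_q_le_half hu hpos hdvd hq2 hsM hgap))]
  exact xval_le hu hpos hdvd hq2 hsM hgap

end Main

section Family
variable {u : ℕ → ℕ} {q : ℕ}
variable (hu : StrictMono u) (hpos : 1 ≤ u 0) (hdvd : ∀ n, u n ∣ u (n + 1))
  (hq2 : 2 ≤ q)

lemma exists_e (hinf' : {m : ℕ | u (m+1) = u m * q}.Infinite) :
    ∃ e : ℕ → ℕ, (∀ k, u (e k + 1) = u (e k) * q) ∧ (∀ k, e k + k + 3 ≤ e (k+1)) := by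
  classical
  have hgt : ∀ a : ℕ, ∃ b, u (b+1) = u b * q ∧ a < b := by
    intro a
    obtain ⟨b, hb, hab⟩ := hinf'.exists_gt a
    exact ⟨b, hb, hab⟩
  choose f hfM hfgt using hgt
  refine ⟨fun k => Nat.rec (f 0) (fun k prev => f (prev + k + 3)) k, ?_, ?_⟩
  · intro k
    cases k with
    | zero => exact hfM 0
    | succ k => exact hfM _
  · intro k
    exact le_of_lt (hfgt _)

variable {e : ℕ → ℕ}
variable (heM : ∀ k, u (e k + 1) = u (e k) * q) (hegap : ∀ k, e k + k + 3 ≤ e (k+1))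

include hegap in
lemma e_mono : StrictMono e := strictMono_nat_of_lt_succ (fun n => by have := hegap n; omega)

include hegap in
lemma e_step : ∀ m n : ℕ, m ≤ n → e m + 3 * (n - m) ≤ e n := by
  intro m n hmn
  induction n with
  | zero => simp [Nat.le_zero.mp hmn]
  | succ n ih =>
    rcases Nat.lt_or_ge m (n+1) with h | h
    · have h1 := ih (Nat.lt_succ_iff.mp h)
      have h2 := hegap n
      omega
    · have : m = n + 1 := le_antisymm hmn h
      simp [this]

open Classical in
/-- The selector sequence for a set `A`. -/
noncomputable def sel (e : ℕ → ℕ) (A : Set ℕ) : ℕ → ℕ :=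
  fun k => e (2*k + if k ∈ A then 1 else 0)

omit hu hpos hdvd hq2 in
include heM in
lemma sel_M (A : Set ℕ) : ∀ k, u (sel e A k + 1) = u (sel e A k) * q := fun k => heM _

include hegap in
lemma sel_gap (A : Set ℕ) : ∀ k, sel e A k + k + 3 ≤ sel e A (k+1) := by
  intro k
  classical
  have hmono := (e_mono hegap).monotone
  have h1 : sel e A k ≤ e (2*k+1) := hmono (by split <;> omega)
  have h2 : e (2*k+2) ≤ sel e A (k+1) := hmono (by split <;> omega)
  have h3 := hegap (2*k+1)
  have : 2*k+1+1 = 2*k+2 := by omega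
  rw [this] at h3
  omega

include hu hpos hdvd hq2 heM hegap in
lemma xval_ne (A B : Set ℕ) (k : ℕ) (hkA : k ∈ A) (hkB : k ∉ B)
    (hagree : ∀ j, j < k → (j ∈ A ↔ j ∈ B)) :
    xval u (sel e A) ≠ xval u (sel e B) := by
  classical
  have hsMA := sel_M (q := q) heM A
  have hsMB := sel_M (q := q) heM B
  have hgA := sel_gap hegap A
  have hgB := sel_gap hegap B
  have hfA : Summable (fun j => (-1:ℝ)^j * ((u (sel e A j + 1):ℝ))⁻¹) :=
    b_summable_alt hu hpos hdvd hq2 hsMA hgA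
  have hfB : Summable (fun j => (-1:ℝ)^j * ((u (sel e B j + 1):ℝ))⁻¹) :=
    b_summable_alt hu hpos hdvd hq2 hsMB hgB
  set g : ℕ → ℝ := fun j =>
    (-1:ℝ)^j * ((u (sel e A j + 1):ℝ))⁻¹ - (-1:ℝ)^j * ((u (sel e B j + 1):ℝ))⁻¹ with hgdef
  have hg : Summable g := hfA.sub hfB
  intro hEq
  have htotal : ∑' j, g j = 0 := by
    rw [hgdef]
    rw [hfA.tsum_sub hfB]
    have h1 : xval u (sel e A) = xval u (sel e B) := hEq
    rw [xval, xval] at h1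
    linarith [h1]
  have hsplit := hg.sum_add_tsum_nat_add k
  have hzero : ∀ j, j < k → g j = 0 := by
    intro j hj
    have hAB : sel e A j = sel e B j := by
      rw [sel, sel]
      congr 1
      have := hagree j hj
      by_cases h : j ∈ A
      · rw [if_pos h, if_pos (this.mp h)]
      · rw [if_neg h, if_neg (fun hB => h (this.mpr hB))]
    rw [hgdef]
    simp only [hAB, sub_self]
  have hfin : ∑ i ∈ range k, g i = 0 :=
    Finset.sum_eq_zero (fun i hi => hzero i (mem_range.mp hi))
  have hT : ∑' i, g (i+k) = 0 := by
    rw [htotal, hfin] at hsplit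
    linarith [hsplit]
  have hshift : Summable (fun i => g (i+k)) := (summable_nat_add_iff k).mpr hg
  have hT2 : ∑' i, g (i+k) = g (0+k) + ∑' i, g ((i+1)+k) := hshift.tsum_eq_zero_add
  have hgk_eq : |g k| = |∑' i, g ((i+1)+k)| := by
    have : g (0+k) = - ∑' i, g ((i+1)+k) := by
      have h5 := hT2
      rw [hT] at h5
      linarith
    have h6 : g k = - ∑' i, g ((i+1)+k) := by simpa using this
    rw [h6, abs_neg]
  -- D and bounds
  set D : ℝ := ((u (e (2*k) + 1) : ℝ))⁻¹ with hDdef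
  have hD : 0 < D := inv_pos.mpr (u_cast_pos hu hpos hdvd hq2 hsMA hgA (e (2*k) + 1))
  have hemono := (e_mono (e := e) hegap).monotone
  -- lower bound on |g k|
  have hsBk : sel e B k = e (2*k) := by
    rw [sel, if_neg hkB]
    norm_num
  have hsAk : sel e A k = e (2*k+1) := by
    rw [sel, if_pos hkA]
  have hbA_le : ((u (sel e A k + 1):ℝ))⁻¹ ≤ D/2 := by
    have hnat : 2 * u (e (2*k) + 1) ≤ u (e (2*k+1) + 1) := by
      have h1 : e (2*k) + 1 ≤ e (2*k+1) := by have := hegap (2*k); omega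
      have h2 : u (e (2*k) + 1) ≤ u (e (2*k+1)) := hu.monotone h1
      have h3 := u_double hu hpos hdvd (e (2*k+1))
      omega
    have hp1 := u_cast_pos hu hpos hdvd hq2 hsMA hgA (e (2*k) + 1)
    have hp2 := u_cast_pos hu hpos hdvd hq2 hsMA hgA (e (2*k+1) + 1)
    rw [hsAk]
    have hr : (2:ℝ) * (u (e (2*k) + 1):ℝ) ≤ (u (e (2*k+1) + 1):ℝ) := by exact_mod_cast hnat
    calc ((u (e (2*k+1) + 1):ℝ))⁻¹ ≤ ((2:ℝ) * (u (e (2*k) + 1):ℝ))⁻¹ :=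
          inv_anti₀ (by positivity) hr
      _ = D/2 := by rw [hDdef, mul_inv]; ring
  have hgk_lower : D/2 ≤ |g k| := by
    have h1 : ((u (sel e B k + 1):ℝ))⁻¹ = D := by rw [hsBk, hDdef]
    have h2 : g k = (-1:ℝ)^k * (((u (sel e A k + 1):ℝ))⁻¹ - ((u (sel e B k + 1):ℝ))⁻¹) := by
      rw [hgdef]; ring
    have h3 : ((u (sel e A k + 1):ℝ))⁻¹ ≤ ((u (sel e B k + 1):ℝ))⁻¹ := by
      rw [h1]; linarith
    rw [h2, abs_mul, abs_pow, abs_neg, abs_one, one_pow, one_mul,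
      abs_of_nonpos (by linarith : ((u (sel e A k + 1):ℝ))⁻¹ - ((u (sel e B k + 1):ℝ))⁻¹ ≤ 0)]
    rw [h1] at *
    linarith
  have hbound : ∀ (C : Set ℕ) (i : ℕ), ((u (sel e C ((i+1)+k) + 1):ℝ))⁻¹ ≤ D * (1/64)^(i+1) := by
    intro C i
    set j := (i+1)+k with hjdef
    have h1 : e (2*j) ≤ sel e C j := by
      rw [sel]
      exact hemono (by split <;> omega)
    have hes := e_step (e := e) hegap (2*k) (2*j) (by omega)
    have hexp : 6*(i+1) ≤ e (2*j) + 1 - (e (2*k) + 1) := by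
      have h2j : 2*j - 2*k = 2*(i+1) := by omega
      omega
    have hgrow := u_growth hu hpos hdvd (e (2*k) + 1) (e (2*j) + 1)
      (by omega)
    have hnat : u (e (2*k) + 1) * 2^(6*(i+1)) ≤ u (sel e C j + 1) := by
      have e1 : (2:ℕ)^(6*(i+1)) ≤ 2^(e (2*j) + 1 - (e (2*k) + 1)) :=
        Nat.pow_le_pow_right (by norm_num) hexp
      have e2 : u (e (2*k) + 1) * 2^(6*(i+1)) ≤ u (e (2*k) + 1) * 2^(e (2*j)+1-(e (2*k)+1)) :=
        Nat.mul_le_mul_left _ e1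
      have e3 : u (e (2*j) + 1) ≤ u (sel e C j + 1) := hu.monotone (by omega)
      omega
    have hApos := u_cast_pos hu hpos hdvd hq2 hsMA hgA (e (2*k) + 1)
    have hr : (u (e (2*k) + 1):ℝ) * 2^(6*(i+1)) ≤ (u (sel e C j + 1):ℝ) := by
      exact_mod_cast hnat
    calc ((u (sel e C j + 1):ℝ))⁻¹ ≤ ((u (e (2*k) + 1):ℝ) * 2^(6*(i+1)))⁻¹ :=
          inv_anti₀ (by positivity) hr
      _ = D * ((2:ℝ)^(6*(i+1)))⁻¹ := by rw [mul_inv, hDdef]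
      _ = D * (1/64)^(i+1) := by
          congr 1
          rw [pow_mul, ← inv_pow]
          norm_num
  have htail : ∀ i : ℕ, |g ((i+1)+k)| ≤ 2*D*(1/64:ℝ)^(i+1) := by
    intro i
    have hA0 : (0:ℝ) ≤ ((u (sel e A ((i+1)+k) + 1):ℝ))⁻¹ :=
      (inv_pos.mpr (u_cast_pos hu hpos hdvd hq2 hsMA hgA _)).le
    have hB0 : (0:ℝ) ≤ ((u (sel e B ((i+1)+k) + 1):ℝ))⁻¹ :=
      (inv_pos.mpr (u_cast_pos hu hpos hdvd hq2 hsMA hgA _)).le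
    have h2 : g ((i+1)+k) = (-1:ℝ)^((i+1)+k) *
        (((u (sel e A ((i+1)+k) + 1):ℝ))⁻¹ - ((u (sel e B ((i+1)+k) + 1):ℝ))⁻¹) := by
      rw [hgdef]; ring
    rw [h2, abs_mul, abs_pow, abs_neg, abs_one, one_pow, one_mul]
    have h3 : |((u (sel e A ((i+1)+k) + 1):ℝ))⁻¹ - ((u (sel e B ((i+1)+k) + 1):ℝ))⁻¹|
        ≤ ((u (sel e A ((i+1)+k) + 1):ℝ))⁻¹ + ((u (sel e B ((i+1)+k) + 1):ℝ))⁻¹ := by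
      rw [abs_sub_le_iff]
      constructor <;> linarith
    calc |((u (sel e A ((i+1)+k) + 1):ℝ))⁻¹ - ((u (sel e B ((i+1)+k) + 1):ℝ))⁻¹|
        ≤ ((u (sel e A ((i+1)+k) + 1):ℝ))⁻¹ + ((u (sel e B ((i+1)+k) + 1):ℝ))⁻¹ := h3
      _ ≤ D * (1/64)^(i+1) + D * (1/64)^(i+1) := add_le_add (hbound A i) (hbound B i)
      _ = 2*D*(1/64)^(i+1) := by ring
  have hmaj : Summable (fun i : ℕ => 2*D*(1/64:ℝ)^(i+1)) := by
    have h1 := (summable_geometric_of_lt_one (by norm_num : (0:ℝ) ≤ 1/64)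
      (by norm_num : (1/64:ℝ) < 1)).mul_left (2*D*(1/64))
    apply h1.congr
    intro i
    rw [pow_succ]; ring
  have habs : Summable (fun i => |g ((i+1)+k)|) := by
    have h1 : Summable (fun j => |g j|) := hg.abs
    have h2 : Summable (fun i => |g (i + (k+1))|) := (summable_nat_add_iff (k+1)).mpr h1
    apply h2.congr
    intro i
    have h3 : i + (k+1) = (i+1)+k := by omega
    rw [h3]
  have hsum_tail : |∑' i, g ((i+1)+k)| ≤ 2*D*(1/64) * ((1:ℝ) - 1/64)⁻¹ := by
    have h0 : Summable (fun i => g ((i+1)+k)) := by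
      have h2 : Summable (fun i => g (i + (k+1))) := (summable_nat_add_iff (k+1)).mpr hg
      apply h2.congr
      intro i
      have h3 : i + (k+1) = (i+1)+k := by omega
      rw [h3]
    have h1 : |∑' i, g ((i+1)+k)| ≤ ∑' i, |g ((i+1)+k)| := by
      have h2 : Summable fun i => ‖g ((i+1)+k)‖ := by simpa [Real.norm_eq_abs] using habs
      have := norm_tsum_le_tsum_norm h2
      simpa [Real.norm_eq_abs] using this
    have h2 : ∑' i, |g ((i+1)+k)| ≤ ∑' i, 2*D*(1/64:ℝ)^(i+1) :=
      Summable.tsum_le_tsum htail habs hmaj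
    have h3 : ∑' i, 2*D*(1/64:ℝ)^(i+1) = 2*D*(1/64) * ((1:ℝ) - 1/64)⁻¹ := by
      calc ∑' i, 2*D*(1/64:ℝ)^(i+1) = ∑' i, (2*D*(1/64)) * (1/64:ℝ)^i :=
            tsum_congr (fun i => by rw [pow_succ]; ring)
        _ = (2*D*(1/64)) * ∑' i, (1/64:ℝ)^i := tsum_mul_left
        _ = 2*D*(1/64) * ((1:ℝ) - 1/64)⁻¹ := by
            rw [tsum_geometric_of_lt_one (by norm_num) (by norm_num)]
    linarith
  have hconst : 2*D*(1/64) * ((1:ℝ) - 1/64)⁻¹ = 2*D/63 := by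
    norm_num
    ring
  rw [hgk_eq] at hgk_lower
  rw [hconst] at hsum_tail
  nlinarith [hD]

end Family

/-- Proposition C(a): for an a-sequence `u` with bounded ratios, with
`q = limsup q_n` (so `q_n ≤ q` eventually and `S* = {m : q_m = q}` is infinite)
and with unbounded gaps in `S*`, there are continuum many `x ∈ 𝕋` with
`ρ_u(x,0) = 1/q`, where `ρ_u(x,0) = sup{‖x‖, sup_n ‖u_n x‖}`. -/
theorem sphere_continuum_of_unbounded_gaps (u : ℕ → ℕ) (hu : StrictMono u)
    (hpos : 1 ≤ u 0) (hdvd : ∀ n, u n ∣ u (n + 1))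
    (q : ℕ) (hq2 : 2 ≤ q)
    (hev : ∀ᶠ n in atTop, u (n + 1) / u n ≤ q)
    (hinf : {m : ℕ | u (m + 1) / u m = q}.Infinite)
    (hgaps : ∀ d : ℕ, ∃ a b : ℕ, u (a + 1) / u a = q ∧ u (b + 1) / u b = q ∧
        a < b ∧ d ≤ b - a ∧
        ∀ c : ℕ, a < c → c < b → u (c + 1) / u c ≠ q) :
    Cardinal.mk {x : AddCircle (1 : ℝ) |
        max ‖x‖ (⨆ n : ℕ, ‖(u n : ℤ) • x‖) = 1 / q} = Cardinal.continuum := by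
  classical
  have hinf' : {m : ℕ | u (m+1) = u m * q}.Infinite := by
    apply Set.Infinite.mono ?_ hinf
    intro m hm
    obtain ⟨c, hc⟩ := hdvd m
    have hup : 0 < u m := u_pos hu hpos hdvd m
    have hdivc : u (m+1) / u m = c := by rw [hc]; exact Nat.mul_div_cancel_left c hup
    have : c = q := by rw [← hdivc]; exact hm.symm ▸ rfl
    show u (m+1) = u m * q
    rw [hc, this]
  obtain ⟨e, heM, hegap⟩ := exists_e hinf'
  have hmem : ∀ A : Set ℕ, ((xval u (sel e A) : ℝ) : AddCircle (1:ℝ)) ∈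
      {x : AddCircle (1 : ℝ) | max ‖x‖ (⨆ n : ℕ, ‖(u n : ℤ) • x‖) = 1 / q} :=
    fun A => xval_mem hu hpos hdvd hq2 (sel_M heM A) (sel_gap hegap A)
  set S := {x : AddCircle (1 : ℝ) | max ‖x‖ (⨆ n : ℕ, ‖(u n : ℤ) • x‖) = 1 / q} with hSdef
  let F : Set ℕ → S := fun A => ⟨_, hmem A⟩
  have hFinj : Function.Injective F := by
    intro A B hAB
    by_contra hne
    have hex : ∃ k, (k ∈ A ∧ k ∉ B) ∨ (k ∈ B ∧ k ∉ A) := by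
      by_contra h
      push_neg at h
      apply hne
      ext j
      have := h j
      tauto
    have hk := Nat.find_spec hex
    set k := Nat.find hex with hkdef
    have hagree : ∀ j, j < k → (j ∈ A ↔ j ∈ B) := by
      intro j hj
      have := Nat.find_min hex hj
      tauto
    have hcoe : ((xval u (sel e A) : ℝ) : AddCircle (1:ℝ))
        = ((xval u (sel e B) : ℝ) : AddCircle (1:ℝ)) := congrArg Subtype.val hAB
    have hmemIco : ∀ C : Set ℕ, xval u (sel e C) ∈ Set.Ico (0:ℝ) (0 + 1) := by
      intro C
      constructor
      · exact (xval_pos hu hpos hdvd hq2 (sel_M heM C) (sel_gap hegap C)).le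
      · have h1 := xval_le hu hpos hdvd hq2 (sel_M heM C) (sel_gap hegap C)
        have h2 := one_div_q_le_half hu hpos hdvd hq2 (sel_M heM C) (sel_gap hegap C)
        simp only [zero_add]
        linarith
    have hxeq : xval u (sel e A) = xval u (sel e B) :=
      (AddCircle.coe_eq_coe_iff_of_mem_Ico (hmemIco A) (hmemIco B)).mp hcoe
    rcases hk with ⟨hkA, hkB⟩ | ⟨hkB, hkA⟩
    · exact xval_ne hu hpos hdvd hq2 heM hegap A B k hkA hkB hagree hxeq
    · exact xval_ne hu hpos hdvd hq2 heM hegap B A k hkB hkA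
        (fun j hj => (hagree j hj).symm) hxeq.symm
  apply le_antisymm
  · calc Cardinal.mk S ≤ Cardinal.mk (AddCircle (1:ℝ)) := Cardinal.mk_subtype_le _
      _ ≤ Cardinal.mk ℝ := Cardinal.mk_le_of_surjective (QuotientAddGroup.mk'_surjective _)
      _ = Cardinal.continuum := Cardinal.mk_real
  · calc Cardinal.continuum = Cardinal.mk (Set ℕ) := by
          simp [Cardinal.mk_set, Cardinal.mk_nat, Cardinal.two_power_aleph0]
      _ ≤ Cardinal.mk S := Cardinal.mk_le_of_injective hFinj
end
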